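/- arXiv:1509.07672 — 4 statements merged into one kernel-verified Lean document; each statement's English description precedes it below -/
import Mathlib

section
/- If β+γ>2, then ρ* = ∫₀¹ (xΦ'(x)/Φ(x)) μ(dx) is finite and ν_n = (1/n)Σ_{i=1}^n X_iΦ'(X_i)/Φ(X_i) converges 𝙿-almost surely to ρ* as n→∞. -/
open MeasureTheory ProbabilityTheory Filter Set

set_option maxHeartbeats 1000000

/-- **Natural density (Lemma 3.1).**  If `β + γ > 2`, then the critical density
`ρ* = ∫ x Φ'(x)/Φ(x) μ(dx)` is finite and `ν_n = (1/n) ∑_{i≤n} X_i Φ'(X_i)/Φ(X_i)`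
converges `𝙿`-almost surely to `ρ*`. -/
theorem natural_density_lln
    (γ β α₁ α₂ : ℝ) (hγ : 0 < γ) (hβ : 1 < β) (hα₁ : 0 < α₁) (hα₂ : 0 < α₂)
    (hβγ : 2 < β + γ)
    (μ : Measure ℝ) [IsProbabilityMeasure μ]
    (hμsupp : μ (Set.Icc (0:ℝ) 1)ᶜ = 0)
    (hμreg : Tendsto (fun x : ℝ => (μ (Set.Icc (1 - x) 1)).toReal / (α₁ * x ^ γ))
      (nhdsWithin 0 (Set.Ioi 0)) (nhds 1))
    (p : ℕ → ℝ) (hp_nonneg : ∀ k, 0 ≤ p k) (hp0 : 0 < p 0) (hp_sum : ∑' k, p k = 1)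
    (hp_tail : Tendsto (fun k : ℕ => p k / (α₂ * (k : ℝ) ^ (-β))) atTop (nhds 1))
    (Φ G : ℝ → ℝ)
    (hΦ : ∀ x, Φ x = ∑' k : ℕ, p k * x ^ k)
    (hG : ∀ x, G x = (∑' k : ℕ, (k : ℝ) * p k * x ^ k) / Φ x)
    (ρstar : ℝ) (hρstar : ρstar = ∫ x, G x ∂μ)
    (Ω : Type*) [MeasurableSpace Ω] (Pr : Measure Ω) [IsProbabilityMeasure Pr]
    (X : ℕ → Ω → ℝ) (hXmeas : ∀ i, Measurable (X i))
    (hXlaw : ∀ i, Measure.map (X i) Pr = μ)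
    (hXindep : iIndepFun X Pr)
    (νn : ℕ → Ω → ℝ)
    (hνn : ∀ n ω, νn n ω = (1 / (n : ℝ)) * ∑ i ∈ Finset.range n, G (X i ω)) :
    (∫⁻ x, ENNReal.ofReal (G x) ∂μ) < ⊤ ∧
    ∀ᵐ ω ∂Pr, Tendsto (fun n : ℕ => νn n ω) atTop (nhds ρstar) := by
  classical
  -- basic facts about p
  have hp_summable : Summable p := by
    by_contra h
    rw [tsum_eq_zero_of_not_summable h] at hp_sum
    norm_num at hp_sum
  have hp_le_one : ∀ k, p k ≤ 1 := by
    intro k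
    rw [← hp_sum]
    exact Summable.le_tsum hp_summable k fun j _ => hp_nonneg j
  have hμ_fin : ∀ s : Set ℝ, μ s ≠ ⊤ := fun s => (measure_lt_top μ s).ne
  -- the measure of a small tail tends to 0
  have htail0 : Tendsto (fun x : ℝ => (μ (Set.Icc (1 - x) 1)).toReal)
      (nhdsWithin 0 (Set.Ioi 0)) (nhds 0) := by
    have h2 : Tendsto (fun x : ℝ => α₁ * x ^ γ) (nhdsWithin 0 (Set.Ioi 0)) (nhds 0) := by
      have h3 : Tendsto (fun x : ℝ => x ^ γ) (nhdsWithin 0 (Set.Ioi 0)) (nhds 0) := by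
        have := (Real.continuousAt_rpow_const 0 γ (Or.inr hγ.le)).tendsto
        rw [Real.zero_rpow hγ.ne'] at this
        exact this.mono_left nhdsWithin_le_nhds
      simpa using (tendsto_const_nhds (x := α₁)).mul h3
    have := (hμreg.mul h2)
    rw [one_mul] at this
    refine this.congr' ?_
    filter_upwards [self_mem_nhdsWithin] with x hx
    have hx0 : (0:ℝ) < x := hx
    have hpos : 0 < α₁ * x ^ γ := mul_pos hα₁ (Real.rpow_pos_of_pos hx0 γ)
    field_simp
  have hμ_one : μ {(1:ℝ)} = 0 := by
    have hev : ∀ᶠ x in nhdsWithin (0:ℝ) (Set.Ioi 0),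
        (μ {(1:ℝ)}).toReal ≤ (μ (Set.Icc (1 - x) 1)).toReal := by
      filter_upwards [self_mem_nhdsWithin] with x hx
      refine ENNReal.toReal_mono (hμ_fin _) (measure_mono ?_)
      intro y hy
      rcases hy with rfl
      exact ⟨by linarith [le_of_lt (show (0:ℝ) < x from hx)], le_rfl⟩
    have h0 : (μ {(1:ℝ)}).toReal ≤ 0 := ge_of_tendsto htail0 hev
    have := le_antisymm h0 ENNReal.toReal_nonneg
    rwa [ENNReal.toReal_eq_zero_iff, or_iff_left (hμ_fin _)] at this
  have hae : ∀ᵐ x ∂μ, x ∈ Set.Ico (0:ℝ) 1 := by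
    have hsub : (Set.Ico (0:ℝ) 1)ᶜ ⊆ (Set.Icc (0:ℝ) 1)ᶜ ∪ {(1:ℝ)} := by
      intro x hx
      simp only [Set.mem_compl_iff, Set.mem_Ico, not_and_or, not_le, not_lt] at hx
      by_cases h1 : x = 1
      · exact Or.inr (by simp [h1])
      · left
        simp only [Set.mem_compl_iff, Set.mem_Icc, not_and_or, not_le]
        rcases hx with h | h
        · exact Or.inl h
        · exact Or.inr (lt_of_le_of_ne h (Ne.symm h1))
    have : μ (Set.Ico (0:ℝ) 1)ᶜ = 0 := by
      refine measure_mono_null hsub ?_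
      exact le_antisymm ((measure_union_le _ _).trans (by rw [hμsupp, hμ_one]; simp)) (by simp)
    exact this
  -- tail bound for μ
  obtain ⟨C₁, hC₁_one, hTail⟩ : ∃ C₁ : ℝ, 1 ≤ C₁ ∧ ∀ t : ℝ, 0 < t →
      μ (Set.Icc (1 - t) 1) ≤ ENNReal.ofReal (C₁ * t ^ γ) := by
    have hev : ∀ᶠ x in nhdsWithin (0:ℝ) (Set.Ioi 0),
        (μ (Set.Icc (1 - x) 1)).toReal / (α₁ * x ^ γ) < 2 :=
      hμreg.eventually (gt_mem_nhds one_lt_two)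
    rw [eventually_nhdsWithin_iff, Metric.eventually_nhds_iff] at hev
    obtain ⟨δ, hδ, hδ'⟩ := hev
    set x₁ : ℝ := min (δ/2) 1 with hx₁_def
    have hx₁pos : 0 < x₁ := lt_min (by linarith) one_pos
    have hx₁le : x₁ ≤ 1 := min_le_right _ _
    have hx₁inv : 1 ≤ x₁⁻¹ ^ γ := by
      have h1 : 1 ≤ x₁⁻¹ := (one_le_inv₀ hx₁pos).mpr hx₁le
      calc (1:ℝ) = 1 ^ γ := (Real.one_rpow γ).symm
        _ ≤ x₁⁻¹ ^ γ := Real.rpow_le_rpow zero_le_one h1 hγ.le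
    refine ⟨max (2*α₁) (x₁⁻¹ ^ γ), le_trans hx₁inv (le_max_right _ _), ?_⟩
    intro t ht
    rcases le_or_gt t x₁ with hle | hlt
    · have hmem : t ∈ Set.Ioi (0:ℝ) := ht
      have hdist : dist t (0:ℝ) < δ := by
        rw [Real.dist_eq, sub_zero, abs_of_pos ht]
        calc t ≤ x₁ := hle
          _ ≤ δ/2 := min_le_left _ _
          _ < δ := by linarith
      have hr := hδ' hdist hmem
      have hpos : 0 < α₁ * t ^ γ := mul_pos hα₁ (Real.rpow_pos_of_pos ht γ)
      have h2 : (μ (Set.Icc (1 - t) 1)).toReal < 2 * (α₁ * t ^ γ) := (div_lt_iff₀ hpos).mp hr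
      refine (ENNReal.le_ofReal_iff_toReal_le (hμ_fin _) ?_).mpr ?_
      · positivity
      · calc (μ (Set.Icc (1 - t) 1)).toReal ≤ (2*α₁) * t ^ γ := by linarith
          _ ≤ max (2*α₁) (x₁⁻¹ ^ γ) * t ^ γ :=
            mul_le_mul_of_nonneg_right (le_max_left _ _) (Real.rpow_nonneg ht.le γ)
    · have h1 : (1:ℝ) ≤ x₁⁻¹ ^ γ * t ^ γ := by
        have h2 : (1:ℝ) ≤ x₁⁻¹ * t := by
          have := mul_le_mul_of_nonneg_left hlt.le (inv_nonneg.mpr hx₁pos.le)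
          rwa [inv_mul_cancel₀ hx₁pos.ne'] at this
        calc (1:ℝ) = 1 ^ γ := (Real.one_rpow γ).symm
          _ ≤ (x₁⁻¹ * t) ^ γ := Real.rpow_le_rpow zero_le_one h2 hγ.le
          _ = x₁⁻¹ ^ γ * t ^ γ := Real.mul_rpow (inv_nonneg.mpr hx₁pos.le) (le_of_lt (hx₁pos.trans hlt))
      calc μ (Set.Icc (1 - t) 1) ≤ 1 := prob_le_one
        _ = ENNReal.ofReal 1 := ENNReal.ofReal_one.symm
        _ ≤ ENNReal.ofReal (max (2*α₁) (x₁⁻¹ ^ γ) * t ^ γ) := by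
            refine ENNReal.ofReal_le_ofReal ?_
            calc (1:ℝ) ≤ x₁⁻¹ ^ γ * t ^ γ := h1
              _ ≤ max (2*α₁) (x₁⁻¹ ^ γ) * t ^ γ :=
                mul_le_mul_of_nonneg_right (le_max_right _ _) (Real.rpow_nonneg ht.le γ)
  -- bound for p
  obtain ⟨C₀, hC₀_pos, hp_bd⟩ : ∃ C₀ : ℝ, 0 < C₀ ∧ ∀ k : ℕ, 1 ≤ k →
      p k ≤ C₀ * (k:ℝ) ^ (-β) := by
    have hev : ∀ᶠ k in atTop, p k / (α₂ * (k:ℝ) ^ (-β)) < 2 :=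
      hp_tail.eventually (gt_mem_nhds one_lt_two)
    obtain ⟨K, hK⟩ := eventually_atTop.mp hev
    refine ⟨max (2*α₂) (((K:ℝ)+1) ^ β), lt_of_lt_of_le (by positivity) (le_max_left _ _), ?_⟩
    intro k hk
    have hkpos : (0:ℝ) < k := by exact_mod_cast hk
    have hkb : (0:ℝ) < (k:ℝ) ^ (-β) := Real.rpow_pos_of_pos hkpos _
    rcases le_or_gt K k with hKk | hKk
    · have hr := hK k hKk
      have h2 : p k < 2 * (α₂ * (k:ℝ) ^ (-β)) := (div_lt_iff₀ (mul_pos hα₂ hkb)).mp hr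
      calc p k ≤ (2*α₂) * (k:ℝ) ^ (-β) := by linarith
        _ ≤ max (2*α₂) (((K:ℝ)+1) ^ β) * (k:ℝ) ^ (-β) :=
          mul_le_mul_of_nonneg_right (le_max_left _ _) hkb.le
    · have h1 : (1:ℝ) = (k:ℝ) ^ β * (k:ℝ) ^ (-β) := by
        rw [← Real.rpow_add hkpos]
        simp
      have h2 : (k:ℝ) ^ β ≤ ((K:ℝ)+1) ^ β := by
        refine Real.rpow_le_rpow hkpos.le ?_ (by linarith)
        have : (k:ℝ) ≤ (K:ℝ) := by exact_mod_cast hKk.le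
        linarith
      calc p k ≤ 1 := hp_le_one k
        _ = (k:ℝ) ^ β * (k:ℝ) ^ (-β) := h1
        _ ≤ ((K:ℝ)+1) ^ β * (k:ℝ) ^ (-β) := mul_le_mul_of_nonneg_right h2 hkb.le
        _ ≤ max (2*α₂) (((K:ℝ)+1) ^ β) * (k:ℝ) ^ (-β) :=
          mul_le_mul_of_nonneg_right (le_max_right _ _) hkb.le
  -- moments
  set m : ℕ → ENNReal := fun k => ∫⁻ x, ENNReal.ofReal (x ^ k) ∂μ with hm_def
  have hm_le_one : ∀ k, m k ≤ 1 := by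
    intro k
    have h1 : m k ≤ ∫⁻ _, 1 ∂μ := by
      refine lintegral_mono_ae (hae.mono fun x hx => ?_)
      exact ENNReal.ofReal_le_one.mpr (pow_le_one₀ hx.1 hx.2.le)
    simpa using h1
  have hm_split : ∀ (k : ℕ) (t : ℝ), 0 < t →
      m k ≤ ENNReal.ofReal ((1 - t) ^ k) + ENNReal.ofReal (C₁ * t ^ γ) := by
    intro k t ht
    have step1 : m k ≤ ENNReal.ofReal ((1 - t) ^ k) + μ (Set.Icc (1 - t) 1) := by
      have hb : m k ≤ ∫⁻ x, (ENNReal.ofReal ((1 - t) ^ k)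
          + (Set.Icc (1 - t) 1).indicator (fun _ => (1:ENNReal)) x) ∂μ := by
        refine lintegral_mono_ae (hae.mono fun x hx => ?_)
        rcases le_or_gt x (1 - t) with h | h
        · exact le_add_right (ENNReal.ofReal_le_ofReal (pow_le_pow_left₀ hx.1 h k))
        · have hmem : x ∈ Set.Icc (1 - t) 1 := ⟨h.le, hx.2.le⟩
          rw [Set.indicator_of_mem hmem]
          exact le_add_left (ENNReal.ofReal_le_one.mpr (pow_le_one₀ hx.1 hx.2.le))
      rw [lintegral_add_left measurable_const, lintegral_const,
        lintegral_indicator measurableSet_Icc _] at hb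
      simpa using hb
    exact step1.trans (add_le_add_right (hTail t ht) _)
  -- exponents
  set ε : ℝ := (β + γ - 2) / 2 with hε_def
  have hε : 0 < ε := by simp only [hε_def]; linarith
  set s : ℝ := ε / γ with hs_def
  have hs : 0 < s := div_pos hε hγ
  set c : ℝ := β + γ + 2 with hc_def
  have hc : 0 < c := by simp only [hc_def]; linarith
  have hlog : ∀ k : ℕ, 1 ≤ k → (Real.log k) ^ γ ≤ s⁻¹ ^ γ * (k:ℝ) ^ ε := by
    intro k hk
    have hk1 : (1:ℝ) ≤ k := by exact_mod_cast hk
    have hkpos : (0:ℝ) < k := by linarith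
    have hlogk : 0 ≤ Real.log k := Real.log_nonneg hk1
    have h1 : Real.log k ≤ s⁻¹ * (k:ℝ) ^ s := by
      have h2 : Real.log ((k:ℝ) ^ s) ≤ (k:ℝ) ^ s := by
        have := Real.log_le_sub_one_of_pos (Real.rpow_pos_of_pos hkpos s)
        linarith
      have h3 : Real.log ((k:ℝ) ^ s) = s * Real.log k := Real.log_rpow hkpos s
      calc Real.log k = s⁻¹ * (s * Real.log k) := by field_simp
        _ = s⁻¹ * Real.log ((k:ℝ) ^ s) := by rw [h3]
        _ ≤ s⁻¹ * (k:ℝ) ^ s := mul_le_mul_of_nonneg_left h2 (inv_nonneg.mpr hs.le)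
    calc (Real.log k) ^ γ ≤ (s⁻¹ * (k:ℝ) ^ s) ^ γ := Real.rpow_le_rpow hlogk h1 hγ.le
      _ = s⁻¹ ^ γ * ((k:ℝ) ^ s) ^ γ :=
        Real.mul_rpow (inv_nonneg.mpr hs.le) (Real.rpow_nonneg hkpos.le s)
      _ = s⁻¹ ^ γ * (k:ℝ) ^ ε := by
        rw [← Real.rpow_mul hkpos.le]
        congr 1
        rw [hs_def]
        field_simp
  -- the dominating sequence
  set b : ℕ → ℝ := fun k => if k = 0 then 0 else
    (k:ℝ) * p k * ((k:ℝ) ^ (-c) + C₁ * (c * Real.log k / k) ^ γ) with hb_def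
  have hb_nonneg : ∀ k, 0 ≤ b k := by
    intro k
    rw [hb_def]
    by_cases h : k = 0
    · simp [h]
    · simp only [h, if_false]
      have hk1 : 1 ≤ k := Nat.one_le_iff_ne_zero.mpr h
      have hkpos : (0:ℝ) < k := by exact_mod_cast hk1
      have hlt : 0 ≤ c * Real.log k / k :=
        div_nonneg (mul_nonneg hc.le (Real.log_nonneg (by exact_mod_cast hk1))) hkpos.le
      refine mul_nonneg (mul_nonneg hkpos.le (hp_nonneg k))
        (add_nonneg (Real.rpow_nonneg hkpos.le _)
          (mul_nonneg (by linarith) (Real.rpow_nonneg hlt _)))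
  have hb_summable : Summable b := by
    set C₃ : ℝ := C₀ * (1 + C₁ * c ^ γ * s⁻¹ ^ γ) with hC₃_def
    have hC₃ : 0 ≤ C₃ := by
      have h1 := Real.rpow_nonneg hc.le γ
      have h2 := Real.rpow_nonneg (inv_nonneg.mpr hs.le) γ
      rw [hC₃_def]
      have h3 : 0 ≤ C₁ * c ^ γ * s⁻¹ ^ γ :=
        mul_nonneg (mul_nonneg (le_trans zero_le_one hC₁_one) h1) h2
      nlinarith [mul_nonneg hC₀_pos.le h3]
    have hexp1 : (1 - β - c) < -1 := by rw [hc_def]; linarith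
    have hexp2 : (-1 - ε) < -1 := by linarith
    have hbb : Summable (fun k : ℕ => C₃ * ((k:ℝ) ^ (1 - β - c) + (k:ℝ) ^ (-1 - ε))) :=
      ((Real.summable_nat_rpow.mpr hexp1).add (Real.summable_nat_rpow.mpr hexp2)).mul_left _
    refine Summable.of_nonneg_of_le hb_nonneg (fun k => ?_) hbb
    by_cases h : k = 0
    · subst h
      rw [hb_def]
      simp only [if_pos rfl, Nat.cast_zero]
      rw [Real.zero_rpow (ne_of_lt (by linarith : (1:ℝ) - β - c < 0)),
        Real.zero_rpow (ne_of_lt (by linarith : (-1:ℝ) - ε < 0))]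
      simp
    · have hk1 : 1 ≤ k := Nat.one_le_iff_ne_zero.mpr h
      have hkpos : (0:ℝ) < k := by exact_mod_cast hk1
      have hlogk : 0 ≤ Real.log k := Real.log_nonneg (by exact_mod_cast hk1)
      -- bound the log-power term
      have hA : (c * Real.log k / k) ^ γ ≤ c ^ γ * s⁻¹ ^ γ * (k:ℝ) ^ (ε - γ) := by
        have hT : (c * Real.log k / k) ^ γ = c ^ γ * (Real.log k) ^ γ / (k:ℝ) ^ γ := by
          rw [Real.div_rpow (mul_nonneg hc.le hlogk) hkpos.le,
            Real.mul_rpow hc.le hlogk]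
        rw [hT]
        have hkγ : (0:ℝ) < (k:ℝ) ^ γ := Real.rpow_pos_of_pos hkpos γ
        have h2 : c ^ γ * (Real.log k) ^ γ ≤ c ^ γ * (s⁻¹ ^ γ * (k:ℝ) ^ ε) :=
          mul_le_mul_of_nonneg_left (hlog k hk1) (Real.rpow_nonneg hc.le γ)
        calc c ^ γ * (Real.log k) ^ γ / (k:ℝ) ^ γ
            ≤ c ^ γ * (s⁻¹ ^ γ * (k:ℝ) ^ ε) / (k:ℝ) ^ γ :=
              (div_le_div_iff_of_pos_right hkγ).mpr h2
          _ = c ^ γ * s⁻¹ ^ γ * (k:ℝ) ^ (ε - γ) := by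
              rw [Real.rpow_sub hkpos]
              ring
      have e1 : (k:ℝ) ^ (1 - β) = (k:ℝ) * (k:ℝ) ^ (-β) := by
        rw [show (1 - β) = 1 + (-β) by ring, Real.rpow_add hkpos, Real.rpow_one]
      have e2 : (k:ℝ) ^ (1 - β) * (k:ℝ) ^ (-c) = (k:ℝ) ^ (1 - β - c) := by
        rw [← Real.rpow_add hkpos]
        congr 1
        try ring
      have e3 : (k:ℝ) ^ (1 - β) * (k:ℝ) ^ (ε - γ) = (k:ℝ) ^ (-1 - ε) := by
        rw [← Real.rpow_add hkpos]
        congr 1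
        rw [hε_def]
        try ring
      have hp1 : (k:ℝ) * p k ≤ C₀ * (k:ℝ) ^ (1 - β) := by
        rw [e1]
        calc (k:ℝ) * p k ≤ (k:ℝ) * (C₀ * (k:ℝ) ^ (-β)) :=
            mul_le_mul_of_nonneg_left (hp_bd k hk1) hkpos.le
          _ = C₀ * ((k:ℝ) * (k:ℝ) ^ (-β)) := by ring
      have hpar : (k:ℝ) ^ (-c) + C₁ * (c * Real.log k / k) ^ γ
          ≤ (k:ℝ) ^ (-c) + C₁ * (c ^ γ * s⁻¹ ^ γ * (k:ℝ) ^ (ε - γ)) := by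
        have := mul_le_mul_of_nonneg_left hA (by linarith : (0:ℝ) ≤ C₁)
        linarith
      have hpar_nn : 0 ≤ (k:ℝ) ^ (-c) + C₁ * (c * Real.log k / k) ^ γ := by
        have hlt : 0 ≤ c * Real.log k / k := div_nonneg (mul_nonneg hc.le hlogk) hkpos.le
        have := Real.rpow_nonneg hlt γ
        have := Real.rpow_nonneg hkpos.le (-c)
        nlinarith [hC₁_one]
      rw [hb_def]
      simp only [h, if_false]
      calc (k:ℝ) * p k * ((k:ℝ) ^ (-c) + C₁ * (c * Real.log k / k) ^ γ)
          ≤ C₀ * (k:ℝ) ^ (1 - β) * ((k:ℝ) ^ (-c) + C₁ * (c ^ γ * s⁻¹ ^ γ * (k:ℝ) ^ (ε - γ))) := by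
            refine mul_le_mul hp1 hpar hpar_nn ?_
            positivity
        _ = C₀ * ((k:ℝ) ^ (1 - β) * (k:ℝ) ^ (-c))
            + C₀ * C₁ * c ^ γ * s⁻¹ ^ γ * ((k:ℝ) ^ (1 - β) * (k:ℝ) ^ (ε - γ)) := by
            ring
        _ = C₀ * (k:ℝ) ^ (1 - β - c)
            + C₀ * C₁ * c ^ γ * s⁻¹ ^ γ * (k:ℝ) ^ (-1 - ε) := by
            rw [e2, e3]
        _ ≤ C₃ * ((k:ℝ) ^ (1 - β - c) + (k:ℝ) ^ (-1 - ε)) := by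
            have h1 : (0:ℝ) ≤ (k:ℝ) ^ (1 - β - c) := Real.rpow_nonneg hkpos.le _
            have h2 : (0:ℝ) ≤ (k:ℝ) ^ (-1 - ε) := Real.rpow_nonneg hkpos.le _
            have h3 := Real.rpow_nonneg hc.le γ
            have h4 := Real.rpow_nonneg (inv_nonneg.mpr hs.le) γ
            have h5 : 0 ≤ C₀ * C₁ * c ^ γ * s⁻¹ ^ γ :=
              mul_nonneg (mul_nonneg (mul_nonneg hC₀_pos.le
                (le_trans zero_le_one hC₁_one)) h3) h4
            rw [hC₃_def]
            nlinarith [mul_nonneg h5 h1, mul_nonneg hC₀_pos.le h2]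
  have hkey : ∀ k : ℕ, ENNReal.ofReal ((k:ℝ) * p k) * m k ≤ ENNReal.ofReal (b k) := by
    intro k
    by_cases h : k = 0
    · subst h
      simp
    have hk1 : 1 ≤ k := Nat.one_le_iff_ne_zero.mpr h
    have hkpos : (0:ℝ) < k := by exact_mod_cast hk1
    have hkp_nn : 0 ≤ (k:ℝ) * p k := mul_nonneg hkpos.le (hp_nonneg k)
    set t : ℝ := c * Real.log k / k with ht_def
    have hmain : m k ≤ ENNReal.ofReal ((k:ℝ) ^ (-c) + C₁ * t ^ γ) := by
      by_cases h1 : k = 1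
      · subst h1
        have h2 : ((1:ℕ):ℝ) ^ (-c) + C₁ * t ^ γ = 1 := by
          rw [ht_def]
          norm_num [Real.zero_rpow hγ.ne', Real.one_rpow]
        rw [h2, ENNReal.ofReal_one]
        exact hm_le_one 1
      · have hk2 : 2 ≤ k := by omega
        have hk2' : (1:ℝ) < k := by exact_mod_cast (by omega : 1 < k)
        have hlogpos : 0 < Real.log k := Real.log_pos hk2'
        have htpos : 0 < t := div_pos (mul_pos hc hlogpos) hkpos
        rcases le_or_gt t 1 with hts | hts
        · have hpow : (1 - t) ^ k ≤ (k:ℝ) ^ (-c) := by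
            have h1 : (1 - t) ≤ Real.exp (-t) := by
              have := Real.add_one_le_exp (-t)
              linarith
            have h2 : (1 - t) ^ k ≤ (Real.exp (-t)) ^ k :=
              pow_le_pow_left₀ (by linarith) h1 k
            have h3 : (Real.exp (-t)) ^ k = Real.exp ((k:ℝ) * (-t)) := by
              rw [Real.exp_nat_mul]
            have h4 : (k:ℝ) * (-t) = Real.log k * (-c) := by
              rw [ht_def]
              field_simp
            have h5 : (k:ℝ) ^ (-c) = Real.exp (Real.log k * (-c)) :=
              Real.rpow_def_of_pos hkpos (-c)
            rw [h5, ← h4, ← h3]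
            exact h2
          calc m k ≤ ENNReal.ofReal ((1 - t) ^ k) + ENNReal.ofReal (C₁ * t ^ γ) :=
              hm_split k t htpos
            _ ≤ ENNReal.ofReal ((k:ℝ) ^ (-c)) + ENNReal.ofReal (C₁ * t ^ γ) :=
              add_le_add_left (ENNReal.ofReal_le_ofReal hpow) _
            _ = ENNReal.ofReal ((k:ℝ) ^ (-c) + C₁ * t ^ γ) :=
              (ENNReal.ofReal_add (Real.rpow_nonneg hkpos.le _)
                (mul_nonneg (by linarith) (Real.rpow_nonneg htpos.le _))).symm
        · have ht1 : (1:ℝ) ≤ t ^ γ := by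
            calc (1:ℝ) = 1 ^ γ := (Real.one_rpow γ).symm
              _ ≤ t ^ γ := Real.rpow_le_rpow zero_le_one hts.le hγ.le
          have h1 : (1:ℝ) ≤ C₁ * t ^ γ := by nlinarith
          calc m k ≤ 1 := hm_le_one k
            _ = ENNReal.ofReal 1 := ENNReal.ofReal_one.symm
            _ ≤ ENNReal.ofReal ((k:ℝ) ^ (-c) + C₁ * t ^ γ) := by
              refine ENNReal.ofReal_le_ofReal ?_
              have := Real.rpow_nonneg hkpos.le (-c)
              linarith
    calc ENNReal.ofReal ((k:ℝ) * p k) * m k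
        ≤ ENNReal.ofReal ((k:ℝ) * p k) * ENNReal.ofReal ((k:ℝ) ^ (-c) + C₁ * t ^ γ) :=
          mul_le_mul_right hmain _
      _ = ENNReal.ofReal ((k:ℝ) * p k * ((k:ℝ) ^ (-c) + C₁ * t ^ γ)) :=
          (ENNReal.ofReal_mul hkp_nn).symm
      _ = ENNReal.ofReal (b k) := by rw [hb_def]; simp only [h, if_false, ht_def]
  -- ENNReal-valued versions of the series
  set N : ℝ → ENNReal := fun x => ∑' k : ℕ, ENNReal.ofReal ((k:ℝ) * p k * x ^ k) with hN_def
  set D : ℝ → ENNReal := fun x => ∑' k : ℕ, ENNReal.ofReal (p k * x ^ k) with hD_def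
  have hNmeas : Measurable N :=
    Measurable.ennreal_tsum fun k => ((measurable_id.pow_const k).const_mul _).ennreal_ofReal
  have hDmeas : Measurable D :=
    Measurable.ennreal_tsum fun k => ((measurable_id.pow_const k).const_mul _).ennreal_ofReal
  -- pointwise identifications on [0,1)
  have hsum1 : ∀ x ∈ Set.Ico (0:ℝ) 1, Summable (fun k : ℕ => (k:ℝ) * p k * x ^ k) := by
    intro x hx
    have h := summable_pow_mul_geometric_of_norm_lt_one (R := ℝ) 1
      (r := x) (by rw [Real.norm_eq_abs, abs_of_nonneg hx.1]; exact hx.2)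
    refine Summable.of_nonneg_of_le
      (fun k => mul_nonneg (mul_nonneg (Nat.cast_nonneg k) (hp_nonneg k)) (pow_nonneg hx.1 k))
      (fun k => ?_) h
    have : (k:ℝ) * p k * x ^ k ≤ (k:ℝ) * 1 * x ^ k :=
      mul_le_mul_of_nonneg_right
        (mul_le_mul_of_nonneg_left (hp_le_one k) (Nat.cast_nonneg k)) (pow_nonneg hx.1 k)
    simpa [pow_one] using this
  have hsum0 : ∀ x ∈ Set.Ico (0:ℝ) 1, Summable (fun k : ℕ => p k * x ^ k) := by
    intro x hx
    refine Summable.of_nonneg_of_le (fun k => mul_nonneg (hp_nonneg k) (pow_nonneg hx.1 k))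
      (fun k => ?_) hp_summable
    have hxk : x ^ k ≤ 1 := pow_le_one₀ hx.1 hx.2.le
    nlinarith [hp_nonneg k, pow_nonneg hx.1 k]
  have hNx : ∀ x ∈ Set.Ico (0:ℝ) 1,
      N x = ENNReal.ofReal (∑' k : ℕ, (k:ℝ) * p k * x ^ k) := by
    intro x hx
    rw [ENNReal.ofReal_tsum_of_nonneg (fun k => mul_nonneg (mul_nonneg (Nat.cast_nonneg k) (hp_nonneg k)) (pow_nonneg hx.1 k)) (hsum1 x hx)]
  have hDx : ∀ x ∈ Set.Ico (0:ℝ) 1, D x = ENNReal.ofReal (Φ x) := by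
    intro x hx
    rw [hΦ, ENNReal.ofReal_tsum_of_nonneg
      (fun k => mul_nonneg (hp_nonneg k) (pow_nonneg hx.1 k)) (hsum0 x hx)]
  have hΦ_ge : ∀ x ∈ Set.Ico (0:ℝ) 1, p 0 ≤ Φ x := by
    intro x hx
    rw [hΦ]
    have := Summable.le_tsum (hsum0 x hx) 0
      (fun j _ => mul_nonneg (hp_nonneg j) (pow_nonneg hx.1 j))
    simpa using this
  -- finiteness of the integral of N
  have hNint : ∫⁻ x, N x ∂μ = ∑' k : ℕ, ENNReal.ofReal ((k:ℝ) * p k) * m k := by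
    simp only [hN_def]
    have hmeas : ∀ k : ℕ, Measurable fun x : ℝ => ENNReal.ofReal ((k:ℝ) * p k * x ^ k) := by
      intro k
      fun_prop
    rw [lintegral_tsum (fun k => (hmeas k).aemeasurable)]
    refine tsum_congr fun k => ?_
    have heq : ∀ x : ℝ, ENNReal.ofReal ((k:ℝ) * p k * x ^ k)
        = ENNReal.ofReal ((k:ℝ) * p k) * ENNReal.ofReal (x ^ k) := fun x =>
      ENNReal.ofReal_mul (mul_nonneg (Nat.cast_nonneg k) (hp_nonneg k))
    simp_rw [heq]
    have hmeas2 : Measurable fun x : ℝ => ENNReal.ofReal (x ^ k) := by fun_prop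
    rw [lintegral_const_mul _ hmeas2]
  have hsum_lt : (∑' k : ℕ, ENNReal.ofReal ((k:ℝ) * p k) * m k) < ⊤ := by
    calc (∑' k : ℕ, ENNReal.ofReal ((k:ℝ) * p k) * m k)
        ≤ ∑' k : ℕ, ENNReal.ofReal (b k) := ENNReal.tsum_le_tsum hkey
      _ = ENNReal.ofReal (∑' k, b k) :=
          (ENNReal.ofReal_tsum_of_nonneg hb_nonneg hb_summable).symm
      _ < ⊤ := ENNReal.ofReal_lt_top
  -- part 1
  have hGbound : ∀ᵐ x ∂μ, ENNReal.ofReal (G x) ≤ ENNReal.ofReal ((p 0)⁻¹) * N x := by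
    filter_upwards [hae] with x hx
    have hS : 0 ≤ ∑' k : ℕ, (k:ℝ) * p k * x ^ k :=
      tsum_nonneg fun k =>
        mul_nonneg (mul_nonneg (Nat.cast_nonneg k) (hp_nonneg k)) (pow_nonneg hx.1 k)
    have hΦx : p 0 ≤ Φ x := hΦ_ge x hx
    have hGle : G x ≤ (p 0)⁻¹ * ∑' k : ℕ, (k:ℝ) * p k * x ^ k := by
      rw [hG, div_eq_mul_inv]
      calc (∑' k : ℕ, (k:ℝ) * p k * x ^ k) * (Φ x)⁻¹
          ≤ (∑' k : ℕ, (k:ℝ) * p k * x ^ k) * (p 0)⁻¹ :=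
            mul_le_mul_of_nonneg_left (inv_anti₀ hp0 hΦx) hS
        _ = (p 0)⁻¹ * ∑' k : ℕ, (k:ℝ) * p k * x ^ k := mul_comm _ _
    calc ENNReal.ofReal (G x) ≤ ENNReal.ofReal ((p 0)⁻¹ * ∑' k : ℕ, (k:ℝ) * p k * x ^ k) :=
        ENNReal.ofReal_le_ofReal hGle
      _ = ENNReal.ofReal ((p 0)⁻¹) * ENNReal.ofReal (∑' k : ℕ, (k:ℝ) * p k * x ^ k) :=
        ENNReal.ofReal_mul (inv_nonneg.mpr hp0.le)
      _ = ENNReal.ofReal ((p 0)⁻¹) * N x := by rw [hNx x hx]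
  have hfin : (∫⁻ x, ENNReal.ofReal (G x) ∂μ) < ⊤ := by
    calc (∫⁻ x, ENNReal.ofReal (G x) ∂μ)
        ≤ ∫⁻ x, ENNReal.ofReal ((p 0)⁻¹) * N x ∂μ := lintegral_mono_ae hGbound
      _ = ENNReal.ofReal ((p 0)⁻¹) * ∫⁻ x, N x ∂μ := lintegral_const_mul _ hNmeas
      _ < ⊤ := ENNReal.mul_lt_top ENNReal.ofReal_lt_top (hNint ▸ hsum_lt)
  refine ⟨hfin, ?_⟩
  -- part 2 : strong law of large numbers
  set Gm : ℝ → ℝ := fun x => (N x).toReal / (D x).toReal with hGm_def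
  have hGm_meas : Measurable Gm := hNmeas.ennreal_toReal.div hDmeas.ennreal_toReal
  have hGm_nonneg : ∀ x, 0 ≤ Gm x := fun x =>
    div_nonneg ENNReal.toReal_nonneg ENNReal.toReal_nonneg
  have hGae : G =ᵐ[μ] Gm := by
    filter_upwards [hae] with x hx
    have h1 : (N x).toReal = ∑' k : ℕ, (k:ℝ) * p k * x ^ k := by
      rw [hNx x hx, ENNReal.toReal_ofReal (tsum_nonneg fun k => mul_nonneg (mul_nonneg (Nat.cast_nonneg k) (hp_nonneg k)) (pow_nonneg hx.1 k))]
    have h2 : (D x).toReal = Φ x := by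
      rw [hDx x hx, ENNReal.toReal_ofReal (le_trans hp0.le (hΦ_ge x hx))]
    rw [hG, hGm_def]
    simp only [h1, h2]
  have hGm_int : Integrable Gm μ := by
    refine ⟨hGm_meas.aestronglyMeasurable, ?_⟩
    rw [hasFiniteIntegral_iff_norm]
    have : (∫⁻ x, ENNReal.ofReal ‖Gm x‖ ∂μ) = ∫⁻ x, ENNReal.ofReal (G x) ∂μ := by
      refine lintegral_congr_ae ?_
      filter_upwards [hGae] with x hx
      rw [Real.norm_of_nonneg (hGm_nonneg x), hx]
    rw [this]
    exact hfin
  have hY_int : Integrable (fun ω => Gm (X 0 ω)) Pr := by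
    have h1 : Integrable Gm (Measure.map (X 0) Pr) := by rw [hXlaw 0]; exact hGm_int
    have h2 : AEStronglyMeasurable Gm (Measure.map (X 0) Pr) := by
      rw [hXlaw 0]; exact hGm_meas.aestronglyMeasurable
    exact (integrable_map_measure h2 (hXmeas 0).aemeasurable).mp h1
  have hindep : Pairwise (Function.onFun (IndepFun · · Pr) fun i ω => Gm (X i ω)) := by
    intro i j hij
    exact (hXindep.indepFun hij).comp hGm_meas hGm_meas
  have hident : ∀ i, IdentDistrib (fun ω => Gm (X i ω)) (fun ω => Gm (X 0 ω)) Pr Pr := by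
    intro i
    exact IdentDistrib.comp
      ⟨(hXmeas i).aemeasurable, (hXmeas 0).aemeasurable, by rw [hXlaw i, hXlaw 0]⟩ hGm_meas
  have hslln := strong_law_ae_real (fun i ω => Gm (X i ω)) hY_int hindep hident
  have hmean : (∫ ω, Gm (X 0 ω) ∂Pr) = ρstar := by
    have h2 : AEStronglyMeasurable Gm (Measure.map (X 0) Pr) := by
      rw [hXlaw 0]; exact hGm_meas.aestronglyMeasurable
    have h1 : (∫ ω, Gm (X 0 ω) ∂Pr) = ∫ x, Gm x ∂μ := by
      rw [← hXlaw 0, integral_map (hXmeas 0).aemeasurable h2]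
    rw [h1, hρstar]
    exact (integral_congr_ae hGae).symm
  have hGX : ∀ᵐ ω ∂Pr, ∀ i, G (X i ω) = Gm (X i ω) := by
    rw [ae_all_iff]
    intro i
    have h := hGae
    rw [← hXlaw i] at h
    exact ae_of_ae_map (hXmeas i).aemeasurable h
  filter_upwards [hslln, hGX] with ω h1 h2
  have heq : (fun n : ℕ => νn n ω)
      = fun n : ℕ => (∑ i ∈ Finset.range n, Gm (X i ω)) / n := by
    funext n
    rw [hνn]
    rw [Finset.sum_congr rfl fun i _ => h2 i]
    rw [one_div, inv_mul_eq_div]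
  rw [heq]
  have : Pr[fun ω => Gm (X 0 ω)] = ρstar := hmean
  rw [← this]
  exact h1
end

section
/- Let X be a random variable on [0,1] whose law μ satisfies μ([1−x,1]) ~ α₁x^γ as x↓0, and let Ψ:[0,1]→(0,∞) be continuous with Ψ(1)=1. Then 𝙴[X^r/Ψ(X)] ~ α₁Γ(γ+1)·r^{−γ} as r→∞. In particular (taking Ψ≡1), 𝙴[X^r] ~ α₁Γ(γ+1)·r^{−γ}. -/
set_option maxHeartbeats 1000000

open MeasureTheory ProbabilityTheory Filter Set Real


lemma expneg_image : (fun v : ℝ => Real.exp (-v)) '' (Ioi 0) = Ioo 0 1 := by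
  ext t
  constructor
  · rintro ⟨v, hv, rfl⟩
    have hv' : (0:ℝ) < v := hv
    exact ⟨Real.exp_pos _, Real.exp_lt_one_iff.mpr (by linarith)⟩
  · rintro ⟨h0, h1⟩
    exact ⟨-Real.log t, by simpa using Real.log_neg h0 h1, by simp [Real.exp_log h0]⟩

lemma expneg_deriv : ∀ v ∈ Ioi (0:ℝ), HasDerivWithinAt (fun v : ℝ => Real.exp (-v)) (-Real.exp (-v)) (Ioi 0) v := by
  intro v _
  simpa using ((hasDerivAt_neg' v).exp).hasDerivWithinAt (s := Ioi 0)

lemma expneg_inj : InjOn (fun v : ℝ => Real.exp (-v)) (Ioi 0) :=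
  fun a _ b _ h => by simpa using Real.exp_injective h

lemma L3val (γ : ℝ) (hγ : 0 < γ) :
    ∫ t in Ioo (0:ℝ) 1, (-Real.log t) ^ γ = Real.Gamma (γ + 1) := by
  rw [← expneg_image, integral_image_eq_integral_abs_deriv_smul measurableSet_Ioi expneg_deriv expneg_inj]
  rw [Real.Gamma_eq_integral (by linarith : (0:ℝ) < γ + 1)]
  apply setIntegral_congr_fun measurableSet_Ioi
  intro v hv
  simp [Real.log_exp, abs_of_pos (Real.exp_pos (-v)), smul_eq_mul, Real.exp_pos]

lemma L3int (γ : ℝ) (hγ : 0 < γ) :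
    IntegrableOn (fun t : ℝ => (-Real.log t) ^ γ) (Ioo 0 1) := by
  rw [← expneg_image, integrableOn_image_iff_integrableOn_abs_deriv_smul measurableSet_Ioi expneg_deriv expneg_inj]
  have := Real.GammaIntegral_convergent (by linarith : (0:ℝ) < γ + 1)
  apply this.congr_fun ?_ measurableSet_Ioi
  intro v hv
  simp [Real.log_exp, abs_of_pos (Real.exp_pos (-v)), smul_eq_mul]

-- A(r) := r^γ (1-δ)^r → 0
lemma L1 (γ δ : ℝ) (h0 : 0 < δ) (h1 : δ < 1) :
    Tendsto (fun r : ℝ => r ^ γ * (1 - δ) ^ r) atTop (nhds 0) := by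
  have hb : 0 < -Real.log (1 - δ) := by
    have := Real.log_neg (by linarith : (0:ℝ) < 1 - δ) (by linarith)
    linarith
  have := tendsto_rpow_mul_exp_neg_mul_atTop_nhds_zero γ (-Real.log (1-δ)) hb
  refine this.congr (fun r => ?_)
  rw [Real.rpow_def_of_pos (by linarith : (0:ℝ) < 1 - δ)]
  ring_nf

lemma ptlim (γ : ℝ) (hγ : 0 < γ) (t : ℝ) (h0 : 0 < t) (h1 : t < 1) :
    Tendsto (fun r : ℝ => (r * (1 - t ^ r⁻¹)) ^ γ) atTop
      (nhds ((-Real.log t) ^ γ)) := by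
  have hd : HasDerivAt (fun s : ℝ => t ^ s) (Real.log t) 0 := by
    simpa using (Real.hasStrictDerivAt_const_rpow h0 0).hasDerivAt
  rw [hasDerivAt_iff_tendsto_slope] at hd
  have hinv : Tendsto (fun r : ℝ => r⁻¹) atTop (nhdsWithin 0 {(0:ℝ)}ᶜ) := by
    rw [tendsto_nhdsWithin_iff]
    refine ⟨tendsto_inv_atTop_zero, ?_⟩
    filter_upwards [eventually_ge_atTop (1:ℝ)] with r hr
    simp only [mem_compl_iff, mem_singleton_iff]
    positivity
  have h2 : Tendsto (fun r : ℝ => r * (1 - t ^ r⁻¹)) atTop (nhds (-Real.log t)) := by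
    have := (hd.comp hinv).neg
    refine this.congr' ?_
    filter_upwards [eventually_ge_atTop (1:ℝ)] with r hr
    have hr0 : r ≠ 0 := by positivity
    simp only [Function.comp_apply, slope_def_field]
    rw [Real.rpow_zero]
    field_simp
    ring
  exact ((Real.continuousAt_rpow_const _ _ (Or.inr hγ.le)).tendsto.comp h2)

lemma contF (γ : ℝ) (hγ : 0 < γ) (r : ℝ) (hr : 1 ≤ r) :
    Continuous (fun t : ℝ => (r * (1 - t ^ r⁻¹)) ^ γ) := by
  have h1 : Continuous fun t : ℝ => t ^ r⁻¹ :=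
    continuous_iff_continuousAt.mpr fun t =>
      Real.continuousAt_rpow_const t _ (Or.inr (by positivity))
  have h2 : Continuous fun t : ℝ => r * (1 - t ^ r⁻¹) :=
    continuous_const.mul (continuous_const.sub h1)
  exact continuous_iff_continuousAt.mpr fun t =>
    (Real.continuousAt_rpow_const _ _ (Or.inr hγ.le)).comp (h2.continuousAt)

-- bound: for r ≥ 1, t ∈ (0,1): 0 ≤ r(1-t^{1/r}) ≤ -log t
lemma keybound (t r : ℝ) (h0 : 0 < t) (h1 : t < 1) (hr : 1 ≤ r) :
    0 ≤ r * (1 - t ^ r⁻¹) ∧ r * (1 - t ^ r⁻¹) ≤ -Real.log t := by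
  have hr0 : (0:ℝ) < r := by linarith
  have ha : t ^ r⁻¹ ≤ 1 := Real.rpow_le_one h0.le h1.le (by positivity)
  constructor
  · have : 0 ≤ 1 - t ^ r⁻¹ := by linarith
    positivity
  · rw [Real.rpow_def_of_pos h0]
    have hexp := Real.add_one_le_exp (Real.log t * r⁻¹)
    have hrr : r * r⁻¹ = 1 := mul_inv_cancel₀ (ne_of_gt hr0)
    have h2 : r * (1 - Real.exp (Real.log t * r⁻¹)) ≤ r * (-(Real.log t * r⁻¹)) :=
      mul_le_mul_of_nonneg_left (by linarith) hr0.le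
    have h3 : r * (-(Real.log t * r⁻¹)) = -Real.log t := by
      field_simp
    linarith

lemma L2b (γ : ℝ) (hγ : 0 < γ) :
    Tendsto (fun r : ℝ => ∫ t in Ioo (0:ℝ) 1, (r * (1 - t ^ r⁻¹)) ^ γ) atTop
      (nhds (Real.Gamma (γ + 1))) := by
  rw [← L3val γ hγ]
  apply tendsto_integral_filter_of_dominated_convergence
      (fun t => (-Real.log t) ^ γ)
  · filter_upwards [eventually_ge_atTop (1:ℝ)] with r hr
    exact (contF γ hγ r hr).aestronglyMeasurable
  · filter_upwards [eventually_ge_atTop (1:ℝ)] with r hr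
    filter_upwards [ae_restrict_mem measurableSet_Ioo] with t ht
    obtain ⟨hnn, hle⟩ := keybound t r ht.1 ht.2 hr
    rw [Real.norm_eq_abs, abs_of_nonneg (Real.rpow_nonneg hnn γ)]
    exact Real.rpow_le_rpow hnn hle hγ.le
  · exact L3int γ hγ
  · filter_upwards [ae_restrict_mem measurableSet_Ioo] with t ht
    exact ptlim γ hγ t ht.1 ht.2

-- K'(r) over the truncated interval
lemma L2 (γ δ : ℝ) (hγ : 0 < γ) (h0 : 0 < δ) (h1 : δ < 1) :
    Tendsto (fun r : ℝ => ∫ t in Ioo ((1-δ) ^ r) 1, (r * (1 - t ^ r⁻¹)) ^ γ)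
      atTop (nhds (Real.Gamma (γ + 1))) := by
  have hδ0 : (0:ℝ) < 1 - δ := by linarith
  have hA := L1 γ δ h0 h1
  -- squeeze the difference
  have hsplit : ∀ r : ℝ, 1 ≤ r →
      ∫ t in Ioo (0:ℝ) 1, (r * (1 - t ^ r⁻¹)) ^ γ
        = (∫ t in Ioc (0:ℝ) ((1-δ)^r), (r * (1 - t ^ r⁻¹)) ^ γ)
          + ∫ t in Ioo ((1-δ)^r) 1, (r * (1 - t ^ r⁻¹)) ^ γ := by
    intro r hr
    have hb0 : 0 < (1-δ)^r := Real.rpow_pos_of_pos hδ0 r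
    have hb1 : (1-δ)^r < 1 := Real.rpow_lt_one hδ0.le (by linarith) (by linarith)
    rw [← setIntegral_union]
    · rw [Ioc_union_Ioo_eq_Ioo hb0.le hb1]
    · rw [Set.disjoint_left]; intro t h1t h2t; exact absurd h1t.2 (not_le.mpr h2t.1)
    · exact measurableSet_Ioo
    · exact ((contF γ hγ r hr).integrableOn_Ioc)
    · exact ((contF γ hγ r hr).integrableOn_Icc.mono_set Ioo_subset_Icc_self)
  -- the small piece tends to 0
  have hsmall : Tendsto (fun r : ℝ =>
      ∫ t in Ioc (0:ℝ) ((1-δ)^r), (r * (1 - t ^ r⁻¹)) ^ γ) atTop (nhds 0) := by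
    apply tendsto_of_tendsto_of_tendsto_of_le_of_le' tendsto_const_nhds hA
    · filter_upwards [eventually_ge_atTop (1:ℝ)] with r hr
      apply setIntegral_nonneg measurableSet_Ioc
      intro t ht
      have hb1 : (1-δ)^r < 1 := Real.rpow_lt_one hδ0.le (by linarith) (by linarith)
      exact Real.rpow_nonneg (keybound t r ht.1 (lt_of_le_of_lt ht.2 hb1) hr).1 γ
    · filter_upwards [eventually_ge_atTop (1:ℝ)] with r hr
      have hb0 : 0 < (1-δ)^r := Real.rpow_pos_of_pos hδ0 r
      have hb1 : (1-δ)^r < 1 := Real.rpow_lt_one hδ0.le (by linarith) (by linarith)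
      have hr0 : (0:ℝ) < r := by linarith
      calc ∫ t in Ioc (0:ℝ) ((1-δ)^r), (r * (1 - t ^ r⁻¹)) ^ γ
          ≤ ∫ _ in Ioc (0:ℝ) ((1-δ)^r), r ^ γ := by
            apply setIntegral_mono_on ((contF γ hγ r hr).integrableOn_Ioc)
              (integrableOn_const (by rw [Real.volume_Ioc]; exact ENNReal.ofReal_ne_top))
              measurableSet_Ioc
            intro t ht
            have h0t : 0 < t := ht.1
            have h1t : t < 1 := lt_of_le_of_lt ht.2 hb1
            obtain ⟨hnn, _⟩ := keybound t r h0t h1t hr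
            apply Real.rpow_le_rpow hnn ?_ hγ.le
            have : t ^ r⁻¹ ≥ 0 := Real.rpow_nonneg h0t.le _
            nlinarith
        _ = ((1-δ)^r) * r ^ γ := by
            rw [setIntegral_const, measureReal_def, Real.volume_Ioc, smul_eq_mul, sub_zero,
              ENNReal.toReal_ofReal hb0.le]
        _ = r ^ γ * (1-δ)^r := by ring
  have := (L2b γ hγ).sub hsmall
  rw [sub_zero] at this
  refine this.congr' ?_
  filter_upwards [eventually_ge_atTop (1:ℝ)] with r hr
  rw [hsplit r hr]; ring

lemma contG (γ : ℝ) (hγ : 0 < γ) (r : ℝ) (hr : 1 ≤ r) (c : ℝ) :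
    Continuous (fun t : ℝ => c * (1 - t ^ r⁻¹) ^ γ) := by
  have h1 : Continuous fun t : ℝ => t ^ r⁻¹ :=
    continuous_iff_continuousAt.mpr fun t =>
      Real.continuousAt_rpow_const t _ (Or.inr (by positivity))
  have h2 : Continuous fun t : ℝ => 1 - t ^ r⁻¹ := continuous_const.sub h1
  exact continuous_const.mul (continuous_iff_continuousAt.mpr fun t =>
    (Real.continuousAt_rpow_const _ _ (Or.inr hγ.le)).comp h2.continuousAt)

lemma Jbounds (γ α₁ ε δ : ℝ) (hγ : 0 < γ) (hα₁ : 0 < α₁) (hε : 0 < ε) (hε1 : ε < 1)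
    (hδ0 : 0 < δ) (hδ1 : δ < 1)
    (μ : Measure ℝ) [IsProbabilityMeasure μ]
    (hup : ∀ x ∈ Ioc (0:ℝ) δ, (μ (Icc (1-x) 1)).toReal ≤ (1+ε) * α₁ * x^γ)
    (hlo : ∀ x ∈ Ioc (0:ℝ) δ, (1-ε) * α₁ * x^γ ≤ (μ (Icc (1-x) 1)).toReal)
    (r : ℝ) (hr : 1 ≤ r) :
    (1-ε) * α₁ * (∫ t in Ioo ((1-δ)^r) 1, (1 - t^r⁻¹)^γ) ≤ ∫ x in Ioc (1-δ) 1, x^r ∂μ ∧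
    ∫ x in Ioc (1-δ) 1, x^r ∂μ ≤ (1+ε) * α₁ * (∫ t in Ioo ((1-δ)^r) 1, (1 - t^r⁻¹)^γ) + (1-δ)^r := by
  have hδ0' : (0:ℝ) < 1 - δ := by linarith
  have hr0 : (0:ℝ) < r := by linarith
  have hb0 : 0 < (1-δ)^r := Real.rpow_pos_of_pos hδ0' r
  have hb1 : (1-δ)^r < 1 := Real.rpow_lt_one hδ0'.le (by linarith) hr0
  set b := (1-δ)^r with hbdef
  set ν := μ.restrict (Ioc (1-δ) 1) with hν
  have hmono : Continuous fun x : ℝ => x ^ r :=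
    continuous_iff_continuousAt.mpr fun t => Real.continuousAt_rpow_const t _ (Or.inr hr0.le)
  have hSm : ∀ t : ℝ, MeasurableSet {a : ℝ | t < a ^ r} := fun t =>
    measurableSet_lt measurable_const hmono.measurable
  -- the Bochner integral as a lintegral
  have hae : 0 ≤ᵐ[ν] fun x : ℝ => x ^ r := by
    filter_upwards [ae_restrict_mem measurableSet_Ioc] with x hx
    exact Real.rpow_nonneg (by linarith [hx.1] : (0:ℝ) ≤ x) r
  have step0 : ∫ x in Ioc (1-δ) 1, x^r ∂μ
      = (∫⁻ x, ENNReal.ofReal (x ^ r) ∂ν).toReal := by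
    rw [integral_eq_lintegral_of_nonneg_ae hae (hmono.aestronglyMeasurable)]
  -- layer cake
  have step1 : ∫⁻ x, ENNReal.ofReal (x ^ r) ∂ν = ∫⁻ t in Ioi 0, ν {a : ℝ | t < a ^ r} :=
    lintegral_eq_lintegral_meas_lt ν hae hmono.measurable.aemeasurable
  -- J is finite
  have hJfin : ∫⁻ x, ENNReal.ofReal (x ^ r) ∂ν ≠ ⊤ := by
    have : ∫⁻ x, ENNReal.ofReal (x ^ r) ∂ν ≤ ∫⁻ _, 1 ∂ν := by
      apply lintegral_mono_ae
      filter_upwards [ae_restrict_mem measurableSet_Ioc] with x hx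
      calc ENNReal.ofReal (x ^ r) ≤ ENNReal.ofReal 1 :=
            ENNReal.ofReal_le_ofReal (Real.rpow_le_one (by linarith [hx.1]) hx.2 hr0.le)
        _ = 1 := ENNReal.ofReal_one
    refine ne_top_of_le_ne_top ?_ this
    simp only [lintegral_one]
    exact (measure_lt_top ν univ).ne
  -- splitting of (0,∞)
  have hsplit : Ioi (0:ℝ) = (Ioc 0 b ∪ Ioo b 1) ∪ Ici 1 := by
    ext t
    simp only [mem_Ioi, mem_union, mem_Ioc, mem_Ioo, mem_Ici]
    constructor
    · intro h
      rcases le_or_gt t b with h1|h1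
      · exact Or.inl (Or.inl ⟨h, h1⟩)
      · rcases lt_or_ge t 1 with h2|h2
        · exact Or.inl (Or.inr ⟨h1, h2⟩)
        · exact Or.inr h2
    · rintro ((⟨h, _⟩|⟨h, _⟩)|h)
      · exact h
      · exact hb0.trans h
      · exact lt_of_lt_of_le one_pos h
  have hsplitL : ∫⁻ t in Ioi (0:ℝ), ν {a : ℝ | t < a ^ r}
      = (∫⁻ t in Ioc (0:ℝ) b, ν {a : ℝ | t < a ^ r})
        + (∫⁻ t in Ioo b 1, ν {a : ℝ | t < a ^ r})
        + ∫⁻ t in Ici (1:ℝ), ν {a : ℝ | t < a ^ r} := by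
    rw [hsplit, lintegral_union measurableSet_Ici, lintegral_union measurableSet_Ioo]
    · rw [Set.disjoint_left]; intro t h1t h2t; exact absurd h1t.2 (not_le.mpr h2t.1)
    · rw [Set.disjoint_left]
      rintro t (⟨_, h1t⟩|⟨_, h1t⟩) h2t
      · exact absurd h2t (not_le.mpr (lt_of_le_of_lt h1t hb1))
      · exact absurd h2t (not_le.mpr h1t)
  -- facts about a = t^{1/r} for t ∈ Ioo b 1
  have hafacts : ∀ t ∈ Ioo b 1, 1 - δ < t ^ r⁻¹ ∧ t ^ r⁻¹ < 1 ∧ (t ^ r⁻¹) ^ r = t := by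
    intro t ht
    have ht0 : 0 < t := hb0.trans ht.1
    refine ⟨?_, Real.rpow_lt_one ht0.le ht.2 (by positivity), ?_⟩
    · have h1 : b ^ r⁻¹ < t ^ r⁻¹ := Real.rpow_lt_rpow hb0.le ht.1 (by positivity)
      have h2 : b ^ r⁻¹ = 1 - δ := by
        rw [hbdef, ← Real.rpow_mul hδ0'.le, mul_inv_cancel₀ (ne_of_gt hr0), Real.rpow_one]
      linarith
    · rw [← Real.rpow_mul ht0.le, inv_mul_cancel₀ (ne_of_gt hr0), Real.rpow_one]
  -- piece 1 bound
  have hp1 : ∫⁻ t in Ioc (0:ℝ) b, ν {a : ℝ | t < a ^ r} ≤ ENNReal.ofReal b := by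
    calc ∫⁻ t in Ioc (0:ℝ) b, ν {a : ℝ | t < a ^ r} ≤ ∫⁻ _ in Ioc (0:ℝ) b, 1 := by
          apply lintegral_mono
          intro t
          calc ν {a : ℝ | t < a ^ r} ≤ ν univ := measure_mono (subset_univ _)
            _ ≤ μ univ := Measure.restrict_le_self univ
            _ = 1 := measure_univ
      _ = ENNReal.ofReal b := by
          rw [setLIntegral_one, Real.volume_Ioc, sub_zero]
  -- piece 3 is zero
  have hp3 : ∫⁻ t in Ici (1:ℝ), ν {a : ℝ | t < a ^ r} = 0 := by
    have : ∀ᵐ t ∂(volume.restrict (Ici (1:ℝ))), ν {a : ℝ | t < a ^ r} ≤ 0 := by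
      filter_upwards [ae_restrict_mem measurableSet_Ici] with t ht
      have hemp : {a : ℝ | t < a ^ r} ∩ Ioc (1-δ) 1 = ∅ := by
        ext a
        simp only [mem_inter_iff, mem_setOf_eq, mem_Ioc, mem_empty_iff_false, iff_false]
        rintro ⟨h1, h2, h3⟩
        have : a ^ r ≤ 1 := Real.rpow_le_one (by linarith) h3 hr0.le
        linarith [lt_of_le_of_lt (le_trans this ht) h1]
      have : ν {a : ℝ | t < a ^ r} = 0 := by
        rw [hν, Measure.restrict_apply (hSm t), hemp, measure_empty]
      simp [this]
    have := lintegral_mono_ae this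
    simpa using this
  -- piece 2 upper bound
  have hp2u : ∫⁻ t in Ioo b 1, ν {a : ℝ | t < a ^ r}
      ≤ ENNReal.ofReal ((1+ε) * α₁ * ∫ t in Ioo b 1, (1 - t^r⁻¹)^γ) := by
    have hpt : ∀ᵐ t ∂(volume.restrict (Ioo b 1)), ν {a : ℝ | t < a ^ r}
        ≤ ENNReal.ofReal ((1+ε) * α₁ * (1 - t^r⁻¹)^γ) := by
      filter_upwards [ae_restrict_mem measurableSet_Ioo] with t ht
      obtain ⟨ha1, ha2, ha3⟩ := hafacts t ht
      set a := t ^ r⁻¹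
      have hsub : {x : ℝ | t < x ^ r} ∩ Ioc (1-δ) 1 ⊆ Icc a 1 := by
        rintro x ⟨hx1, hx2, hx3⟩
        refine ⟨?_, hx3⟩
        by_contra hcon
        push_neg at hcon
        have : x ^ r < a ^ r := Real.rpow_lt_rpow (by linarith) hcon hr0
        rw [ha3] at this
        exact absurd hx1 (not_lt.mpr this.le)
      calc ν {x : ℝ | t < x ^ r} = μ ({x : ℝ | t < x ^ r} ∩ Ioc (1-δ) 1) := by
            rw [hν, Measure.restrict_apply (hSm t)]
        _ ≤ μ (Icc a 1) := measure_mono hsub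
        _ = ENNReal.ofReal ((μ (Icc (1-(1-a)) 1)).toReal) := by
            rw [show (1:ℝ) - (1-a) = a by ring, ENNReal.ofReal_toReal (measure_ne_top μ _)]
        _ ≤ ENNReal.ofReal ((1+ε) * α₁ * (1-a)^γ) :=
            ENNReal.ofReal_le_ofReal (hup (1-a) ⟨by linarith, by linarith⟩)
    calc ∫⁻ t in Ioo b 1, ν {a : ℝ | t < a ^ r}
        ≤ ∫⁻ t in Ioo b 1, ENNReal.ofReal ((1+ε) * α₁ * (1 - t^r⁻¹)^γ) :=
          lintegral_mono_ae hpt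
      _ = ENNReal.ofReal ((1+ε) * α₁ * ∫ t in Ioo b 1, (1 - t^r⁻¹)^γ) := by
          rw [← integral_const_mul]
          rw [← ofReal_integral_eq_lintegral_ofReal]
          · exact ((contG γ hγ r hr ((1+ε)*α₁)).integrableOn_Icc.mono_set Ioo_subset_Icc_self)
          · filter_upwards [ae_restrict_mem measurableSet_Ioo] with t ht
            have : (0:ℝ) ≤ (1 - t^r⁻¹)^γ :=
              Real.rpow_nonneg (by linarith [(hafacts t ht).2.1]) γ
            have h1ε : (0:ℝ) < 1 + ε := by linarith
            positivity
  -- piece 2 lower bound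
  have hp2l : ENNReal.ofReal ((1-ε) * α₁ * ∫ t in Ioo b 1, (1 - t^r⁻¹)^γ)
      ≤ ∫⁻ t in Ioo b 1, ν {a : ℝ | t < a ^ r} := by
    have hpt : ∀ᵐ t ∂(volume.restrict (Ioo b 1)),
        ENNReal.ofReal ((1-ε) * α₁ * (1 - t^r⁻¹)^γ) ≤ ν {a : ℝ | t < a ^ r} := by
      filter_upwards [ae_restrict_mem measurableSet_Ioo] with t ht
      obtain ⟨ha1, ha2, ha3⟩ := hafacts t ht
      set a := t ^ r⁻¹ with hadef
      have ha0 : 0 < a := Real.rpow_pos_of_pos (hb0.trans ht.1) _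
      -- lower bound for μ (Ioc a 1) via limit from the right
      have hlim : (1-ε) * α₁ * (1-a)^γ ≤ (μ (Ioc a 1)).toReal := by
        have hev : ∀ᶠ a' in nhdsWithin a (Ioi a),
            (1-ε) * α₁ * (1-a')^γ ≤ (μ (Ioc a 1)).toReal := by
          filter_upwards [Ioo_mem_nhdsGT_of_mem (⟨le_refl a, ha2⟩ : a ∈ Ico a 1)] with a' ha'
          calc (1-ε) * α₁ * (1-a')^γ ≤ (μ (Icc (1-(1-a')) 1)).toReal :=
                hlo (1-a') ⟨by linarith [ha'.2], by linarith [ha'.1]⟩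
            _ ≤ (μ (Ioc a 1)).toReal := by
                apply ENNReal.toReal_mono (measure_ne_top μ _)
                apply measure_mono
                intro x hx
                rw [show (1:ℝ) - (1-a') = a' by ring] at hx
                exact ⟨lt_of_lt_of_le ha'.1 hx.1, hx.2⟩
        have hcont : Tendsto (fun a' : ℝ => (1-ε) * α₁ * (1-a')^γ) (nhdsWithin a (Ioi a))
            (nhds ((1-ε) * α₁ * (1-a)^γ)) := by
          apply Tendsto.mono_left ?_ nhdsWithin_le_nhds
          have hc : Continuous fun a' : ℝ => (1-ε) * α₁ * (1-a')^γ :=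
            continuous_const.mul (continuous_iff_continuousAt.mpr fun x =>
              (Real.continuousAt_rpow_const _ _ (Or.inr hγ.le)).comp
                (continuous_const.sub continuous_id).continuousAt)
          exact hc.tendsto a
        exact le_of_tendsto hcont hev
      have hgoal : ENNReal.ofReal ((1-ε) * α₁ * (1-a)^γ) ≤ μ (Ioc a 1) :=
        ENNReal.ofReal_le_of_le_toReal hlim
      refine le_trans hgoal ?_
      have h1 : Ioc a 1 ⊆ {x : ℝ | t < x ^ r} := by
        intro x hx
        have : a ^ r < x ^ r := Real.rpow_lt_rpow ha0.le hx.1 hr0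
        rw [ha3] at this
        exact this
      have hsub2 : Ioc a 1 ⊆ Ioc (1-δ) 1 := fun x hx => ⟨lt_trans ha1 hx.1, hx.2⟩
      have h2 : μ (Ioc a 1) = ν (Ioc a 1) := by
        rw [hν, Measure.restrict_apply measurableSet_Ioc, inter_eq_self_of_subset_left hsub2]
      rw [h2]
      exact measure_mono h1
    calc ENNReal.ofReal ((1-ε) * α₁ * ∫ t in Ioo b 1, (1 - t^r⁻¹)^γ)
        = ∫⁻ t in Ioo b 1, ENNReal.ofReal ((1-ε) * α₁ * (1 - t^r⁻¹)^γ) := by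
          rw [← integral_const_mul, ofReal_integral_eq_lintegral_ofReal]
          · exact ((contG γ hγ r hr ((1-ε)*α₁)).integrableOn_Icc.mono_set Ioo_subset_Icc_self)
          · filter_upwards [ae_restrict_mem measurableSet_Ioo] with t ht
            have : (0:ℝ) ≤ (1 - t^r⁻¹)^γ :=
              Real.rpow_nonneg (by linarith [(hafacts t ht).2.1]) γ
            have h1ε : (0:ℝ) < 1 - ε := by linarith
            positivity
      _ ≤ ∫⁻ t in Ioo b 1, ν {a : ℝ | t < a ^ r} := lintegral_mono_ae hpt
  -- K ≥ 0
  have hK0 : 0 ≤ ∫ t in Ioo b 1, (1 - t^r⁻¹)^γ := by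
    apply setIntegral_nonneg measurableSet_Ioo
    intro t ht
    exact Real.rpow_nonneg (by linarith [(hafacts t ht).2.1]) γ
  constructor
  · -- lower bound
    rw [step0]
    have : ENNReal.ofReal ((1-ε) * α₁ * ∫ t in Ioo b 1, (1 - t^r⁻¹)^γ)
        ≤ ∫⁻ x, ENNReal.ofReal (x ^ r) ∂ν := by
      rw [step1]
      exact le_trans hp2l (lintegral_mono_set (Ioo_subset_Ioi_self.trans (Ioi_subset_Ioi hb0.le)))
    have h2 := ENNReal.toReal_mono hJfin this
    rwa [ENNReal.toReal_ofReal (mul_nonneg (mul_nonneg (by linarith) hα₁.le) hK0)] at h2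
  · -- upper bound
    rw [step0]
    have hle : ∫⁻ x, ENNReal.ofReal (x ^ r) ∂ν
        ≤ ENNReal.ofReal ((1+ε) * α₁ * (∫ t in Ioo b 1, (1 - t^r⁻¹)^γ) + b) := by
      rw [step1, hsplitL]
      calc (∫⁻ t in Ioc (0:ℝ) b, ν {a : ℝ | t < a ^ r})
            + (∫⁻ t in Ioo b 1, ν {a : ℝ | t < a ^ r})
            + ∫⁻ t in Ici (1:ℝ), ν {a : ℝ | t < a ^ r}
          ≤ ENNReal.ofReal b + ENNReal.ofReal ((1+ε) * α₁ * ∫ t in Ioo b 1, (1 - t^r⁻¹)^γ) + 0 := by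
            exact add_le_add (add_le_add hp1 hp2u) hp3.le
        _ = ENNReal.ofReal ((1+ε) * α₁ * (∫ t in Ioo b 1, (1 - t^r⁻¹)^γ) + b) := by
            rw [add_zero, ← ENNReal.ofReal_add hb0.le (by positivity), add_comm]
    calc (∫⁻ x, ENNReal.ofReal (x ^ r) ∂ν).toReal
        ≤ (ENNReal.ofReal ((1+ε) * α₁ * (∫ t in Ioo b 1, (1 - t^r⁻¹)^γ) + b)).toReal :=
          ENNReal.toReal_mono ENNReal.ofReal_ne_top hle
      _ = (1+ε) * α₁ * (∫ t in Ioo b 1, (1 - t^r⁻¹)^γ) + b :=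
          ENNReal.toReal_ofReal
            (add_nonneg (mul_nonneg (mul_nonneg (by linarith) hα₁.le) hK0) hb0.le)

lemma pt_up (ε a ψ : ℝ) (hε : 0 < ε) (hε12 : ε ≤ 1/2) (ha : 0 ≤ a)
    (hl : 1-ε ≤ ψ) : a ≤ (1+2*ε)*a*ψ := by
  nlinarith [mul_nonneg (mul_nonneg ha hε.le) (by linarith : (0:ℝ) ≤ 1-2*ε),
    mul_le_mul_of_nonneg_left hl (mul_nonneg (by linarith : (0:ℝ) ≤ 1+2*ε) ha)]

lemma pt_lo (ε a ψ : ℝ) (hε : 0 < ε) (ha : 0 ≤ a)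
    (hu : ψ ≤ 1+ε) (hψ0 : 0 ≤ ψ) : (1-ε)*a*ψ ≤ a := by
  rcases le_or_gt (1-ε) 0 with h | h
  · have := mul_nonneg ha hψ0
    nlinarith
  · nlinarith [mul_le_mul_of_nonneg_left hu (mul_nonneg h.le ha),
      mul_nonneg (mul_nonneg ha hε.le) hε.le]

lemma arith_up (ε ε₀ α₁ G M c₀inv S u v w : ℝ)
    (hε : 0 < ε) (hε12 : ε ≤ 1/2) (hεM : 20*M*ε ≤ ε₀) (hM0 : 0 < M)
    (hM1 : α₁*G ≤ M) (hM2 : α₁ ≤ M) (hM3 : c₀inv ≤ M) (hM4 : 1 ≤ M)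
    (hα₁ : 0 < α₁) (hG : 0 < G) (hc₀inv : 0 ≤ c₀inv)
    (hu0 : 0 ≤ u) (huU : u ≤ G + ε) (hv0 : 0 ≤ v) (hvU : v ≤ ε)
    (hwU : w ≤ (1+ε)*α₁*u + v)
    (hS : S ≤ c₀inv*v + (1+2*ε)*w) :
    S - α₁*G < ε₀ := by
  have q1 : α₁*ε ≤ M*ε := mul_le_mul_of_nonneg_right hM2 hε.le
  have q2 : α₁*u ≤ α₁*G + M*ε := by
    have h := mul_le_mul_of_nonneg_left huU hα₁.le
    have e : α₁*(G+ε) = α₁*G + α₁*ε := by ring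
    linarith
  have q3 : ε*(α₁*u) ≤ 2*(M*ε) := by
    have h := mul_le_mul_of_nonneg_left q2 hε.le
    have e1 : ε*(α₁*G) ≤ ε*M := mul_le_mul_of_nonneg_left hM1 hε.le
    have e2 : (M*ε)*ε ≤ (M*ε)*(1/2) :=
      mul_le_mul_of_nonneg_left hε12 (mul_nonneg hM0.le hε.le)
    nlinarith
  have q4 : w ≤ α₁*G + 4*(M*ε) := by
    have e : (1+ε)*α₁*u = α₁*u + ε*(α₁*u) := by ring
    have e2 : ε ≤ M*ε := by nlinarith
    linarith
  have q5 : c₀inv * v ≤ M*ε := mul_le_mul hM3 hvU hv0 hM0.le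
  have q7 : ε*w ≤ 3*(M*ε) := by
    have h := mul_le_mul_of_nonneg_left q4 hε.le
    have e1 : ε*(α₁*G) ≤ ε*M := mul_le_mul_of_nonneg_left hM1 hε.le
    have e2 : (M*ε)*ε ≤ (M*ε)*(1/2) :=
      mul_le_mul_of_nonneg_left hε12 (mul_nonneg hM0.le hε.le)
    nlinarith
  have e3 : (1+2*ε)*w = w + 2*(ε*w) := by ring
  have hMε : 0 < M*ε := mul_pos hM0 hε
  linarith

lemma arith_lo (ε ε₀ α₁ G M S u : ℝ)
    (hε : 0 < ε) (hε12 : ε ≤ 1/2) (hεM : 20*M*ε ≤ ε₀) (hM0 : 0 < M)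
    (hM1 : α₁*G ≤ M) (hM2 : α₁ ≤ M) (hM4 : 1 ≤ M)
    (hα₁ : 0 < α₁) (hG : 0 < G)
    (hu0 : 0 ≤ u) (huL : G - ε ≤ u)
    (hS : (1-ε)*((1-ε)*α₁*u) ≤ S) :
    α₁*G - S < ε₀ := by
  have hMε : 0 < M*ε := mul_pos hM0 hε
  have hαu : 0 ≤ α₁*u := mul_nonneg hα₁.le hu0
  have hS0 : 0 ≤ S := le_trans
    (mul_nonneg (by linarith : (0:ℝ) ≤ 1-ε)
      (mul_nonneg (mul_nonneg (by linarith : (0:ℝ) ≤ 1-ε) hα₁.le) hu0)) hS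
  rcases le_or_gt G ε with hc | hc
  · have : α₁*G ≤ α₁*ε := mul_le_mul_of_nonneg_left hc hα₁.le
    have : α₁*ε ≤ M*ε := mul_le_mul_of_nonneg_right hM2 hε.le
    linarith
  · have l1 : (1-2*ε)*(α₁*u) ≤ (1-ε)*((1-ε)*α₁*u) := by
      nlinarith [mul_nonneg (mul_nonneg hε.le hε.le) hαu]
    have l2 : (1-2*ε)*(α₁*(G-ε)) ≤ (1-2*ε)*(α₁*u) :=
      mul_le_mul_of_nonneg_left (mul_le_mul_of_nonneg_left huL hα₁.le) (by linarith)
    have l3 : α₁*G - 3*(M*ε) ≤ (1-2*ε)*(α₁*(G-ε)) := by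
      have q1 : α₁*ε ≤ M*ε := mul_le_mul_of_nonneg_right hM2 hε.le
      have q2 : ε*(α₁*G) ≤ ε*M := mul_le_mul_of_nonneg_left hM1 hε.le
      have e : (1-2*ε)*(α₁*(G-ε)) = α₁*G - α₁*ε - 2*(ε*(α₁*G)) + 2*(ε*(α₁*ε)) := by ring
      have q3 : 0 ≤ ε*(α₁*ε) := mul_nonneg hε.le (mul_nonneg hα₁.le hε.le)
      nlinarith
    linarith

lemma Kconv (γ δ : ℝ) (hγ : 0 < γ) (hδ0 : 0 < δ) (hδ1 : δ < 1) (r : ℝ) (hr : 1 ≤ r) :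
    r ^ γ * ∫ t in Ioo ((1-δ)^r) 1, (1 - t^r⁻¹)^γ
      = ∫ t in Ioo ((1-δ)^r) 1, (r * (1 - t^r⁻¹))^γ := by
  rw [← integral_const_mul]
  apply setIntegral_congr_fun measurableSet_Ioo
  intro t ht
  have hb0 : 0 < (1-δ)^r := Real.rpow_pos_of_pos (by linarith) r
  have ht0 : 0 < t := hb0.trans ht.1
  have : t ^ r⁻¹ ≤ 1 := Real.rpow_le_one ht0.le ht.2.le (by positivity)
  show r ^ γ * (1 - t ^ r⁻¹) ^ γ = (r * (1 - t ^ r⁻¹)) ^ γ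
  rw [Real.mul_rpow (by linarith : (0:ℝ) ≤ r) (by linarith : (0:ℝ) ≤ 1 - t ^ r⁻¹)]

lemma mainlem (γ α₁ : ℝ) (hγ : 0 < γ) (hα₁ : 0 < α₁)
    (μ : Measure ℝ) [IsProbabilityMeasure μ]
    (hμsupp : μ (Set.Icc (0:ℝ) 1)ᶜ = 0)
    (hμreg : Tendsto (fun x : ℝ => (μ (Set.Icc (1 - x) 1)).toReal / (α₁ * x ^ γ))
      (nhdsWithin 0 (Set.Ioi 0)) (nhds 1))
    (Ψ : ℝ → ℝ) (hΨcont : ContinuousOn Ψ (Set.Icc 0 1))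
    (hΨpos : ∀ x ∈ Set.Icc (0:ℝ) 1, 0 < Ψ x) (hΨ1 : Ψ 1 = 1) :
    Tendsto (fun r : ℝ => (∫ x, x ^ r / Ψ x ∂μ) * r ^ γ) atTop
      (nhds (α₁ * Real.Gamma (γ + 1))) := by
  have haemem : ∀ᵐ x ∂μ, x ∈ Icc (0:ℝ) 1 := by
    rw [ae_iff]
    exact hμsupp
  have hrestrict : μ.restrict (Icc (0:ℝ) 1) = μ :=
    Measure.restrict_eq_self_of_ae_mem haemem
  -- minimum of Ψ
  obtain ⟨x₀, hx₀, hminΨ⟩ := isCompact_Icc.exists_isMinOn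
    (nonempty_Icc.mpr zero_le_one) hΨcont
  set c₀ := Ψ x₀ with hc₀def
  have hc₀ : 0 < c₀ := hΨpos x₀ hx₀
  have hC : ∀ x ∈ Icc (0:ℝ) 1, c₀ ≤ Ψ x := fun x hx => hminΨ hx
  set G := Real.Gamma (γ + 1) with hGdef
  have hG : 0 < G := Real.Gamma_pos_of_pos (by linarith)
  set M : ℝ := α₁ * G + α₁ + 1/c₀ + 1 with hMdef
  have hM : 0 < M := by positivity
  rw [Metric.tendsto_nhds]
  intro ε₀ hε₀
  set ε : ℝ := min (1/2) (ε₀ / (20 * M)) with hεdef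
  have hε : 0 < ε := lt_min (by norm_num) (by positivity)
  have hε12 : ε ≤ 1/2 := min_le_left _ _
  have hε1 : ε < 1 := lt_of_le_of_lt hε12 (by norm_num)
  have hεM : 20 * M * ε ≤ ε₀ := by
    have := min_le_right (1/2 : ℝ) (ε₀ / (20 * M))
    calc 20 * M * ε ≤ 20 * M * (ε₀ / (20 * M)) := by
          apply mul_le_mul_of_nonneg_left this (by positivity)
      _ = ε₀ := by field_simp
  -- δ from hμreg
  rw [Metric.tendsto_nhdsWithin_nhds] at hμreg
  obtain ⟨δ₁, hδ₁0, hδ₁⟩ := hμreg ε hε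
  -- δ from Ψ
  have hΨ1' := hΨcont 1 (right_mem_Icc.mpr zero_le_one)
  rw [Metric.continuousWithinAt_iff] at hΨ1'
  obtain ⟨δ₂, hδ₂0, hδ₂⟩ := hΨ1' ε hε
  set δ : ℝ := min (1/2) (min (δ₁/2) (δ₂/2)) with hδdef
  have hδ0 : 0 < δ := lt_min (by norm_num) (lt_min (by linarith) (by linarith))
  have hδ1 : δ < 1 := lt_of_le_of_lt (min_le_left _ _) (by norm_num)
  have hδδ₁ : δ < δ₁ := lt_of_le_of_lt ((min_le_right _ _).trans (min_le_left _ _)) (by linarith)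
  have hδδ₂ : δ < δ₂ := lt_of_le_of_lt ((min_le_right _ _).trans (min_le_right _ _)) (by linarith)
  -- bounds on F
  have hup : ∀ x ∈ Ioc (0:ℝ) δ, (μ (Icc (1-x) 1)).toReal ≤ (1+ε) * α₁ * x^γ := by
    intro x hx
    have hd : 0 < α₁ * x^γ := by
      have := Real.rpow_pos_of_pos hx.1 γ
      positivity
    have := hδ₁ (mem_Ioi.mpr hx.1) (by
      rw [Real.dist_eq, sub_zero, abs_of_pos hx.1]
      exact lt_of_le_of_lt hx.2 hδδ₁)
    rw [Real.dist_eq, abs_sub_lt_iff] at this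
    have h2 := (div_lt_iff₀ hd).mp (by linarith [this.1] :
      (μ (Icc (1-x) 1)).toReal / (α₁ * x ^ γ) < 1 + ε)
    calc (μ (Icc (1-x) 1)).toReal ≤ (1+ε) * (α₁ * x^γ) := h2.le
      _ = (1+ε) * α₁ * x^γ := by ring
  have hlo : ∀ x ∈ Ioc (0:ℝ) δ, (1-ε) * α₁ * x^γ ≤ (μ (Icc (1-x) 1)).toReal := by
    intro x hx
    have hd : 0 < α₁ * x^γ := by
      have := Real.rpow_pos_of_pos hx.1 γ
      positivity
    have := hδ₁ (mem_Ioi.mpr hx.1) (by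
      rw [Real.dist_eq, sub_zero, abs_of_pos hx.1]
      exact lt_of_le_of_lt hx.2 hδδ₁)
    rw [Real.dist_eq, abs_sub_lt_iff] at this
    have h2 := (lt_div_iff₀ hd).mp (by linarith [this.2] :
      1 - ε < (μ (Icc (1-x) 1)).toReal / (α₁ * x ^ γ))
    calc (1-ε) * α₁ * x^γ = (1-ε) * (α₁ * x^γ) := by ring
      _ ≤ (μ (Icc (1-x) 1)).toReal := h2.le
  -- Ψ bounds near 1
  have hΨnear : ∀ x ∈ Ioc (1-δ) 1, 1 - ε ≤ Ψ x ∧ Ψ x ≤ 1 + ε := by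
    intro x hx
    have hxI : x ∈ Icc (0:ℝ) 1 := ⟨by linarith [hx.1], hx.2⟩
    have := hδ₂ hxI (by
      rw [Real.dist_eq, abs_sub_lt_iff]
      constructor <;> [linarith [hx.2]; linarith [hx.1, hδδ₂]])
    rw [hΨ1, Real.dist_eq, abs_sub_lt_iff] at this
    exact ⟨by linarith [this.2], by linarith [this.1]⟩
  -- continuity of x ↦ x^r
  have hrpow : ∀ r : ℝ, 1 ≤ r → Continuous fun x : ℝ => x ^ r := fun r hr =>
    continuous_iff_continuousAt.mpr fun t =>
      Real.continuousAt_rpow_const t _ (Or.inr (by linarith))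
  -- integrability
  have hintP : ∀ r : ℝ, 1 ≤ r → Integrable (fun x : ℝ => x ^ r) μ := by
    intro r hr
    refine ⟨(hrpow r hr).aestronglyMeasurable, HasFiniteIntegral.of_bounded (C := 1) ?_⟩
    filter_upwards [haemem] with x hx
    rw [Real.norm_eq_abs, abs_of_nonneg (Real.rpow_nonneg hx.1 r)]
    exact Real.rpow_le_one hx.1 hx.2 (by linarith)
  have hintQ : ∀ r : ℝ, 1 ≤ r → Integrable (fun x : ℝ => x ^ r / Ψ x) μ := by
    intro r hr
    constructor
    · rw [← hrestrict]
      exact (((hrpow r hr).continuousOn).div hΨcont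
        (fun x hx => (hΨpos x hx).ne')).aestronglyMeasurable measurableSet_Icc
    · apply HasFiniteIntegral.of_bounded (C := 1 / c₀)
      filter_upwards [haemem] with x hx
      rw [Real.norm_eq_abs, abs_of_nonneg
        (div_nonneg (Real.rpow_nonneg hx.1 r) (hΨpos x hx).le)]
      exact div_le_div₀ (by norm_num) (Real.rpow_le_one hx.1 hx.2 (by linarith))
        hc₀ (hC x hx)
  -- eventual facts
  have hKK := L2 γ δ hγ hδ0 hδ1
  rw [Metric.tendsto_nhds] at hKK
  have hA := L1 γ δ hδ0 hδ1
  rw [Metric.tendsto_nhds] at hA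
  filter_upwards [eventually_ge_atTop (1:ℝ), hKK ε hε, hA ε hε] with r hr hKKr hAr
  have hr0 : (0:ℝ) < r := by linarith
  have hrγ : (0:ℝ) < r ^ γ := Real.rpow_pos_of_pos hr0 γ
  have hδ1' : (0:ℝ) < 1 - δ := by linarith
  have hb0 : 0 < (1-δ)^r := Real.rpow_pos_of_pos hδ1' r
  set K : ℝ := ∫ t in Ioo ((1-δ)^r) 1, (1 - t^r⁻¹)^γ with hKdef
  set P : ℝ := ∫ x in Ioc (1-δ) 1, x^r ∂μ with hPdef
  obtain ⟨hJlo, hJup⟩ := Jbounds γ α₁ ε δ hγ hα₁ hε hε1 hδ0 hδ1 μ hup hlo r hr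
  -- KK and A facts
  rw [Real.dist_eq, abs_sub_lt_iff] at hKKr hAr
  rw [sub_zero] at hAr
  have hKconv : r ^ γ * K = ∫ t in Ioo ((1-δ)^r) 1, (r * (1 - t^r⁻¹))^γ :=
    Kconv γ δ hγ hδ0 hδ1 r hr
  have hK0 : 0 ≤ K := by
    apply setIntegral_nonneg measurableSet_Ioo
    intro t ht
    have ht0 : 0 < t := hb0.trans ht.1
    have : t ^ r⁻¹ ≤ 1 := Real.rpow_le_one ht0.le ht.2.le (by positivity)
    exact Real.rpow_nonneg (by linarith) γ
  have hA0 : 0 ≤ r ^ γ * (1-δ)^r := by positivity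
  have hAε : r ^ γ * (1-δ)^r < ε := hAr.1
  have hKKub : r ^ γ * K < G + ε := by rw [hKconv]; linarith [hKKr.1]
  have hKKlb : G - ε < r ^ γ * K := by rw [hKconv]; linarith [hKKr.2]
  -- P bounds (multiplied by r^γ)
  have hP0 : 0 ≤ P := by
    apply setIntegral_nonneg measurableSet_Ioc
    intro x hx
    exact Real.rpow_nonneg (by linarith [hx.1]) r
  have hTlo : (1-ε) * α₁ * (r ^ γ * K) ≤ r ^ γ * P := by
    calc (1-ε) * α₁ * (r ^ γ * K) = r ^ γ * ((1-ε) * α₁ * K) := by ring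
      _ ≤ r ^ γ * P := mul_le_mul_of_nonneg_left hJlo hrγ.le
  have hTup : r ^ γ * P ≤ (1+ε) * α₁ * (r ^ γ * K) + r ^ γ * (1-δ)^r := by
    calc r ^ γ * P ≤ r ^ γ * ((1+ε) * α₁ * K + (1-δ)^r) :=
          mul_le_mul_of_nonneg_left hJup hrγ.le
      _ = (1+ε) * α₁ * (r ^ γ * K) + r ^ γ * (1-δ)^r := by ring
  -- splitting the Ψ integral
  have hsplitset : Icc (0:ℝ) 1 = Icc 0 (1-δ) ∪ Ioc (1-δ) 1 :=
    (Set.Icc_union_Ioc_eq_Icc (by linarith) (by linarith)).symm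
  have hdisj : Disjoint (Icc (0:ℝ) (1-δ)) (Ioc (1-δ) 1) := by
    rw [Set.disjoint_left]
    intro x h1 h2
    exact absurd h1.2 (not_le.mpr h2.1)
  set E : ℝ := ∫ x in Icc (0:ℝ) (1-δ), x^r / Ψ x ∂μ with hEdef
  set Q : ℝ := ∫ x in Ioc (1-δ) 1, x^r / Ψ x ∂μ with hQdef
  have hMψ : ∫ x, x ^ r / Ψ x ∂μ = E + Q := by
    have h1 : ∫ x, x ^ r / Ψ x ∂μ = ∫ x in Icc (0:ℝ) 1, x ^ r / Ψ x ∂μ := by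
      nth_rewrite 1 [← hrestrict]
      rfl
    rw [h1, hsplitset, setIntegral_union hdisj measurableSet_Ioc
      ((hintQ r hr).integrableOn) ((hintQ r hr).integrableOn)]
  -- E bounds
  have hE0 : 0 ≤ E := by
    apply setIntegral_nonneg measurableSet_Icc
    intro x hx
    have hxI : x ∈ Icc (0:ℝ) 1 := ⟨hx.1, by linarith [hx.2]⟩
    exact div_nonneg (Real.rpow_nonneg hx.1 r) (hΨpos x hxI).le
  have hEup : E ≤ 1/c₀ * (1-δ)^r := by
    calc E ≤ ∫ _ in Icc (0:ℝ) (1-δ), 1/c₀ * (1-δ)^r ∂μ := by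
          apply setIntegral_mono_on ((hintQ r hr).integrableOn)
            (integrableOn_const (measure_ne_top _ _)) measurableSet_Icc
          intro x hx
          have hxI : x ∈ Icc (0:ℝ) 1 := ⟨hx.1, by linarith [hx.2]⟩
          calc x ^ r / Ψ x ≤ (1-δ)^r / c₀ :=
                div_le_div₀ (Real.rpow_nonneg hδ1'.le r)
                  (Real.rpow_le_rpow hx.1 hx.2 (by linarith)) hc₀ (hC x hxI)
            _ = 1/c₀ * (1-δ)^r := by ring
      _ = (μ (Icc (0:ℝ) (1-δ))).toReal * (1/c₀ * (1-δ)^r) := by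
          rw [setIntegral_const, smul_eq_mul, measureReal_def]
      _ ≤ 1 * (1/c₀ * (1-δ)^r) := by
          apply mul_le_mul_of_nonneg_right ?_ (by positivity)
          exact ENNReal.toReal_le_of_le_ofReal zero_le_one
            (by simpa using prob_le_one (μ := μ) (s := Icc (0:ℝ) (1-δ)))
      _ = 1/c₀ * (1-δ)^r := one_mul _
  -- Q bounds
  have hQup : Q ≤ (1 + 2*ε) * P := by
    calc Q ≤ ∫ x in Ioc (1-δ) 1, (1 + 2*ε) * x^r ∂μ := by
          apply setIntegral_mono_on ((hintQ r hr).integrableOn)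
            (((hintP r hr).const_mul _).integrableOn) measurableSet_Ioc
          intro x hx
          have hxI : x ∈ Icc (0:ℝ) 1 := ⟨by linarith [hx.1], hx.2⟩
          obtain ⟨hΨl, hΨu⟩ := hΨnear x hx
          have hΨx : 0 < Ψ x := hΨpos x hxI
          rw [div_le_iff₀ hΨx]
          have hx0 : 0 ≤ x ^ r := Real.rpow_nonneg (by linarith [hx.1]) r
          exact pt_up ε (x ^ r) (Ψ x) hε hε12 hx0 hΨl
      _ = (1 + 2*ε) * P := integral_const_mul _ _
  have hQlo : (1 - ε) * P ≤ Q := by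
    calc (1 - ε) * P = ∫ x in Ioc (1-δ) 1, (1 - ε) * x^r ∂μ :=
          (integral_const_mul _ _).symm
      _ ≤ Q := by
          apply setIntegral_mono_on (((hintP r hr).const_mul _).integrableOn)
            ((hintQ r hr).integrableOn) measurableSet_Ioc
          intro x hx
          have hxI : x ∈ Icc (0:ℝ) 1 := ⟨by linarith [hx.1], hx.2⟩
          obtain ⟨hΨl, hΨu⟩ := hΨnear x hx
          have hΨx : 0 < Ψ x := hΨpos x hxI
          rw [le_div_iff₀ hΨx]
          have hx0 : 0 ≤ x ^ r := Real.rpow_nonneg (by linarith [hx.1]) r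
          exact pt_lo ε (x ^ r) (Ψ x) hε hx0 hΨu hΨx.le
  -- final arithmetic
  rw [Real.dist_eq, abs_sub_lt_iff, hMψ]
  have hc₀' : 1/c₀ * (r ^ γ * (1-δ)^r) ≤ 1/c₀ * ε :=
    mul_le_mul_of_nonneg_left hAε.le (by positivity)
  have hc₀inv : 0 < 1/c₀ := one_div_pos.mpr hc₀
  have hαG : 0 < α₁ * G := mul_pos hα₁ hG
  have hM1 : α₁ * G ≤ M := by rw [hMdef]; linarith
  have hM2 : α₁ ≤ M := by rw [hMdef]; linarith
  have hM3 : 1/c₀ ≤ M := by rw [hMdef]; linarith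
  have hM4 : (1:ℝ) ≤ M := by rw [hMdef]; linarith
  constructor
  · -- upper
    have h1 : (E + Q) * r ^ γ ≤ (1/c₀) * (r ^ γ * (1-δ)^r) + (1 + 2*ε) * (r ^ γ * P) := by
      have h := mul_le_mul_of_nonneg_right (add_le_add hEup hQup) hrγ.le
      calc (E + Q) * r ^ γ ≤ (1/c₀ * (1-δ)^r + (1 + 2*ε) * P) * r ^ γ := h
        _ = (1/c₀) * (r ^ γ * (1-δ)^r) + (1 + 2*ε) * (r ^ γ * P) := by ring
    exact arith_up ε ε₀ α₁ G M (1/c₀) ((E + Q) * r ^ γ) (r ^ γ * K)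
      (r ^ γ * (1-δ)^r) (r ^ γ * P) hε hε12 hεM hM hM1 hM2 hM3 hM4 hα₁ hG
      hc₀inv.le (mul_nonneg hrγ.le hK0) hKKub.le hA0 hAε.le hTup h1
  · -- lower
    have h1 : (1 - ε) * ((1-ε) * α₁ * (r ^ γ * K)) ≤ (E + Q) * r ^ γ := by
      have h2 : (1 - ε) * ((1-ε) * α₁ * (r ^ γ * K)) ≤ (1 - ε) * (r ^ γ * P) :=
        mul_le_mul_of_nonneg_left hTlo (by linarith)
      have h3 := mul_le_mul_of_nonneg_right hQlo hrγ.le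
      have hE' := mul_nonneg hE0 hrγ.le
      calc (1 - ε) * ((1-ε) * α₁ * (r ^ γ * K)) ≤ (1 - ε) * (r ^ γ * P) := h2
        _ = ((1 - ε) * P) * r ^ γ := by ring
        _ ≤ Q * r ^ γ := h3
        _ ≤ (E + Q) * r ^ γ := by
            have e : (E+Q) * r ^ γ = E * r ^ γ + Q * r ^ γ := by ring
            linarith
    exact arith_lo ε ε₀ α₁ G M ((E + Q) * r ^ γ) (r ^ γ * K)
      hε hε12 hεM hM hM1 hM2 hM4 hα₁ hG (mul_nonneg hrγ.le hK0) hKKlb.le h1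

/-- **Lemma A.2 (moments near the essential supremum).**  Let `X` have law `μ` on
`[0,1]` with `μ([1-x,1]) ~ α₁ x^γ` as `x ↓ 0`, and let `Ψ : [0,1] → (0,∞)` be
continuous with `Ψ(1) = 1`.  Then `𝙴[X^r / Ψ(X)] ~ α₁ Γ(γ+1) r^{-γ}` as `r → ∞`;
in particular `𝙴[X^r] ~ α₁ Γ(γ+1) r^{-γ}`. -/
theorem moments_near_essential_supremum
    (γ α₁ : ℝ) (hγ : 0 < γ) (hα₁ : 0 < α₁)
    (μ : Measure ℝ) [IsProbabilityMeasure μ]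
    (hμsupp : μ (Set.Icc (0:ℝ) 1)ᶜ = 0)
    (hμreg : Tendsto (fun x : ℝ => (μ (Set.Icc (1 - x) 1)).toReal / (α₁ * x ^ γ))
      (nhdsWithin 0 (Set.Ioi 0)) (nhds 1))
    (Ψ : ℝ → ℝ) (hΨcont : ContinuousOn Ψ (Set.Icc 0 1))
    (hΨpos : ∀ x ∈ Set.Icc (0:ℝ) 1, 0 < Ψ x) (hΨ1 : Ψ 1 = 1) :
    Tendsto (fun r : ℝ => (∫ x, x ^ r / Ψ x ∂μ) /
        (α₁ * Real.Gamma (γ + 1) * r ^ (-γ))) atTop (nhds 1) ∧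
    Tendsto (fun r : ℝ => (∫ x, x ^ r ∂μ) /
        (α₁ * Real.Gamma (γ + 1) * r ^ (-γ))) atTop (nhds 1) := by
  have hc : 0 < α₁ * Real.Gamma (γ + 1) :=
    mul_pos hα₁ (Real.Gamma_pos_of_pos (by linarith))
  have key : ∀ Φ : ℝ → ℝ, ContinuousOn Φ (Set.Icc 0 1) →
      (∀ x ∈ Set.Icc (0:ℝ) 1, 0 < Φ x) → Φ 1 = 1 →
      Tendsto (fun r : ℝ => (∫ x, x ^ r / Φ x ∂μ) /
        (α₁ * Real.Gamma (γ + 1) * r ^ (-γ))) atTop (nhds 1) := by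
    intro Φ hc1 hc2 hc3
    have h := (mainlem γ α₁ hγ hα₁ μ hμsupp hμreg Φ hc1 hc2 hc3).div_const
      (α₁ * Real.Gamma (γ + 1))
    rw [div_self hc.ne'] at h
    refine h.congr' ?_
    filter_upwards [eventually_ge_atTop (1:ℝ)] with r hr
    have hr0 : (0:ℝ) < r := by linarith
    have hrγ : (0:ℝ) < r ^ γ := Real.rpow_pos_of_pos hr0 γ
    rw [Real.rpow_neg hr0.le]
    field_simp
  constructor
  · exact key Ψ hΨcont hΨpos hΨ1
  · have h := key (fun _ => 1) continuousOn_const (fun _ _ => one_pos) rfl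
    refine h.congr (fun r => ?_)
    simp only [div_one]
end

section
/- Let (X_i)_{i≥1} be i.i.d. with law μ and set V_k^(n) := (Σ_{i=1}^n X_i^k)/(X_n^(1))^k for n≥1, k≥0, where X_n^(1) is the maximum of X₁,…,X_n. Then: (a) for every fixed n, the sequence k ↦ V_k^(n) is non-increasing; and (b) if (s_n) is a sequence of positive reals with s_n/(n^{1/γ}·log n) → ∞, then V_{s_n}^(n) → 1 in 𝙿-probability as n→∞. -/
open MeasureTheory ProbabilityTheory Filter Set

namespace VMonoAux

lemma measurable_sup' {ι Ω' : Type*} [MeasurableSpace Ω'] (S : Finset ι) (hS : S.Nonempty)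
    (g : ι → Ω' → ℝ) (hg : ∀ i, Measurable (g i)) :
    Measurable fun ω => S.sup' hS fun i => g i ω := by
  induction hS using Finset.Nonempty.cons_induction with
  | singleton i => simpa using hg i
  | cons i S hi hS ih =>
      rw [show (fun ω => (Finset.cons i S hi).sup' (Finset.cons_nonempty hi) fun j => g j ω)
        = fun ω => g i ω ⊔ S.sup' hS fun j => g j ω from funext fun ω => Finset.sup'_cons hS _]
      exact (hg i).sup ih

lemma biSup_eq_sup' (S : Finset ℕ) (hS : S.Nonempty) (f : ℕ → ℝ) (hf : ∀ i, 0 ≤ f i) :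
    ⨆ i ∈ S, f i = S.sup' hS f := by
  obtain ⟨j0, hj0⟩ := hS
  have hB : ∀ i : ℕ, (⨆ _ : i ∈ S, f i) ≤ S.sup' ⟨j0, hj0⟩ f := by
    intro i
    by_cases hi : i ∈ S
    · rw [ciSup_pos hi]; exact Finset.le_sup' f hi
    · haveI : IsEmpty (i ∈ S) := ⟨hi⟩
      rw [Real.iSup_of_isEmpty]
      exact le_trans (hf j0) (Finset.le_sup' f hj0)
  apply le_antisymm
  · exact ciSup_le hB
  · apply Finset.sup'_le
    intro i hi
    have h1 : f i = ⨆ _ : i ∈ S, f i := (ciSup_pos (f := fun _ => f i) hi).symm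
    rw [h1]
    exact le_ciSup ⟨S.sup' ⟨j0, hj0⟩ f, by rintro x ⟨i, rfl⟩; exact hB i⟩ i

lemma sup'_subtype {S : Finset ℕ} (hne : S.Nonempty) (f : ℕ → ℝ) :
    haveI : Nonempty ↥S := hne.to_subtype
    S.sup' hne f = Finset.univ.sup' Finset.univ_nonempty (fun j : ↥S => f j) := by
  haveI : Nonempty ↥S := hne.to_subtype
  apply le_antisymm
  · apply Finset.sup'_le
    intro i hi
    exact Finset.le_sup' (f := fun j : ↥S => f j) (Finset.mem_univ (⟨i, hi⟩ : ↥S))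
  · apply Finset.sup'_le
    intro j _
    exact Finset.le_sup' f j.2

lemma partA {Y : ℕ → ℝ} (hY : ∀ i, Y i ∈ Set.Icc (0:ℝ) 1) (n : ℕ) (hn : 1 ≤ n) :
    Antitone (fun k : ℕ =>
      (∑ i ∈ Finset.range n, Y i ^ (k : ℝ)) / (⨆ i ∈ Finset.range n, Y i) ^ (k : ℝ)) := by
  intro k l hkl
  simp only [Real.rpow_natCast]
  set M := ⨆ i ∈ Finset.range n, Y i with hMdef
  have hne : (Finset.range n).Nonempty := ⟨0, Finset.mem_range.mpr (by omega)⟩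
  have hM : M = (Finset.range n).sup' hne Y := biSup_eq_sup' _ hne Y fun i => (hY i).1
  have hM1 : M ≤ 1 := by
    rw [hM]; exact Finset.sup'_le _ _ fun i _ => (hY i).2
  have hle : ∀ i ∈ Finset.range n, Y i ≤ M := fun i hi => hM ▸ Finset.le_sup' Y hi
  have hM0 : 0 ≤ M := by
    obtain ⟨j, hj⟩ := hne
    exact le_trans (hY j).1 (hle j hj)
  rcases eq_or_lt_of_le hM0 with h0 | hMpos
  · have hY0 : ∀ i ∈ Finset.range n, Y i = 0 := fun i hi =>
      le_antisymm (h0 ▸ hle i hi) (hY i).1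
    have hsum : ∀ j : ℕ, ∑ i ∈ Finset.range n, Y i ^ j = n * (0:ℝ) ^ j := by
      intro j
      rw [Finset.sum_congr rfl fun i hi => by rw [hY0 i hi]]
      simp [Finset.sum_const]
    rw [hsum k, hsum l, ← h0]
    rcases Nat.eq_zero_or_pos k with rfl | hk
    · rcases Nat.eq_zero_or_pos l with rfl | hl
      · exact le_refl _
      · rw [zero_pow hl.ne', pow_zero]
        simp only [mul_zero, zero_div, mul_one, div_one]
        positivity
    · have hl : 0 < l := lt_of_lt_of_le hk hkl
      simp [zero_pow hl.ne', zero_pow hk.ne']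
  · rw [Finset.sum_div, Finset.sum_div]
    apply Finset.sum_le_sum
    intro i hi
    have ht0 : 0 ≤ Y i / M := div_nonneg (hY i).1 hMpos.le
    have ht1 : Y i / M ≤ 1 := (div_le_one hMpos).mpr (hle i hi)
    have h2 := pow_le_pow_of_le_one ht0 ht1 hkl
    rwa [div_pow, div_pow] at h2

lemma one_sub_rpow_le {t γ : ℝ} (ht0 : 0 ≤ t) (ht1 : t ≤ 1) (hγ : 0 < γ) :
    1 - t ^ γ ≤ max 1 γ * (1 - t) := by
  rcases le_or_gt 1 γ with h1 | h1
  · have hb := one_add_mul_self_le_rpow_one_add (s := t - 1) (by linarith) h1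
    rw [show (1 : ℝ) + (t - 1) = t by ring] at hb
    nlinarith [le_max_right (1:ℝ) γ, sub_nonneg.mpr ht1]
  · rcases eq_or_lt_of_le ht0 with rfl | ht0'
    · rw [Real.zero_rpow hγ.ne']
      nlinarith [le_max_left (1:ℝ) γ]
    · have : t ^ (1:ℝ) ≤ t ^ γ :=
        Real.rpow_le_rpow_of_exponent_ge ht0' ht1 h1.le
      rw [Real.rpow_one] at this
      nlinarith [le_max_left (1:ℝ) γ, sub_nonneg.mpr ht1]

lemma rpow_sub_rpow_le {b c γ : ℝ} (hb : 0 ≤ b) (hbc : b ≤ c) (hc : 0 < c) (hγ : 0 < γ) :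
    c ^ γ - b ^ γ ≤ max 1 γ * c ^ (γ - 1) * (c - b) := by
  have ht0 : 0 ≤ b / c := by positivity
  have ht1 : b / c ≤ 1 := (div_le_one hc).mpr hbc
  have key := one_sub_rpow_le ht0 ht1 hγ
  have hcγ : (0:ℝ) < c ^ γ := Real.rpow_pos_of_pos hc γ
  have h1 : (b / c) ^ γ = b ^ γ / c ^ γ := Real.div_rpow hb hc.le γ
  have h2 : c ^ γ * (1 - b / c) = c ^ (γ - 1) * (c - b) := by
    have : c ^ γ = c ^ (γ - 1) * c := by
      rw [← Real.rpow_add_one hc.ne']; ring_nf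
    rw [this]
    field_simp
  have key2 : c ^ γ * (1 - (b/c) ^ γ) ≤ c ^ γ * (max 1 γ * (1 - b / c)) :=
    mul_le_mul_of_nonneg_left key hcγ.le
  rw [h1] at key2
  calc c ^ γ - b ^ γ = c ^ γ * (1 - b ^ γ / c ^ γ) := by field_simp
    _ ≤ c ^ γ * (max 1 γ * (1 - b / c)) := key2
    _ = max 1 γ * (c ^ γ * (1 - b / c)) := by ring
    _ = max 1 γ * (c ^ (γ - 1) * (c - b)) := by rw [h2]
    _ = max 1 γ * c ^ (γ - 1) * (c - b) := by ring

lemma window_algebra {γ α₁ δ d r : ℝ} (hγ : 0 < γ) (hα₁ : 0 < α₁) (hδ0 : 0 ≤ δ)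
    (hd : 0 < d) (hr : 0 < r) (hdr : d ≤ r / 2)
    {a : ℝ} (ha0 : 0 ≤ a) (har : a ≤ r) :
    (1 + δ) * (α₁ * (a + d) ^ γ) - (1 - δ) * (α₁ * ((1 - d / r) * a) ^ γ) ≤
      max 1 γ * α₁ * max ((r + d) ^ (γ - 1)) (d ^ (γ - 1)) * (2 * d)
        + 2 * δ * (α₁ * (r + d) ^ γ) := by
  set b := (1 - d / r) * a with hbdef
  set c := a + d with hcdef
  have hθ : d / r ≤ 1 / 2 := by rw [div_le_div_iff₀ hr two_pos] at *; linarith [hdr]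
  have hθ0 : 0 ≤ d / r := by positivity
  have hb0 : 0 ≤ b := mul_nonneg (by linarith) ha0
  have hc0 : 0 < c := by simp only [hcdef]; linarith
  have hbc : b ≤ c := by
    have : b ≤ a := by nlinarith
    linarith
  have hcb : c - b ≤ 2 * d := by
    have : (d / r) * a ≤ d := by
      rw [div_mul_eq_mul_div, div_le_iff₀ hr]; nlinarith
    simp only [hbdef, hcdef]; nlinarith
  have hkey := rpow_sub_rpow_le hb0 hbc hc0 hγ
  have hMx : c ^ (γ - 1) ≤ max ((r + d) ^ (γ - 1)) (d ^ (γ - 1)) := by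
    rcases le_or_gt 1 γ with h1 | h1
    · exact le_trans (Real.rpow_le_rpow hc0.le (by simp only [hcdef]; linarith)
        (by linarith)) (le_max_left _ _)
    · exact le_trans (Real.rpow_le_rpow_of_nonpos hd (by simp only [hcdef]; linarith)
        (by linarith)) (le_max_right _ _)
  have hmax1 : (1:ℝ) ≤ max 1 γ := le_max_left _ _
  have hMx0 : (0:ℝ) ≤ max ((r + d) ^ (γ - 1)) (d ^ (γ - 1)) :=
    le_trans (Real.rpow_nonneg (by positivity) _) (le_max_right _ _)
  have hcg : c ^ γ ≤ (r + d) ^ γ :=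
    Real.rpow_le_rpow hc0.le (by simp only [hcdef]; linarith) hγ.le
  have hbg : b ^ γ ≤ (r + d) ^ γ := by
    apply Real.rpow_le_rpow hb0 _ hγ.le
    nlinarith
  have hbg0 : 0 ≤ b ^ γ := Real.rpow_nonneg hb0 _
  have hchain : c ^ γ - b ^ γ ≤
      max 1 γ * max ((r + d) ^ (γ - 1)) (d ^ (γ - 1)) * (2 * d) := by
    calc c ^ γ - b ^ γ ≤ max 1 γ * c ^ (γ - 1) * (c - b) := hkey
      _ ≤ max 1 γ * max ((r + d) ^ (γ - 1)) (d ^ (γ - 1)) * (2 * d) := by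
          apply mul_le_mul
          · exact mul_le_mul_of_nonneg_left hMx (by linarith)
          · exact hcb
          · linarith [hbc]
          · positivity
  nlinarith [mul_le_mul_of_nonneg_left hchain hα₁.le,
    mul_le_mul_of_nonneg_left (add_le_add hcg hbg) (mul_nonneg hδ0 hα₁.le)]

lemma tail_bounds {γ α₁ : ℝ} (hγ : 0 < γ) (hα₁ : 0 < α₁) (μ : Measure ℝ)
    (hμreg : Tendsto (fun x : ℝ => (μ (Set.Icc (1 - x) 1)).toReal / (α₁ * x ^ γ))
      (nhdsWithin 0 (Set.Ioi 0)) (nhds 1))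
    {δ : ℝ} (hδ : 0 < δ) :
    ∃ x₀ > (0:ℝ), ∀ x : ℝ, 0 < x → x ≤ x₀ →
      (1 - δ) * (α₁ * x ^ γ) ≤ (μ (Set.Icc (1 - x) 1)).toReal ∧
      (μ (Set.Icc (1 - x) 1)).toReal ≤ (1 + δ) * (α₁ * x ^ γ) := by
  have h := Metric.tendsto_nhds.mp hμreg δ hδ
  rw [eventually_nhdsWithin_iff] at h
  rw [Metric.eventually_nhds_iff] at h
  obtain ⟨ε, hε, hball⟩ := h
  refine ⟨ε / 2, by positivity, fun x hx hxε => ?_⟩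
  have hdist : dist x 0 < ε := by
    rw [Real.dist_eq, sub_zero, abs_of_pos hx]; linarith
  have hq := hball hdist (mem_Ioi.mpr hx)
  rw [Real.dist_eq] at hq
  have hA : (0:ℝ) < α₁ * x ^ γ := by
    have := Real.rpow_pos_of_pos hx γ
    positivity
  rw [abs_sub_lt_iff] at hq
  obtain ⟨hq1, hq2⟩ := hq
  rw [sub_lt_iff_lt_add, div_lt_iff₀ hA] at hq1
  rw [sub_lt_comm, lt_div_iff₀ hA] at hq2
  constructor
  · nlinarith
  · nlinarith

lemma window_bound {γ α₁ δ d r θ x₀ : ℝ} (hγ : 0 < γ)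
    (μ : Measure ℝ) [IsProbabilityMeasure μ]
    (hx₀ : ∀ x : ℝ, 0 < x → x ≤ x₀ →
      (1 - δ) * (α₁ * x ^ γ) ≤ (μ (Set.Icc (1 - x) 1)).toReal ∧
      (μ (Set.Icc (1 - x) 1)).toReal ≤ (1 + δ) * (α₁ * x ^ γ))
    (hd : 0 < d) (hr : 0 < r) (hθ0 : 0 < θ) (hθ1 : θ < 1) (hrd : r + d ≤ x₀)
    {m : ℝ} (hm1 : 1 - r ≤ m) (hm2 : m ≤ 1) :
    (μ (Set.Icc (m - d) m)).toReal ≤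
      (1 + δ) * (α₁ * ((1 - m) + d) ^ γ) - (1 - δ) * (α₁ * ((1 - θ) * (1 - m)) ^ γ) := by
  set a := 1 - m with hadef
  have ha0 : 0 ≤ a := by simp only [hadef]; linarith
  have har : a ≤ r := by simp only [hadef]; linarith
  rcases eq_or_lt_of_le ha0 with h0 | hapos
  · have hm : m = 1 := by simp only [hadef] at h0; linarith
    have h1 : ((1 - θ) * a) ^ γ = 0 := by
      rw [← h0, mul_zero, Real.zero_rpow hγ.ne']
    rw [h1, mul_zero, mul_zero, sub_zero]
    have h2 := (hx₀ d hd (by linarith)).2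
    rw [hm]
    calc (μ (Set.Icc (1 - d) 1)).toReal ≤ (1 + δ) * (α₁ * d ^ γ) := h2
      _ = (1 + δ) * (α₁ * (a + d) ^ γ) := by rw [← h0, zero_add]
  · have hmd : m - d = 1 - (a + d) := by simp only [hadef]; ring
    have hmid : m < 1 - (1 - θ) * a := by simp only [hadef]; nlinarith
    have hdisj : Disjoint (Set.Icc (m - d) m) (Set.Icc (1 - (1 - θ) * a) 1) := by
      apply Set.disjoint_left.mpr
      rintro x ⟨_, hx2⟩ ⟨hy1, _⟩
      linarith
    have hsub : Set.Icc (m - d) m ∪ Set.Icc (1 - (1 - θ) * a) 1 ⊆ Set.Icc (m - d) 1 := by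
      rintro x (⟨h1, h2⟩ | ⟨h1, h2⟩) <;> exact ⟨by linarith, by linarith⟩
    have hun : μ (Set.Icc (m - d) m) + μ (Set.Icc (1 - (1 - θ) * a) 1) ≤
        μ (Set.Icc (m - d) 1) := by
      rw [← measure_union hdisj measurableSet_Icc]
      exact measure_mono hsub
    have hfin : ∀ s : Set ℝ, μ s ≠ ⊤ := fun s => measure_ne_top μ s
    have htr : (μ (Set.Icc (m - d) m)).toReal + (μ (Set.Icc (1 - (1 - θ) * a) 1)).toReal ≤
        (μ (Set.Icc (m - d) 1)).toReal := by
      rw [← ENNReal.toReal_add (hfin _) (hfin _)]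
      exact ENNReal.toReal_mono (hfin _) hun
    have hup : (μ (Set.Icc (m - d) 1)).toReal ≤ (1 + δ) * (α₁ * (a + d) ^ γ) := by
      rw [hmd]
      exact (hx₀ (a + d) (by linarith) (by linarith)).2
    have hlo : (1 - δ) * (α₁ * ((1 - θ) * a) ^ γ) ≤
        (μ (Set.Icc (1 - (1 - θ) * a) 1)).toReal :=
      (hx₀ ((1 - θ) * a) (by nlinarith) (by nlinarith)).1
    linarith

lemma pair_bound {Ω : Type*} [MeasurableSpace Ω] (Pr : Measure Ω) [IsProbabilityMeasure Pr]
    (μ : Measure ℝ) [SFinite μ] (f g : Ω → ℝ) (hf : Measurable f) (hg : Measurable g)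
    (hind : IndepFun g f Pr) (hflaw : Pr.map f = μ)
    (r d B : ℝ)
    (hB : ∀ m : ℝ, 1 - r ≤ m → m ≤ 1 → μ (Set.Icc (m - d) m) ≤ ENNReal.ofReal B) :
    Pr {ω | (1 - r ≤ g ω ∧ g ω ≤ 1) ∧ g ω - d ≤ f ω ∧ f ω ≤ g ω} ≤ ENNReal.ofReal B := by
  set S : Set (ℝ × ℝ) := {p | (1 - r ≤ p.1 ∧ p.1 ≤ 1) ∧ p.1 - d ≤ p.2 ∧ p.2 ≤ p.1} with hSdef
  have hSm : MeasurableSet S := by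
    apply MeasurableSet.inter
    · exact (measurableSet_le measurable_const measurable_fst).inter
        (measurableSet_le measurable_fst measurable_const)
    · exact (measurableSet_le (measurable_fst.sub measurable_const) measurable_snd).inter
        (measurableSet_le measurable_snd measurable_fst)
  have hev : {ω | (1 - r ≤ g ω ∧ g ω ≤ 1) ∧ g ω - d ≤ f ω ∧ f ω ≤ g ω}
      = (fun ω => (g ω, f ω)) ⁻¹' S := rfl
  rw [hev, ← Measure.map_apply (hg.prodMk hf) hSm]
  have hmap : Pr.map (fun ω => (g ω, f ω)) = (Pr.map g).prod (Pr.map f) :=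
    (indepFun_iff_map_prod_eq_prod_map_map hg.aemeasurable hf.aemeasurable).mp hind
  rw [hmap, hflaw]
  haveI : IsProbabilityMeasure (Pr.map g) := Measure.isProbabilityMeasure_map hg.aemeasurable
  rw [Measure.prod_apply hSm]
  have hslice : ∀ m : ℝ, μ (Prod.mk m ⁻¹' S) ≤ ENNReal.ofReal B := by
    intro m
    by_cases hm : 1 - r ≤ m ∧ m ≤ 1
    · have : Prod.mk m ⁻¹' S = Set.Icc (m - d) m := by
        ext x
        simp only [hSdef, Set.mem_preimage, Set.mem_setOf_eq, Set.mem_Icc]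
        exact ⟨fun h => h.2, fun h => ⟨hm, h⟩⟩
      rw [this]
      exact hB m hm.1 hm.2
    · have : Prod.mk m ⁻¹' S = ∅ := by
        ext x
        simp only [hSdef, Set.mem_preimage, Set.mem_setOf_eq, Set.mem_empty_iff_false,
          iff_false]
        intro h
        exact hm h.1
      rw [this, measure_empty]
      exact zero_le
  calc ∫⁻ m, μ (Prod.mk m ⁻¹' S) ∂(Pr.map g) ≤ ∫⁻ _, ENNReal.ofReal B ∂(Pr.map g) :=
        lintegral_mono fun m => hslice m
    _ = ENNReal.ofReal B := by rw [lintegral_const, measure_univ, mul_one]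

end VMonoAux

set_option maxHeartbeats 1600000 in
/-- **Lemma A.3(i).**  Let `(X_i)` be i.i.d. with law `μ` on `[0,1]`, regularly varying
at `1` with index `γ`, and set `V_k^{(n)} = (∑_{i<n} X_i^k)/(X_n^{(1)})^k` where
`X_n^{(1)}` is the maximum of `X_1, …, X_n`.  Then almost surely, for each fixed
`n ≥ 1`, the sequence `k ↦ V_k^{(n)}` is non-increasing; and if `s_n ≫ n^{1/γ} log n`
then `V_{s_n}^{(n)} → 1` in `𝙿`-probability. -/
theorem V_monotone_and_converges
    (γ α₁ : ℝ) (hγ : 0 < γ) (hα₁ : 0 < α₁)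
    (μ : Measure ℝ) [IsProbabilityMeasure μ]
    (hμsupp : μ (Set.Icc (0:ℝ) 1)ᶜ = 0)
    (hμreg : Tendsto (fun x : ℝ => (μ (Set.Icc (1 - x) 1)).toReal / (α₁ * x ^ γ))
      (nhdsWithin 0 (Set.Ioi 0)) (nhds 1))
    (Ω : Type*) [MeasurableSpace Ω] (Pr : Measure Ω) [IsProbabilityMeasure Pr]
    (X : ℕ → Ω → ℝ) (hXmeas : ∀ i, Measurable (X i))
    (hXlaw : ∀ i, Measure.map (X i) Pr = μ)
    (hXindep : iIndepFun X Pr)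
    (V : ℕ → ℝ → Ω → ℝ)
    (hV : ∀ n s ω, V n s ω =
      (∑ i ∈ Finset.range n, X i ω ^ s) / (⨆ i ∈ Finset.range n, X i ω) ^ s) :
    (∀ᵐ ω ∂Pr, ∀ n : ℕ, 1 ≤ n → Antitone (fun k : ℕ => V n k ω)) ∧
    ∀ s : ℕ → ℝ, (∀ n, 0 < s n) →
      Tendsto (fun n : ℕ => s n / ((n : ℝ) ^ (1/γ) * Real.log n)) atTop atTop →
      ∀ ε > (0:ℝ),
        Tendsto (fun n : ℕ => Pr {ω | ε < |V n (s n) ω - 1|}) atTop (nhds 0) := by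
  classical
  -- the almost sure good event
  have hgood : ∀ᵐ ω ∂Pr, ∀ i, X i ω ∈ Set.Icc (0:ℝ) 1 := by
    rw [ae_all_iff]
    intro i
    have h0 : Pr (X i ⁻¹' (Set.Icc (0:ℝ) 1)ᶜ) = 0 := by
      rw [← Measure.map_apply (hXmeas i) measurableSet_Icc.compl, hXlaw i, hμsupp]
    rw [ae_iff]
    convert h0 using 2
    rfl
  constructor
  · -- Part (a)
    filter_upwards [hgood] with ω hω n hn
    have h := VMonoAux.partA (Y := fun i => X i ω) hω n hn
    have heq : (fun k : ℕ => V n k ω) = fun k : ℕ =>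
        (∑ i ∈ Finset.range n, X i ω ^ (k : ℝ)) /
          (⨆ i ∈ Finset.range n, X i ω) ^ (k : ℝ) :=
      funext fun k => hV n k ω
    rw [heq]
    exact h
  · -- Part (b)
    intro s hs hL ε hε
    rw [ENNReal.tendsto_atTop_zero]
    intro ε' hε'
    rcases eq_or_ne ε' ⊤ with rfl | hεtop
    · exact ⟨0, fun n _ => le_top⟩
    -- real target
    set δ' : ℝ := min 1 ε'.toReal with hδ'def
    have hδ'pos : 0 < δ' := lt_min one_pos (ENNReal.toReal_pos hε'.ne' hεtop)
    have hδ'le : ENNReal.ofReal δ' ≤ ε' := by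
      calc ENNReal.ofReal δ' ≤ ENNReal.ofReal ε'.toReal :=
            ENNReal.ofReal_le_ofReal (min_le_right _ _)
        _ = ε' := ENNReal.ofReal_toReal hεtop
    -- constants
    set K : ℝ := max 1 ((2 / α₁) * Real.log (2 / δ')) with hKdef
    have hK1 : (1:ℝ) ≤ K := le_max_left _ _
    have hK0 : (0:ℝ) < K := lt_of_lt_of_le one_pos hK1
    have hKexp : Real.exp (-(α₁ * K / 2)) ≤ δ' / 2 := by
      have h1 : (2 / α₁) * Real.log (2 / δ') ≤ K := le_max_right _ _
      have h2 : Real.log (2 / δ') ≤ α₁ * K / 2 := by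
        rw [div_mul_eq_mul_div, div_le_iff₀ hα₁] at h1
        nlinarith
      calc Real.exp (-(α₁ * K / 2)) ≤ Real.exp (-(Real.log (2 / δ'))) :=
            Real.exp_le_exp.mpr (by linarith)
        _ = δ' / 2 := by
            rw [Real.exp_neg, Real.exp_log (by positivity)]
            rw [inv_div]
    set δ : ℝ := min (1/2) (δ' / (8 * α₁ * (3/2) ^ γ * K + 1)) with hδdef
    have hCγ : (0:ℝ) < (3/2 : ℝ) ^ γ := Real.rpow_pos_of_pos (by norm_num) γ
    have hδpos : 0 < δ := lt_min (by norm_num) (by positivity)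
    have hδhalf : δ ≤ 1/2 := min_le_left _ _
    obtain ⟨x₀, hx₀pos, hx₀⟩ := VMonoAux.tail_bounds hγ hα₁ μ hμreg hδpos
    -- per-n quantities
    set r : ℕ → ℝ := fun n => (K / n) ^ (1/γ) with hrdef
    set d : ℕ → ℝ := fun n => 2 * Real.log n / s n with hddef
    set L : ℕ → ℝ := fun n => s n / ((n : ℝ) ^ (1/γ) * Real.log n) with hLdef
    set Mx : ℕ → ℝ := fun n => max ((r n + d n) ^ (γ - 1)) ((d n) ^ (γ - 1)) with hMxdef
    set B : ℕ → ℝ := fun n =>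
      max 1 γ * α₁ * Mx n * (2 * d n) + 2 * δ * (α₁ * (r n + d n) ^ γ) with hBdef
    -- positivity facts
    have hnpos : ∀ n : ℕ, 1 ≤ n → (0:ℝ) < n := fun n hn => by exact_mod_cast hn
    have hrpos : ∀ n : ℕ, 1 ≤ n → 0 < r n := fun n hn =>
      Real.rpow_pos_of_pos (by positivity) _
    have hnrγ : ∀ n : ℕ, 1 ≤ n → (n:ℝ) * (r n) ^ γ = K := by
      intro n hn
      have hn0 : (0:ℝ) < n := hnpos n hn
      have h1 : (r n) ^ γ = K / n := by
        rw [hrdef]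
        dsimp only
        rw [← Real.rpow_mul (by positivity : (0:ℝ) ≤ K / n),
          one_div, inv_mul_cancel₀ hγ.ne', Real.rpow_one]
      rw [h1]
      field_simp
    have hlogpos : ∀ n : ℕ, 2 ≤ n → 0 < Real.log n := by
      intro n hn
      apply Real.log_pos
      exact_mod_cast Nat.lt_of_lt_of_le Nat.one_lt_two hn
    have hdpos : ∀ n : ℕ, 2 ≤ n → 0 < d n := by
      intro n hn
      rw [hddef]
      have := hlogpos n hn
      have := hs n
      positivity
    have hLpos : ∀ n : ℕ, 2 ≤ n → 0 < L n := by
      intro n hn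
      rw [hLdef]
      have := hlogpos n hn
      have h2 : (0:ℝ) < (n:ℝ) ^ (1/γ) := Real.rpow_pos_of_pos (by positivity) _
      have := hs n
      positivity
    have hdeq : ∀ n : ℕ, 2 ≤ n → d n = 2 / (L n * (n:ℝ) ^ (1/γ)) := by
      intro n hn
      have hlog := hlogpos n hn
      have hsn := hs n
      have h2 : (0:ℝ) < (n:ℝ) ^ (1/γ) := Real.rpow_pos_of_pos (by positivity) _
      rw [hddef, hLdef]
      dsimp only
      rw [div_mul_eq_mul_div, div_div_eq_mul_div]
      rw [div_eq_div_iff (by positivity) (by positivity)]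
      ring
    have hrval : ∀ n : ℕ, 1 ≤ n → r n = K ^ (1/γ) / (n:ℝ) ^ (1/γ) := by
      intro n hn
      rw [hrdef]
      dsimp only
      exact Real.div_rpow hK0.le (Nat.cast_nonneg n) _
    have hθeq : ∀ n : ℕ, 2 ≤ n → d n / r n = (2 / K ^ (1/γ)) * (L n)⁻¹ := by
      intro n hn
      have h2 : (0:ℝ) < (n:ℝ) ^ (1/γ) :=
        Real.rpow_pos_of_pos (by have := hnpos n (by omega); positivity) _
      have hKγ : (0:ℝ) < K ^ (1/γ) := Real.rpow_pos_of_pos hK0 _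
      have hLp := hLpos n hn
      rw [hdeq n hn, hrval n (by omega)]
      field_simp
    -- limits
    have hLinv : Tendsto (fun n => (L n)⁻¹) atTop (nhds 0) := by
      have := hL.inv_tendsto_atTop
      simpa [Pi.inv_def] using this
    have hLγinv : Tendsto (fun n => ((L n) ^ γ)⁻¹) atTop (nhds 0) := by
      have h1 : Tendsto (fun n => (L n) ^ γ) atTop atTop :=
        (tendsto_rpow_atTop hγ).comp hL
      have := h1.inv_tendsto_atTop
      simpa [Pi.inv_def] using this
    have hr0 : Tendsto r atTop (nhds 0) := by
      have h1 : Tendsto (fun n : ℕ => K / (n:ℝ)) atTop (nhds 0) :=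
        tendsto_const_div_atTop_nhds_zero_nat K
      have h2 : ContinuousAt (fun x : ℝ => x ^ (1/γ)) 0 :=
        Real.continuousAt_rpow_const 0 (1/γ) (Or.inr (by positivity))
      have h3 : Tendsto (fun n : ℕ => (K / (n:ℝ)) ^ (1/γ)) atTop (nhds ((0:ℝ) ^ (1/γ))) :=
        h2.tendsto.comp h1
      rw [Real.zero_rpow (one_div_pos.mpr hγ).ne'] at h3
      rw [hrdef]
      exact h3
    have hd0 : Tendsto d atTop (nhds 0) := by
      apply tendsto_of_tendsto_of_tendsto_of_le_of_le'
        (tendsto_const_nhds (x := (0:ℝ))) (by simpa using hLinv.const_mul (2:ℝ))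
      · filter_upwards [eventually_ge_atTop 2] with n hn
        exact (hdpos n hn).le
      · filter_upwards [eventually_ge_atTop 2, hL.eventually_ge_atTop 1] with n hn hL1
        have h2 : (1:ℝ) ≤ (n:ℝ) ^ (1/γ) := by
          have h2' := Real.rpow_le_rpow zero_le_one
            (show (1:ℝ) ≤ (n:ℝ) by exact_mod_cast (by omega : 1 ≤ n))
            (by positivity : (0:ℝ) ≤ 1/γ)
          rwa [Real.one_rpow] at h2'
        have hLp := hLpos n hn
        rw [hdeq n hn]
        have h5 : 2 * (L n)⁻¹ = 2 / (L n * 1) := by field_simp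
        rw [h5]
        apply div_le_div_of_nonneg_left (by norm_num) (by positivity)
        nlinarith

    -- constants for E7
    set C₂ : ℝ := max 1 ((3/2 : ℝ) ^ (γ - 1)) with hC₂def
    have hC₂pos : (0:ℝ) < C₂ := lt_of_lt_of_le one_pos (le_max_left _ _)
    set c4 : ℝ := max 1 γ * α₁ * 2 with hc4def
    have hmax1γpos : (0:ℝ) < max 1 γ := lt_of_lt_of_le one_pos (le_max_left _ _)
    have hc4pos : 0 < c4 := by rw [hc4def]; positivity
    set e : ℕ → ℝ := fun n =>
      (2:ℝ) ^ γ * ((L n) ^ γ)⁻¹ + C₂ * K * ((2 / K ^ (1/γ)) * (L n)⁻¹) with hedef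
    have he0 : Tendsto e atTop (nhds 0) := by
      have h1 := hLγinv.const_mul ((2:ℝ) ^ γ)
      have h2 := (hLinv.const_mul ((2:ℝ) / K ^ (1/γ))).const_mul (C₂ * K)
      have h3 := h1.add h2
      rw [hedef]
      simpa [mul_assoc] using h3
    have hθten : Tendsto (fun n => d n / r n) atTop (nhds 0) := by
      have h1 := hLinv.const_mul ((2:ℝ) / K ^ (1/γ))
      rw [mul_zero] at h1
      apply h1.congr'
      filter_upwards [eventually_ge_atTop 2] with n hn
      exact (hθeq n hn).symm
    have E5 : ∀ᶠ n : ℕ in atTop, d n / r n ≤ 1/2 :=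
      hθten.eventually_le_const (by norm_num)
    have E5' : ∀ᶠ n : ℕ in atTop, d n ≤ r n / 2 := by
      filter_upwards [E5, eventually_ge_atTop 2] with n h1 h2
      have hr := hrpos n (by omega)
      rw [div_le_div_iff₀ (by positivity) two_pos] at h1
      linarith
    have E4 : ∀ᶠ n : ℕ in atTop, r n ≤ 1/4 := hr0.eventually_le_const (by norm_num)
    have E3 : ∀ᶠ n : ℕ in atTop, r n + d n ≤ x₀ := by
      have h00 : Tendsto (fun n => r n + d n) atTop (nhds 0) := by
        simpa using hr0.add hd0
      exact h00.eventually_le_const hx₀pos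
    have E6 : ∀ᶠ n : ℕ in atTop, ((n:ℝ))⁻¹ < ε/2 := by
      have h1 : Tendsto (fun n : ℕ => ((n:ℝ))⁻¹) atTop (nhds 0) := by
        simpa [one_div] using tendsto_const_div_atTop_nhds_zero_nat (1:ℝ)
      exact h1.eventually_lt_const (by positivity)
    -- E7 : the window sum term
    have hE7a : ∀ᶠ n : ℕ in atTop, (n:ℝ) * d n * Mx n ≤ e n := by
      filter_upwards [eventually_ge_atTop 2, hL.eventually_ge_atTop 1, E5'] with n hn2 hL1 hdr2
      have hn1 : 1 ≤ n := by omega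
      have hr := hrpos n hn1
      have hd := hdpos n hn2
      have hLp := hLpos n hn2
      have hn0 : (0:ℝ) < n := hnpos n hn1
      have hnrpowpos : (0:ℝ) < (n:ℝ) ^ (1/γ) := Real.rpow_pos_of_pos hn0 _
      have hnpow : ((n:ℝ) ^ (1/γ)) ^ γ = (n:ℝ) := by
        rw [← Real.rpow_mul hn0.le, one_div, inv_mul_cancel₀ hγ.ne', Real.rpow_one]
      have hnd : (n:ℝ) * (d n) ^ γ = (2:ℝ) ^ γ * ((L n) ^ γ)⁻¹ := by
        rw [hdeq n hn2, Real.div_rpow (by norm_num) (by positivity),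
          Real.mul_rpow hLp.le hnrpowpos.le, hnpow]
        have hLγ : (0:ℝ) < (L n) ^ γ := Real.rpow_pos_of_pos hLp _
        field_simp
      have hdd : d n * (d n) ^ (γ - 1) = (d n) ^ γ := by
        rw [mul_comm, ← Real.rpow_add_one hd.ne']
        ring_nf
      have hrr : r n * (r n) ^ (γ - 1) = (r n) ^ γ := by
        rw [mul_comm, ← Real.rpow_add_one hr.ne']
        ring_nf
      have hbr2 : (n:ℝ) * d n * (d n) ^ (γ - 1) = (2:ℝ) ^ γ * ((L n) ^ γ)⁻¹ := by
        rw [mul_assoc, hdd, hnd]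
      have hC2b : (r n + d n) ^ (γ - 1) ≤ C₂ * (r n) ^ (γ - 1) := by
        rcases le_or_gt 1 γ with h1 | h1
        · calc (r n + d n) ^ (γ - 1) ≤ ((3/2) * r n) ^ (γ - 1) :=
                Real.rpow_le_rpow (by positivity) (by linarith) (by linarith)
            _ = (3/2 : ℝ) ^ (γ - 1) * (r n) ^ (γ - 1) :=
                Real.mul_rpow (by norm_num) hr.le
            _ ≤ C₂ * (r n) ^ (γ - 1) :=
                mul_le_mul_of_nonneg_right (le_max_right _ _) (Real.rpow_nonneg hr.le _)
        · calc (r n + d n) ^ (γ - 1) ≤ (r n) ^ (γ - 1) :=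
                Real.rpow_le_rpow_of_nonpos hr (by linarith) (by linarith)
            _ ≤ C₂ * (r n) ^ (γ - 1) := by
                nlinarith [Real.rpow_nonneg hr.le (γ - 1),
                  le_max_left (1:ℝ) ((3/2:ℝ) ^ (γ - 1))]
      have hndr : (n:ℝ) * d n * (r n) ^ (γ - 1) = K * (d n / r n) := by
        have h9 : (n:ℝ) * d n * (r n) ^ (γ - 1) = ((n:ℝ) * (r n) ^ γ) * (d n / r n) := by
          rw [← hrr]
          field_simp
        rw [h9, hnrγ n hn1]
      have hbr1 : (n:ℝ) * d n * (r n + d n) ^ (γ - 1) ≤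
          C₂ * K * ((2 / K ^ (1/γ)) * (L n)⁻¹) := by
        calc (n:ℝ) * d n * (r n + d n) ^ (γ - 1) ≤
              (n:ℝ) * d n * (C₂ * (r n) ^ (γ - 1)) :=
              mul_le_mul_of_nonneg_left hC2b (by positivity)
          _ = C₂ * ((n:ℝ) * d n * (r n) ^ (γ - 1)) := by ring
          _ = C₂ * (K * (d n / r n)) := by rw [hndr]
          _ = C₂ * K * ((2 / K ^ (1/γ)) * (L n)⁻¹) := by rw [hθeq n hn2]; ring
      have hMx' : (n:ℝ) * d n * Mx n =
          max ((n:ℝ) * d n * (r n + d n) ^ (γ - 1)) ((n:ℝ) * d n * (d n) ^ (γ - 1)) := by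
        rw [hMxdef]
        dsimp only
        exact mul_max_of_nonneg _ _ (by positivity)
      rw [hMx', hedef]
      apply max_le
      · have h0 : (0:ℝ) ≤ (2:ℝ) ^ γ * ((L n) ^ γ)⁻¹ := by positivity
        dsimp only
        linarith [hbr1]
      · have h0 : (0:ℝ) ≤ C₂ * K * ((2 / K ^ (1/γ)) * (L n)⁻¹) := by positivity
        dsimp only
        linarith [hbr2.le]
    have E7 : ∀ᶠ n : ℕ in atTop, c4 * ((n:ℝ) * d n * Mx n) ≤ δ'/4 := by
      have hev := he0.eventually_le_const (show (0:ℝ) < δ'/(4*c4) by positivity)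
      filter_upwards [hE7a, hev, eventually_ge_atTop 2] with n h1 h2 hn2
      calc c4 * ((n:ℝ) * d n * Mx n) ≤ c4 * (δ'/(4*c4)) :=
            mul_le_mul_of_nonneg_left (le_trans h1 h2) hc4pos.le
        _ = δ'/4 := by field_simp
    have E8 : ∀ᶠ n : ℕ in atTop, (n:ℝ) * (1 - d n) ^ (s n) < ε/2 := by
      filter_upwards [eventually_ge_atTop 2, E5', E4, E6] with n hn2 h5 h4 h6
      have hd := hdpos n hn2
      have hd1 : d n ≤ 1/8 := by
        have hr := hrpos n (by omega)
        linarith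
      have hn0 : (0:ℝ) < n := hnpos n (by omega)
      have h1 : (1 - d n) ≤ Real.exp (-(d n)) := by
        nlinarith [Real.add_one_le_exp (-(d n))]
      have h2 : (1 - d n) ^ (s n) ≤ Real.exp (-(d n)) ^ (s n) :=
        Real.rpow_le_rpow (by linarith) h1 (hs n).le
      have h3 : Real.exp (-(d n)) ^ (s n) = Real.exp (-(d n) * s n) := by
        rw [← Real.exp_mul]
      have h4' : -(d n) * s n = Real.log (n:ℝ) * (-2) := by
        rw [hddef]
        dsimp only
        have hsne := (hs n).ne'
        field_simp
      have h5' : Real.exp (Real.log (n:ℝ) * (-2)) = (n:ℝ) ^ (-2:ℝ) :=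
        (Real.rpow_def_of_pos hn0 _).symm
      have h6' : (n:ℝ) * (n:ℝ) ^ (-2:ℝ) = ((n:ℝ))⁻¹ := by
        rw [show (-2:ℝ) = (-1) + (-1) by norm_num, Real.rpow_add hn0,
          Real.rpow_neg_one]
        field_simp
      calc (n:ℝ) * (1 - d n) ^ (s n) ≤ (n:ℝ) * (n:ℝ) ^ (-2:ℝ) := by
            apply mul_le_mul_of_nonneg_left _ hn0.le
            rw [← h5', ← h4', ← h3]
            exact h2
        _ = ((n:ℝ))⁻¹ := h6'
        _ < ε/2 := h6

    -- main estimate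
    have main : ∀ᶠ n : ℕ in atTop, Pr {ω | ε < |V n (s n) ω - 1|} ≤ ε' := by
      filter_upwards [eventually_ge_atTop 2, E3, E4, E5', E7, E8] with n hn2 h3 h4 h5 h7 h8
      have hn1 : 1 ≤ n := by omega
      have hr := hrpos n hn1
      have hd := hdpos n hn2
      have hn0 : (0:ℝ) < n := hnpos n hn1
      have hθpos : 0 < d n / r n := by positivity
      have hθhalf : d n / r n ≤ 1/2 := by
        rw [div_le_iff₀ hr]
        linarith
      have hMx0 : (0:ℝ) ≤ Mx n :=
        le_trans (Real.rpow_nonneg hd.le _) (le_max_right _ _)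
      have hrd0 : (0:ℝ) ≤ (r n + d n) ^ γ := Real.rpow_nonneg (by positivity) _
      have hBnn : 0 ≤ B n := by
        rw [hBdef]
        dsimp only
        have := hmax1γpos
        positivity
      -- the measure-level window bound
      have hwin : ∀ m : ℝ, 1 - r n ≤ m → m ≤ 1 →
          μ (Set.Icc (m - d n) m) ≤ ENNReal.ofReal (B n) := by
        intro m hm1 hm2
        rw [ENNReal.le_ofReal_iff_toReal_le (measure_ne_top μ _) hBnn]
        have hwb := VMonoAux.window_bound (θ := d n / r n) hγ μ hx₀ hd hr hθpos
          (by linarith) h3 hm1 hm2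
        have halg := VMonoAux.window_algebra hγ hα₁ hδpos.le hd hr h5
          (a := 1 - m) (by linarith) (by linarith)
        rw [hBdef, hMxdef]
        dsimp only
        linarith [hwb, halg]
      -- the exceptional events
      have hSe_ne : ∀ i : ℕ, ((Finset.range n).erase i).Nonempty := by
        intro i
        rcases eq_or_ne i 0 with rfl | hne
        · exact ⟨1, Finset.mem_erase.mpr ⟨one_ne_zero, Finset.mem_range.mpr (by omega)⟩⟩
        · exact ⟨0, Finset.mem_erase.mpr ⟨Ne.symm hne, Finset.mem_range.mpr (by omega)⟩⟩
      set Mex : ℕ → Ω → ℝ := fun i ω =>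
        ((Finset.range n).erase i).sup' (hSe_ne i) fun j => X j ω with hMexdef
      have hMexMeas : ∀ i, Measurable (Mex i) := fun i =>
        VMonoAux.measurable_sup' _ _ _ hXmeas
      set E : ℕ → Set Ω := fun i => {ω | (1 - r n ≤ Mex i ω ∧ Mex i ω ≤ 1) ∧
        Mex i ω - d n ≤ X i ω ∧ X i ω ≤ Mex i ω} with hEdef
      -- the key inclusion
      have hincl : {ω | ε < |V n (s n) ω - 1|} ⊆
          {ω | ¬ ∀ i, X i ω ∈ Set.Icc (0:ℝ) 1} ∪
          ((⋂ i ∈ Finset.range n, X i ⁻¹' Set.Iio (1 - r n)) ∪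
            ⋃ i ∈ Finset.range n, E i) := by
        intro ω hω
        by_cases h1 : ∀ i, X i ω ∈ Set.Icc (0:ℝ) 1
        swap
        · exact Or.inl h1
        by_cases h2 : ∀ i ∈ Finset.range n, X i ω < 1 - r n
        · refine Or.inr (Or.inl ?_)
          simp only [Set.mem_iInter, Set.mem_preimage, Set.mem_Iio]
          exact h2
        refine Or.inr (Or.inr ?_)
        by_contra h3'
        rw [Set.mem_iUnion₂] at h3'
        push_neg at h3'
        push_neg at h2
        obtain ⟨i1, hi1mem, hi1⟩ := h2
        have hgd := h1
        have hneR : (Finset.range n).Nonempty := ⟨0, Finset.mem_range.mpr (by omega)⟩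
        set M : ℝ := (Finset.range n).sup' hneR (fun j => X j ω) with hMdef
        have hbiSup : (⨆ i ∈ Finset.range n, X i ω) = M :=
          VMonoAux.biSup_eq_sup' _ hneR _ fun i => (hgd i).1
        have hXleM : ∀ j ∈ Finset.range n, X j ω ≤ M := fun j hj => by
          rw [hMdef]
          exact Finset.le_sup' (fun j => X j ω) hj
        have hM_ge : 1 - r n ≤ M := le_trans hi1 (hXleM i1 hi1mem)
        have hM_le1 : M ≤ 1 := Finset.sup'_le _ _ fun j _ => (hgd j).2
        have hMpos : 0 < M := by linarith
        obtain ⟨i0, hi0mem, hi0pre⟩ := Finset.exists_mem_eq_sup' hneR (fun j => X j ω)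
        have hi0 : M = X i0 ω := by rw [hMdef]; exact hi0pre
        have hMs : (0:ℝ) < M ^ (s n) := Real.rpow_pos_of_pos hMpos _
        have hMex_eq : ∀ i ∈ Finset.range n, i ≠ i0 → Mex i ω = M := by
          intro i himem hine
          apply le_antisymm
          · exact Finset.sup'_le _ _ fun j hj => hXleM j (Finset.mem_of_mem_erase hj)
          · rw [hi0]
            exact Finset.le_sup' (fun j => X j ω)
              (Finset.mem_erase.mpr ⟨Ne.symm hine, hi0mem⟩)
        have hterm : ∀ i ∈ (Finset.range n).erase i0,
            X i ω ^ (s n) / M ^ (s n) ≤ (1 - d n) ^ (s n) := by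
          intro i hi
          obtain ⟨hine, himem⟩ := Finset.mem_erase.mp hi
          have hMex := hMex_eq i himem hine
          have hnE := h3' i himem
          have hXle : X i ω ≤ M := hXleM i himem
          have hXlt : X i ω < M - d n := by
            by_contra hge
            push_neg at hge
            apply hnE
            exact ⟨⟨by rw [hMex]; exact hM_ge, by rw [hMex]; exact hM_le1⟩,
              by rw [hMex]; linarith, by rw [hMex]; exact hXle⟩
          have hfr0 : (0:ℝ) ≤ X i ω / M := div_nonneg (hgd i).1 hMpos.le
          have hstep1 : X i ω / M ≤ (M - d n) / M := by
            gcongr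
          have hstep2 : (M - d n) / M ≤ 1 - d n := by
            rw [div_le_iff₀ hMpos]
            nlinarith
          have hfr0' : (0:ℝ) ≤ (M - d n) / M := le_trans hfr0 hstep1
          calc X i ω ^ (s n) / M ^ (s n) = (X i ω / M) ^ (s n) :=
                (Real.div_rpow (hgd i).1 hMpos.le _).symm
            _ ≤ ((M - d n) / M) ^ (s n) := Real.rpow_le_rpow hfr0 hstep1 (hs n).le
            _ ≤ (1 - d n) ^ (s n) := Real.rpow_le_rpow hfr0' hstep2 (hs n).le
        have hVval : V n (s n) ω - 1 =
            (∑ i ∈ (Finset.range n).erase i0, X i ω ^ (s n)) / M ^ (s n) := by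
          rw [hV n (s n) ω, hbiSup, ← Finset.add_sum_erase _ _ hi0mem, ← hi0,
            add_div, div_self hMs.ne']
          ring
        have hnn : 0 ≤ (∑ i ∈ (Finset.range n).erase i0, X i ω ^ (s n)) / M ^ (s n) := by
          apply div_nonneg _ hMs.le
          exact Finset.sum_nonneg fun i _ => Real.rpow_nonneg (hgd i).1 _
        have hbound : (∑ i ∈ (Finset.range n).erase i0, X i ω ^ (s n)) / M ^ (s n) ≤
            (n:ℝ) * (1 - d n) ^ (s n) := by
          rw [Finset.sum_div]
          calc ∑ i ∈ (Finset.range n).erase i0, X i ω ^ (s n) / M ^ (s n) ≤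
                ∑ _i ∈ (Finset.range n).erase i0, (1 - d n) ^ (s n) :=
                Finset.sum_le_sum hterm
            _ = ((Finset.range n).erase i0).card * (1 - d n) ^ (s n) := by
                rw [Finset.sum_const, nsmul_eq_mul]
            _ ≤ (n:ℝ) * (1 - d n) ^ (s n) := by
                apply mul_le_mul_of_nonneg_right _ (Real.rpow_nonneg (by linarith) _)
                have hcard : ((Finset.range n).erase i0).card ≤ n := by
                  calc ((Finset.range n).erase i0).card ≤ (Finset.range n).card :=
                        Finset.card_le_card (Finset.erase_subset _ _)
                    _ = n := Finset.card_range n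
                exact_mod_cast hcard
        have hωε : ε < |V n (s n) ω - 1| := hω
        rw [hVval, abs_of_nonneg hnn] at hωε
        linarith
      -- measure bounds
      refine le_trans (measure_mono hincl) ?_
      refine le_trans (measure_union_le _ _) ?_
      have hB1 : Pr {ω | ¬ ∀ i, X i ω ∈ Set.Icc (0:ℝ) 1} = 0 := ae_iff.mp hgood
      have hlow : Pr (⋂ i ∈ Finset.range n, X i ⁻¹' Set.Iio (1 - r n)) ≤
          ENNReal.ofReal (δ'/2) := by
        have hprod := hXindep.measure_inter_preimage_eq_mul (Finset.range n)
          (sets := fun _ => Set.Iio (1 - r n)) fun i _ => measurableSet_Iio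
        rw [hprod]
        have hfac : ∀ i : ℕ, Pr (X i ⁻¹' Set.Iio (1 - r n)) = μ (Set.Iio (1 - r n)) :=
          fun i => by rw [← hXlaw i, Measure.map_apply (hXmeas i) measurableSet_Iio]
        rw [Finset.prod_congr rfl fun i _ => hfac i, Finset.prod_const, Finset.card_range]
        have hIci : (1 - δ) * (α₁ * (r n) ^ γ) ≤ (μ (Set.Ici (1 - r n))).toReal := by
          refine le_trans (hx₀ (r n) hr (by linarith)).1 ?_
          exact ENNReal.toReal_mono (measure_ne_top μ _)
            (measure_mono Set.Icc_subset_Ici_self)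
        have hsplit : (μ (Set.Iio (1 - r n))).toReal =
            1 - (μ (Set.Ici (1 - r n))).toReal := by
          have hcompl := measure_add_measure_compl (μ := μ)
            (measurableSet_Ici (a := 1 - r n))
          rw [compl_Ici, measure_univ] at hcompl
          have h' := congrArg ENNReal.toReal hcompl
          rw [ENNReal.toReal_add (measure_ne_top μ _) (measure_ne_top μ _),
            ENNReal.toReal_one] at h'
          linarith
        have ht1 : (μ (Set.Iio (1 - r n))).toReal ≤
            Real.exp (-((1 - δ) * (α₁ * (r n) ^ γ))) := by
          have h' : (μ (Set.Iio (1 - r n))).toReal ≤ 1 - (1 - δ) * (α₁ * (r n) ^ γ) := by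
            rw [hsplit]; linarith
          refine le_trans h' ?_
          nlinarith [Real.add_one_le_exp (-((1 - δ) * (α₁ * (r n) ^ γ)))]
        have hμIio : μ (Set.Iio (1 - r n)) ≤
            ENNReal.ofReal (Real.exp (-((1 - δ) * (α₁ * (r n) ^ γ)))) := by
          rw [ENNReal.le_ofReal_iff_toReal_le (measure_ne_top μ _) (Real.exp_nonneg _)]
          exact ht1
        calc μ (Set.Iio (1 - r n)) ^ n ≤
              (ENNReal.ofReal (Real.exp (-((1 - δ) * (α₁ * (r n) ^ γ))))) ^ n :=
              pow_le_pow_left' hμIio n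
          _ = ENNReal.ofReal (Real.exp (-((1 - δ) * (α₁ * (r n) ^ γ))) ^ n) :=
              (ENNReal.ofReal_pow (Real.exp_nonneg _) n).symm
          _ = ENNReal.ofReal (Real.exp ((n:ℝ) * (-((1 - δ) * (α₁ * (r n) ^ γ))))) := by
              rw [Real.exp_nat_mul]
          _ ≤ ENNReal.ofReal (δ'/2) := by
              apply ENNReal.ofReal_le_ofReal
              have heq : (n:ℝ) * (-((1 - δ) * (α₁ * (r n) ^ γ))) =
                  -((1 - δ) * α₁ * ((n:ℝ) * (r n) ^ γ)) := by ring
              rw [heq, hnrγ n hn1]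
              calc Real.exp (-((1 - δ) * α₁ * K)) ≤ Real.exp (-(α₁ * K / 2)) := by
                    apply Real.exp_le_exp.mpr
                    nlinarith [mul_nonneg (mul_pos hα₁ hK0).le
                      (by linarith : (0:ℝ) ≤ 1/2 - δ)]
                _ ≤ δ'/2 := hKexp
      have hiE : Pr (⋃ i ∈ Finset.range n, E i) ≤ ENNReal.ofReal ((n:ℝ) * B n) := by
        refine le_trans (measure_biUnion_finset_le _ _) ?_
        have hEbound : ∀ i ∈ Finset.range n, Pr (E i) ≤ ENNReal.ofReal (B n) := by
          intro i _
          have hne_i : i ∉ (Finset.range n).erase i := Finset.notMem_erase i _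
          have hind0 := hXindep.indepFun_finset ((Finset.range n).erase i) {i}
            (by simp [Finset.disjoint_singleton_right, hne_i]) hXmeas
          haveI : Nonempty ((Finset.range n).erase i : Finset ℕ) := (hSe_ne i).to_subtype
          have hφmeas : Measurable (fun v : ((Finset.range n).erase i : Finset ℕ) → ℝ =>
              Finset.univ.sup' Finset.univ_nonempty fun j => v j) :=
            VMonoAux.measurable_sup' _ _ _ fun j => measurable_pi_apply j
          have hψmeas : Measurable (fun v : ({i} : Finset ℕ) → ℝ =>
              v ⟨i, Finset.mem_singleton_self i⟩) := measurable_pi_apply _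
          have hind1 := hind0.comp hφmeas hψmeas
          have hgeq : ((fun v : ((Finset.range n).erase i : Finset ℕ) → ℝ =>
              Finset.univ.sup' Finset.univ_nonempty fun j => v j) ∘
              fun ω (j : ((Finset.range n).erase i : Finset ℕ)) => X j ω) = Mex i := by
            funext ω
            exact (VMonoAux.sup'_subtype (hSe_ne i) fun j => X j ω).symm
          have hfeq : ((fun v : ({i} : Finset ℕ) → ℝ =>
              v ⟨i, Finset.mem_singleton_self i⟩) ∘
              fun ω (j : ({i} : Finset ℕ)) => X j ω) = X i := rfl
          rw [hgeq, hfeq] at hind1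
          exact VMonoAux.pair_bound Pr μ (X i) (Mex i) (hXmeas i) (hMexMeas i)
            hind1 (hXlaw i) (r n) (d n) (B n) hwin
        calc ∑ i ∈ Finset.range n, Pr (E i) ≤
              ∑ _i ∈ Finset.range n, ENNReal.ofReal (B n) := Finset.sum_le_sum hEbound
          _ = (n : ENNReal) * ENNReal.ofReal (B n) := by
              rw [Finset.sum_const, Finset.card_range, nsmul_eq_mul]
          _ = ENNReal.ofReal ((n:ℝ) * B n) := by
              rw [ENNReal.ofReal_mul (Nat.cast_nonneg n), ENNReal.ofReal_natCast]
      have hnB : (n:ℝ) * B n ≤ δ'/2 := by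
        have hrd32 : (r n + d n) ^ γ ≤ (3/2 : ℝ) ^ γ * (r n) ^ γ := by
          rw [← Real.mul_rpow (by norm_num) hr.le]
          exact Real.rpow_le_rpow (by positivity) (by linarith) hγ.le
        have h1 : (n:ℝ) * (r n + d n) ^ γ ≤ (3/2 : ℝ) ^ γ * K := by
          calc (n:ℝ) * (r n + d n) ^ γ ≤ (n:ℝ) * ((3/2 : ℝ) ^ γ * (r n) ^ γ) :=
                mul_le_mul_of_nonneg_left hrd32 hn0.le
            _ = (3/2 : ℝ) ^ γ * ((n:ℝ) * (r n) ^ γ) := by ring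
            _ = (3/2 : ℝ) ^ γ * K := by rw [hnrγ n hn1]
        have hδle : δ ≤ δ' / (8 * α₁ * (3/2 : ℝ) ^ γ * K + 1) := min_le_right _ _
        have hδle' : δ * (8 * α₁ * (3/2 : ℝ) ^ γ * K + 1) ≤ δ' := by
          rw [← le_div_iff₀ (by positivity)]
          exact hδle
        have h2nd : 2 * δ * (α₁ * ((n:ℝ) * (r n + d n) ^ γ)) ≤ δ'/4 := by
          have ha : 2 * δ * (α₁ * ((n:ℝ) * (r n + d n) ^ γ)) ≤
              2 * δ * (α₁ * ((3/2 : ℝ) ^ γ * K)) := by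
            apply mul_le_mul_of_nonneg_left _ (by positivity)
            exact mul_le_mul_of_nonneg_left h1 hα₁.le
          nlinarith
        have hexp : (n:ℝ) * B n = c4 * ((n:ℝ) * d n * Mx n) +
            2 * δ * (α₁ * ((n:ℝ) * (r n + d n) ^ γ)) := by
          rw [hBdef, hc4def]
          dsimp only
          ring
        rw [hexp]
        linarith
      calc Pr {ω | ¬ ∀ i, X i ω ∈ Set.Icc (0:ℝ) 1} +
            Pr ((⋂ i ∈ Finset.range n, X i ⁻¹' Set.Iio (1 - r n)) ∪
              ⋃ i ∈ Finset.range n, E i) ≤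
            0 + (ENNReal.ofReal (δ'/2) + ENNReal.ofReal ((n:ℝ) * B n)) := by
            rw [hB1]
            exact add_le_add le_rfl (le_trans (measure_union_le _ _) (add_le_add hlow hiE))
        _ ≤ ENNReal.ofReal (δ'/2) + ENNReal.ofReal (δ'/2) := by
            rw [zero_add]
            exact add_le_add le_rfl (ENNReal.ofReal_le_ofReal hnB)
        _ = ENNReal.ofReal δ' := by
            rw [← ENNReal.ofReal_add (by positivity) (by positivity)]
            norm_num
        _ ≤ ε' := hδ'le
    exact Filter.eventually_atTop.mp main
end

section
/- Let (X_i)_{i≥1} be i.i.d. with law μ, let Ψ:[0,1]→(0,∞) be continuous with Ψ(1)=1, and set U_k^(n) := (k^γ/n)·Σ_{i=1}^n X_i^k/Ψ(X_i) for n≥1, k≥1. If (s_n) is a sequence of positive reals with s_n→∞ and s_n/n^{1/γ} → 0, then U_{s_n}^(n) → α₁Γ(γ+1) in 𝙿-probability as n→∞. -/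
open MeasureTheory ProbabilityTheory Filter Set Topology

lemma ae_mem_Icc (μ : Measure ℝ) (hμsupp : μ (Set.Icc (0:ℝ) 1)ᶜ = 0) :
    ∀ᵐ x ∂μ, x ∈ Icc (0:ℝ) 1 := by
  rw [ae_iff]
  convert hμsupp using 2
  rfl

lemma J_integrable (μ : Measure ℝ) [IsProbabilityMeasure μ]
    (hμsupp : μ (Set.Icc (0:ℝ) 1)ᶜ = 0) {k : ℝ} (hk : 0 < k) :
    Integrable (fun x : ℝ => x ^ k) μ := by
  refine (integrable_const (1:ℝ)).mono' (Real.continuous_rpow_const hk.le).aestronglyMeasurable ?_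
  filter_upwards [ae_mem_Icc μ hμsupp] with x hx
  rw [Real.norm_eq_abs, abs_of_nonneg (Real.rpow_nonneg hx.1 k)]
  exact Real.rpow_le_one hx.1 hx.2 hk.le

lemma J_eq (μ : Measure ℝ) [IsProbabilityMeasure μ]
    (hμsupp : μ (Set.Icc (0:ℝ) 1)ᶜ = 0) {k : ℝ} (hk : 1 ≤ k) :
    ∫ x, x ^ k ∂μ
      = ∫ u in Ioi (0:ℝ), k * u ^ (k - 1) * (μ (Icc u 1)).toReal := by
  have hk0 : (0:ℝ) < k := lt_of_lt_of_le one_pos hk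
  have hae := ae_mem_Icc μ hμsupp
  have hnn : 0 ≤ᵐ[μ] fun x : ℝ => x ^ k := by
    filter_upwards [hae] with x hx; exact Real.rpow_nonneg hx.1 k
  rw [(J_integrable μ hμsupp hk0).integral_eq_integral_meas_le hnn]
  rw [← integral_comp_rpow_Ioi (fun t => μ.real {a : ℝ | t ≤ a ^ k}) hk0.ne']
  refine setIntegral_congr_fun measurableSet_Ioi  fun u hu => ?_
  have hu0 : (0:ℝ) < u := hu
  have hmeq : μ {a : ℝ | u ^ k ≤ a ^ k} = μ (Icc u 1) := by
    rw [← measure_inter_conull hμsupp, ← measure_inter_conull (s := Icc u 1) hμsupp]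
    congr 1
    ext a
    simp only [mem_inter_iff, mem_setOf_eq, mem_Icc]
    constructor
    · rintro ⟨h1, h2, h3⟩
      exact ⟨⟨(Real.rpow_le_rpow_iff hu0.le h2 hk0).mp h1, h3⟩, h2, h3⟩
    · rintro ⟨⟨h1, h3⟩, h2, _⟩
      exact ⟨(Real.rpow_le_rpow_iff hu0.le h2 hk0).mpr h1, h2, h3⟩
  rw [smul_eq_mul, measureReal_def, hmeq, abs_of_pos hk0]

lemma key_eq (μ : Measure ℝ) [IsProbabilityMeasure μ]
    (hμsupp : μ (Set.Icc (0:ℝ) 1)ᶜ = 0) (γ : ℝ) {k : ℝ} (hk : 1 ≤ k) :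
    k ^ γ * ∫ x, x ^ k ∂μ
      = ∫ w in Ioi (0:ℝ), (Ioc (0:ℝ) k).indicator
          (fun w => k ^ γ * ((1 - w / k) ^ (k - 1) * (μ (Icc (1 - w / k) 1)).toReal)) w := by
  have hk0 : (0:ℝ) < k := lt_of_lt_of_le one_pos hk
  set F : ℝ → ℝ := fun u => k ^ γ * (u ^ (k - 1) * (μ (Icc u 1)).toReal) with hF
  have hzero : ∀ u : ℝ, 1 < u → F u = 0 := by
    intro u hu
    simp [hF, Set.Icc_eq_empty (not_le.mpr hu)]
  have hIoiIoc : ∫ u in Ioi (0:ℝ), F u = ∫ u in Ioc (0:ℝ) 1, F u := by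
    refine setIntegral_eq_of_subset_of_ae_diff_eq_zero measurableSet_Ioi.nullMeasurableSet
      Ioc_subset_Ioi_self ?_
    refine Eventually.of_forall fun u hu => hzero u ?_
    rcases hu with ⟨hu1, hu2⟩
    simp only [mem_Ioc, not_and, not_le] at hu2
    exact hu2 hu1
  have lhs_eq : k ^ γ * ∫ x, x ^ k ∂μ = k * ∫ u in (0:ℝ)..1, F u := by
    rw [J_eq μ hμsupp hk, ← integral_const_mul, intervalIntegral.integral_of_le zero_le_one,
      ← hIoiIoc, ← integral_const_mul]
    refine setIntegral_congr_fun measurableSet_Ioi fun u _ => ?_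
    simp only [hF]; ring
  have rhs_eq : (∫ w in Ioi (0:ℝ), (Ioc (0:ℝ) k).indicator
          (fun w => k ^ γ * ((1 - w / k) ^ (k - 1) * (μ (Icc (1 - w / k) 1)).toReal)) w)
      = k * ∫ u in (0:ℝ)..1, F u := by
    rw [setIntegral_indicator measurableSet_Ioc,
      inter_eq_self_of_subset_right Ioc_subset_Ioi_self,
      ← intervalIntegral.integral_of_le hk0.le]
    have : ∀ w : ℝ, k ^ γ * ((1 - w / k) ^ (k - 1) * (μ (Icc (1 - w / k) 1)).toReal)
        = F (1 - (1/k) * w) := by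
      intro w
      rw [one_div, inv_mul_eq_div]
    simp_rw [this]
    rw [intervalIntegral.integral_comp_sub_mul F (one_div_ne_zero hk0.ne') 1]
    have h1 : 1 - 1/k * k = 0 := by field_simp; norm_num
    have h2 : 1 - 1/k * 0 = 1 := by ring
    rw [h1, h2, smul_eq_mul, one_div, inv_inv]
  rw [lhs_eq, rhs_eq]

lemma bound_integrable (γ : ℝ) (hγ : 0 < γ) (C : ℝ) :
    IntegrableOn (fun w : ℝ => C * (w ^ γ * Real.exp (-(w/2)))) (Ioi (0:ℝ)) := by
  have h0 := Real.GammaIntegral_convergent (by linarith : (0:ℝ) < γ + 1)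
  simp only [add_sub_cancel_right] at h0
  have h1 : IntegrableOn (fun w : ℝ => Real.exp (-((1/2) * w)) * ((1/2) * w) ^ γ)
      (Ioi (0:ℝ)) := by
    have := (integrableOn_Ioi_comp_mul_left_iff
      (fun x : ℝ => Real.exp (-x) * x ^ γ) 0 (by norm_num : (0:ℝ) < 1/2)).mpr
    simp only [mul_zero] at this
    exact this h0
  have h1' : IntegrableOn (fun w : ℝ => C * 2 ^ γ * (Real.exp (-((1/2) * w)) * ((1/2) * w) ^ γ))
      (Ioi (0:ℝ)) := h1.const_mul _
  refine h1'.congr_fun (fun w hw => ?_) measurableSet_Ioi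
  · 
    have hw0 : (0:ℝ) < w := hw
    beta_reduce
    rw [Real.mul_rpow (by norm_num) hw0.le]
    have : ((1:ℝ)/2) ^ γ = (2 ^ γ)⁻¹ := by
      rw [one_div, Real.inv_rpow (by norm_num : (0:ℝ) ≤ 2)]
    rw [this]
    have h2γ : (0:ℝ) < 2 ^ γ := Real.rpow_pos_of_pos (by norm_num) γ
    field_simp

lemma ml (γ α₁ : ℝ) (hγ : 0 < γ) (hα₁ : 0 < α₁)
    (μ : Measure ℝ) [IsProbabilityMeasure μ]
    (hμsupp : μ (Set.Icc (0:ℝ) 1)ᶜ = 0)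
    (hμreg : Tendsto (fun x : ℝ => (μ (Set.Icc (1 - x) 1)).toReal / (α₁ * x ^ γ))
      (nhdsWithin 0 (Set.Ioi 0)) (nhds 1))
    (k : ℕ → ℝ) (hk : Tendsto k atTop atTop) :
    Tendsto (fun n => (k n) ^ γ * ∫ x, x ^ (k n) ∂μ) atTop
      (𝓝 (α₁ * Real.Gamma (γ + 1))) := by
  obtain ⟨δ, hδ0, hδ1, hδb⟩ : ∃ δ : ℝ, 0 < δ ∧ δ < 1 ∧
      ∀ x : ℝ, 0 < x → x ≤ δ → (μ (Icc (1 - x) 1)).toReal ≤ 2 * (α₁ * x ^ γ) := by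
    have h2 := hμreg.eventually_lt_const (by norm_num : (1:ℝ) < 2)
    rw [eventually_nhdsWithin_iff, Metric.eventually_nhds_iff] at h2
    obtain ⟨ε, hε0, hε⟩ := h2
    refine ⟨min (ε/2) (1/2), by positivity,
      lt_of_le_of_lt (min_le_right _ _) (by norm_num), ?_⟩
    intro x hx0 hxδ
    have hdist : dist x 0 < ε := by
      rw [Real.dist_eq, sub_zero, abs_of_pos hx0]
      calc x ≤ min (ε/2) (1/2) := hxδ
        _ ≤ ε/2 := min_le_left _ _
        _ < ε := by linarith
    have hlt := hε hdist hx0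
    have hpos : 0 < α₁ * x ^ γ := by positivity
    rw [div_lt_iff₀ hpos] at hlt
    linarith
  have hG0 : ∀ u : ℝ, 0 ≤ (μ (Icc u 1)).toReal := fun u => ENNReal.toReal_nonneg
  have hG1 : ∀ u : ℝ, (μ (Icc u 1)).toReal ≤ 1 := by
    intro u
    have h := prob_le_one (μ := μ) (s := Icc u 1)
    simpa using ENNReal.toReal_mono ENNReal.one_ne_top h
  have hGmeas : Measurable fun u : ℝ => (μ (Icc u 1)).toReal := by
    apply Antitone.measurable
    intro u v huv
    exact ENNReal.toReal_mono (measure_ne_top μ _) (measure_mono (Icc_subset_Icc_left huv))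
  have hptG : ∀ w : ℝ, 0 < w →
      Tendsto (fun n => (k n) ^ γ * (μ (Icc (1 - w / k n) 1)).toReal) atTop
        (𝓝 (α₁ * w ^ γ)) := by
    intro w hw
    have hx : Tendsto (fun n => w / k n) atTop (𝓝[>] (0:ℝ)) := by
      rw [tendsto_nhdsWithin_iff]
      constructor
      · exact tendsto_const_nhds.div_atTop hk
      · filter_upwards [hk.eventually_gt_atTop 0] with n hn
        exact div_pos hw hn
    have hr := hμreg.comp hx
    have heq : ∀ᶠ n in atTop,
        (μ (Icc (1 - w / k n) 1)).toReal / (α₁ * (w / k n) ^ γ) * (α₁ * w ^ γ)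
          = (k n) ^ γ * (μ (Icc (1 - w / k n) 1)).toReal := by
      filter_upwards [hk.eventually_gt_atTop 0] with n hn
      have hkγ : (0:ℝ) < (k n) ^ γ := Real.rpow_pos_of_pos hn γ
      have hwγ : (0:ℝ) < w ^ γ := Real.rpow_pos_of_pos hw γ
      rw [Real.div_rpow hw.le hn.le]
      field_simp
    have h := (hr.mul (tendsto_const_nhds (x := α₁ * w ^ γ))).congr' heq
    simpa using h
  set C : ℝ := 2 * α₁ + (δ ^ γ)⁻¹ with hC
  have hCpos : 0 < C := by
    have : (0:ℝ) < δ ^ γ := Real.rpow_pos_of_pos hδ0 γ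
    positivity
  set F : ℕ → ℝ → ℝ := fun n w => (Ioc (0:ℝ) (k n)).indicator
      (fun w => (k n) ^ γ * ((1 - w / k n) ^ (k n - 1)
        * (μ (Icc (1 - w / k n) 1)).toReal)) w with hFdef
  have hid : ∀ᶠ n in atTop, (k n) ^ γ * ∫ x, x ^ (k n) ∂μ
      = ∫ w in Ioi (0:ℝ), F n w := by
    filter_upwards [hk.eventually_ge_atTop 1] with n hn
    exact key_eq μ hμsupp γ hn
  have hDCT : Tendsto (fun n => ∫ w in Ioi (0:ℝ), F n w) atTop
      (𝓝 (∫ w in Ioi (0:ℝ), α₁ * (w ^ γ * Real.exp (-w)))) := by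
    refine tendsto_integral_filter_of_dominated_convergence
      (fun w => C * (w ^ γ * Real.exp (-(w/2)))) ?_ ?_ (bound_integrable γ hγ C) ?_
    · -- measurability
      filter_upwards [hk.eventually_ge_atTop 1] with n hn
      have hk0 : (0:ℝ) < k n := lt_of_lt_of_le one_pos hn
      have hm : Measurable fun w : ℝ => (k n) ^ γ * ((1 - w / k n) ^ (k n - 1)
          * (μ (Icc (1 - w / k n) 1)).toReal) := by
        have hlin : Measurable fun w : ℝ => 1 - w / k n :=
          (measurable_id.div_const _).const_sub 1
        exact (measurable_const.mul
          ((((Real.continuous_rpow_const (by linarith)).measurable).comp hlin).mul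
            (hGmeas.comp hlin)))
      exact ((hm.indicator measurableSet_Ioc).aestronglyMeasurable)
    · -- bound
      filter_upwards [hk.eventually_ge_atTop 2] with n hn
      refine (ae_restrict_iff' measurableSet_Ioi).mpr (Eventually.of_forall fun w hw => ?_)
      have hw0 : (0:ℝ) < w := hw
      by_cases hmem : w ∈ Ioc (0:ℝ) (k n)
      · have hk0 : (0:ℝ) < k n := by linarith
        have hwk : w / k n ≤ 1 := (div_le_one hk0).mpr hmem.2
        have hbase0 : (0:ℝ) ≤ 1 - w / k n := by linarith
        have hwkpos : 0 < w / k n := div_pos hw0 hk0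
        rw [hFdef]
        simp only [indicator_of_mem hmem]
        have h1 : (k n) ^ γ * (μ (Icc (1 - w / k n) 1)).toReal ≤ C * w ^ γ := by
          have hwγ : (0:ℝ) ≤ w ^ γ := Real.rpow_nonneg hw0.le γ
          have hkγ : (0:ℝ) < (k n) ^ γ := Real.rpow_pos_of_pos hk0 γ
          rcases le_or_gt (w / k n) δ with hcase | hcase
          · have hb := hδb (w / k n) hwkpos hcase
            have : (k n) ^ γ * (μ (Icc (1 - w / k n) 1)).toReal
                ≤ (k n) ^ γ * (2 * (α₁ * (w / k n) ^ γ)) :=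
              mul_le_mul_of_nonneg_left hb hkγ.le
            refine this.trans ?_
            rw [Real.div_rpow hw0.le hk0.le, hC]
            have hδγinv : (0:ℝ) ≤ (δ ^ γ)⁻¹ := by positivity
            have : (k n) ^ γ * (2 * (α₁ * (w ^ γ / (k n) ^ γ))) = 2 * α₁ * w ^ γ := by
              field_simp
            rw [this]
            nlinarith
          · have hkw : k n ≤ w / δ := by
              rw [le_div_iff₀ hδ0]
              rw [lt_div_iff₀ hk0] at hcase
              linarith
            have hG := hG1 (1 - w / k n)
            have h2 : (k n) ^ γ ≤ (w / δ) ^ γ := Real.rpow_le_rpow hk0.le hkw hγ.le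
            have h3 : (k n) ^ γ * (μ (Icc (1 - w / k n) 1)).toReal ≤ (w / δ) ^ γ := by
              calc (k n) ^ γ * (μ (Icc (1 - w / k n) 1)).toReal
                  ≤ (k n) ^ γ * 1 := mul_le_mul_of_nonneg_left hG hkγ.le
                _ = (k n) ^ γ := mul_one _
                _ ≤ (w / δ) ^ γ := h2
            refine h3.trans ?_
            rw [Real.div_rpow hw0.le hδ0.le, hC]
            have hδγ : (0:ℝ) < δ ^ γ := Real.rpow_pos_of_pos hδ0 γ
            have hwγ2 : (0:ℝ) ≤ w ^ γ := Real.rpow_nonneg hw0.le γ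
            rw [div_eq_mul_inv]
            nlinarith [mul_nonneg hwγ2 (le_of_lt (inv_pos.mpr hδγ)), mul_nonneg (mul_nonneg (by linarith : (0:ℝ) ≤ 2) hα₁.le) hwγ2]
        have h2 : (1 - w / k n) ^ (k n - 1) ≤ Real.exp (-(w/2)) := by
          have hexp : 1 - w / k n ≤ Real.exp (-(w / k n)) := by
            have := Real.add_one_le_exp (-(w / k n))
            linarith
          have h4 : (1 - w / k n) ^ (k n - 1) ≤ (Real.exp (-(w / k n))) ^ (k n - 1) :=
            Real.rpow_le_rpow hbase0 hexp (by linarith)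
          refine h4.trans ?_
          rw [Real.rpow_def_of_pos (Real.exp_pos _), Real.log_exp]
          rw [Real.exp_le_exp]
          have haux : w / 2 ≤ w / k n * (k n - 1) := by
            rw [div_mul_eq_mul_div, div_le_div_iff₀ (by norm_num : (0:ℝ) < 2) hk0]
            nlinarith
          nlinarith [haux]
        calc ‖(k n) ^ γ * ((1 - w / k n) ^ (k n - 1) * (μ (Icc (1 - w / k n) 1)).toReal)‖
            = ((k n) ^ γ * (μ (Icc (1 - w / k n) 1)).toReal) * (1 - w / k n) ^ (k n - 1) := by
              rw [Real.norm_eq_abs, abs_of_nonneg (by positivity)]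
              ring
          _ ≤ (C * w ^ γ) * Real.exp (-(w/2)) := by
              refine mul_le_mul h1 h2 (Real.rpow_nonneg hbase0 _) ?_
              positivity
          _ = C * (w ^ γ * Real.exp (-(w/2))) := by ring
      · rw [hFdef]
        simp only [indicator_of_notMem hmem]
        simp only [norm_zero]
        positivity
    · -- pointwise limit
      refine (ae_restrict_iff' measurableSet_Ioi).mpr (Eventually.of_forall fun w hw => ?_)
      have hw0 : (0:ℝ) < w := hw
      have hbase : Tendsto (fun n => (1 - w / k n) ^ (k n - 1)) atTop
          (𝓝 (Real.exp (-w))) := by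
        have h1 := (Real.tendsto_one_add_div_rpow_exp (-w)).comp hk
        have hb : Tendsto (fun n => 1 + -w / k n) atTop (𝓝 1) := by
          have h0 : Tendsto (fun n => -w / k n) atTop (𝓝 0) :=
            tendsto_const_nhds.div_atTop hk
          simpa using h0.const_add 1
        have h2 := h1.div hb one_ne_zero
        refine Tendsto.congr' ?_ (by simpa using h2)
        filter_upwards [hk.eventually_gt_atTop (max w 1)] with n hn
        have hkw : w < k n := lt_of_le_of_lt (le_max_left _ _) hn
        have hk1 : (1:ℝ) < k n := lt_of_le_of_lt (le_max_right _ _) hn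
        have hk0 : (0:ℝ) < k n := by linarith
        have hb0 : (0:ℝ) < 1 + -w / k n := by
          have : w / k n < 1 := (div_lt_one hk0).mpr hkw
          rw [neg_div]
          linarith
        show ((1 + -w / k n) ^ (k n)) / (1 + -w / k n) = (1 - w / k n) ^ (k n - 1)
        rw [show (1:ℝ) - w / k n = 1 + -w / k n from by ring, Real.rpow_sub hb0, Real.rpow_one]
      have h3 := (hptG w hw0).mul hbase
      rw [← mul_assoc]
      have hFw : ∀ᶠ n in atTop, k n ^ γ * (μ (Icc (1 - w / k n) 1)).toReal
          * (1 - w / k n) ^ (k n - 1) = F n w := by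
        filter_upwards [hk.eventually_ge_atTop w] with n hn
        have hmem : w ∈ Ioc (0:ℝ) (k n) := ⟨hw0, hn⟩
        simp only [hFdef, indicator_of_mem hmem]
        ring
      exact Tendsto.congr' hFw h3
  have hval : (∫ w in Ioi (0:ℝ), α₁ * (w ^ γ * Real.exp (-w))) = α₁ * Real.Gamma (γ + 1) := by
    rw [Real.Gamma_eq_integral (by linarith : (0:ℝ) < γ + 1), ← integral_const_mul]
    refine setIntegral_congr_fun measurableSet_Ioi fun w hw => ?_
    rw [add_sub_cancel_right]
    ring
  rw [← hval]
  exact Tendsto.congr' (hid.mono fun n h => h.symm) hDCT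

lemma mlf (γ α₁ : ℝ) (hγ : 0 < γ) (hα₁ : 0 < α₁)
    (μ : Measure ℝ) [IsProbabilityMeasure μ]
    (hμsupp : μ (Set.Icc (0:ℝ) 1)ᶜ = 0)
    (hμreg : Tendsto (fun x : ℝ => (μ (Set.Icc (1 - x) 1)).toReal / (α₁ * x ^ γ))
      (nhdsWithin 0 (Set.Ioi 0)) (nhds 1))
    (f : ℝ → ℝ) (hfc : Continuous f) (hf1 : f 1 = 1)
    (k : ℕ → ℝ) (hk : Tendsto k atTop atTop) :
    Tendsto (fun n => (k n) ^ γ * ∫ x, x ^ (k n) * f x ∂μ) atTop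
      (𝓝 (α₁ * Real.Gamma (γ + 1))) := by
  have hae := ae_mem_Icc μ hμsupp
  obtain ⟨M, hM⟩ := (isCompact_Icc : IsCompact (Icc (0:ℝ) 1)).exists_bound_of_continuousOn hfc.continuousOn
  have hM1 : (1:ℝ) ≤ M := by
    have := hM 1 (by norm_num)
    rwa [hf1, norm_one] at this
  have hint : ∀ c : ℝ, 0 < c → Integrable (fun x : ℝ => x ^ c * f x) μ := by
    intro c hc
    refine (integrable_const M).mono'
      (((Real.continuous_rpow_const hc.le).mul hfc).aestronglyMeasurable) ?_
    filter_upwards [hae] with x hx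
    rw [Real.norm_eq_abs, abs_mul, abs_of_nonneg (Real.rpow_nonneg hx.1 c)]
    calc x ^ c * |f x| ≤ 1 * M := by
          refine mul_le_mul (Real.rpow_le_one hx.1 hx.2 hc.le) ?_ (abs_nonneg _) one_pos.le
          simpa [Real.norm_eq_abs] using hM x hx
      _ = M := one_mul M
  set L := α₁ * Real.Gamma (γ + 1) with hL
  have hL0 : 0 < L := mul_pos hα₁ (Real.Gamma_pos_of_pos (by linarith))
  have hB := ml γ α₁ hγ hα₁ μ hμsupp hμreg k hk
  rw [Metric.tendsto_nhds]
  intro ε' hε'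
  set ε : ℝ := ε' / (2 * (L + 2)) with hε
  have hεpos : 0 < ε := by positivity
  -- continuity of f at 1 gives δ
  obtain ⟨δ0, hδ00, hδ0c⟩ := Metric.continuousAt_iff.mp (hfc.continuousAt (x := 1)) ε hεpos
  set δ : ℝ := min (δ0/2) (1/2) with hδ
  have hδpos : 0 < δ := by positivity
  have hδ1 : δ < 1 := lt_of_le_of_lt (min_le_right _ _) (by norm_num)
  have hδf : ∀ x : ℝ, 1 - δ ≤ x → x ≤ 1 → |f x - 1| ≤ ε := by
    intro x h1 h2
    have : dist x 1 < δ0 := by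
      rw [Real.dist_eq, abs_of_nonpos (by linarith)]
      have : δ ≤ δ0/2 := min_le_left _ _
      linarith
    have := hδ0c this
    rw [Real.dist_eq, hf1] at this
    linarith [le_of_lt this]
  -- small term
  have hsmall : Tendsto (fun n => (M+1) * ((k n) ^ γ * (1-δ) ^ (k n))) atTop (𝓝 0) := by
    have hb : (0:ℝ) < -Real.log (1-δ) := by
      have := Real.log_neg (show (0:ℝ) < 1 - δ by linarith) (show (1:ℝ) - δ < 1 by linarith)
      linarith
    have h0 := ((tendsto_rpow_mul_exp_neg_mul_atTop_nhds_zero γ (-Real.log (1-δ)) hb).comp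
      hk).const_mul (M+1)
    simp only [mul_zero] at h0
    refine Tendsto.congr' ?_ h0
    filter_upwards [hk.eventually_gt_atTop 0] with n hn
    have h1δ : (0:ℝ) < 1 - δ := by linarith
    rw [Function.comp_apply, Real.rpow_def_of_pos h1δ]
    ring_nf
  -- key estimate
  have hEst : ∀ᶠ n in atTop,
      |(k n) ^ γ * ∫ x, x ^ (k n) * f x ∂μ - (k n) ^ γ * ∫ x, x ^ (k n) ∂μ|
        ≤ ε * ((k n) ^ γ * ∫ x, x ^ (k n) ∂μ) + (M+1) * ((k n) ^ γ * (1-δ) ^ (k n)) := by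
    filter_upwards [hk.eventually_ge_atTop 1] with n hn
    have hk0 : (0:ℝ) < k n := lt_of_lt_of_le one_pos hn
    have hkγ : (0:ℝ) ≤ (k n) ^ γ := Real.rpow_nonneg hk0.le γ
    have hi1 := hint (k n) hk0
    have hi2 := J_integrable μ hμsupp hk0
    have hJ0 : 0 ≤ ∫ x, x ^ (k n) ∂μ := by
      refine integral_nonneg_of_ae ?_
      filter_upwards [hae] with x hx
      exact Real.rpow_nonneg hx.1 _
    have hcore : |∫ x, x ^ (k n) * f x ∂μ - ∫ x, x ^ (k n) ∂μ|
        ≤ ε * ∫ x, x ^ (k n) ∂μ + (M+1) * (1-δ) ^ (k n) := by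
      rw [← integral_sub hi1 hi2]
      have habs : |∫ x, (x ^ (k n) * f x - x ^ (k n)) ∂μ|
          ≤ ∫ x, |x ^ (k n) * f x - x ^ (k n)| ∂μ := by
        simpa [Real.norm_eq_abs] using
          norm_integral_le_integral_norm (μ := μ) (fun x : ℝ => x ^ (k n) * f x - x ^ (k n))
      refine habs.trans ?_
      have hmono : ∫ x, |x ^ (k n) * f x - x ^ (k n)| ∂μ
          ≤ ∫ x, (ε * x ^ (k n) + (M+1) * (1-δ) ^ (k n)) ∂μ := by
        refine integral_mono_ae (hi1.sub hi2).abs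
          ((hi2.const_mul ε).add (integrable_const _)) ?_
        filter_upwards [hae] with x hx
        have hx0 : 0 ≤ x ^ (k n) := Real.rpow_nonneg hx.1 _
        have hδk : 0 ≤ (1-δ) ^ (k n) := Real.rpow_nonneg (by linarith) _
        have heq : |x ^ (k n) * f x - x ^ (k n)| = x ^ (k n) * |f x - 1| := by
          rw [← mul_one (x ^ (k n)), mul_assoc]
          rw [← mul_sub, abs_mul, abs_of_nonneg hx0]
          simp
        rw [heq]
        rcases le_or_gt x (1-δ) with hcase | hcase
        · have h1 : x ^ (k n) ≤ (1-δ) ^ (k n) := Real.rpow_le_rpow hx.1 hcase hk0.le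
          have h2 : |f x - 1| ≤ M + 1 := by
            have := hM x hx
            rw [Real.norm_eq_abs] at this
            calc |f x - 1| ≤ |f x| + 1 := by
                  have := abs_sub_abs_le_abs_sub (f x) 1
                  have h3 := abs_sub (f x) 1
                  calc |f x - 1| ≤ |f x| + |(1:ℝ)| := abs_sub _ _
                    _ = |f x| + 1 := by norm_num
              _ ≤ M + 1 := by linarith
          have : x ^ (k n) * |f x - 1| ≤ (1-δ) ^ (k n) * (M+1) :=
            mul_le_mul h1 h2 (abs_nonneg _) hδk
          have hεx : 0 ≤ ε * x ^ (k n) := mul_nonneg hεpos.le hx0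
          linarith [this]
        · have h2 : |f x - 1| ≤ ε := hδf x hcase.le hx.2
          have : x ^ (k n) * |f x - 1| ≤ x ^ (k n) * ε :=
            mul_le_mul_of_nonneg_left h2 hx0
          have h3 : 0 ≤ (M+1) * (1-δ) ^ (k n) := mul_nonneg (by linarith) hδk
          linarith [this]
      refine hmono.trans ?_
      rw [integral_add (hi2.const_mul ε) (integrable_const _), integral_const_mul,
        integral_const]
      simp
    calc |(k n) ^ γ * ∫ x, x ^ (k n) * f x ∂μ - (k n) ^ γ * ∫ x, x ^ (k n) ∂μ|
        = (k n) ^ γ * |∫ x, x ^ (k n) * f x ∂μ - ∫ x, x ^ (k n) ∂μ| := by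
          rw [← mul_sub, abs_mul, abs_of_nonneg hkγ]
      _ ≤ (k n) ^ γ * (ε * ∫ x, x ^ (k n) ∂μ + (M+1) * (1-δ) ^ (k n)) :=
          mul_le_mul_of_nonneg_left hcore hkγ
      _ = ε * ((k n) ^ γ * ∫ x, x ^ (k n) ∂μ) + (M+1) * ((k n) ^ γ * (1-δ) ^ (k n)) := by
          ring
  -- put together
  have hBev := Metric.tendsto_nhds.mp hB (min (ε'/4) 1) (by positivity)
  have hsev := Metric.tendsto_nhds.mp hsmall (ε'/4) (by positivity)
  filter_upwards [hEst, hBev, hsev, hk.eventually_ge_atTop 1] with n h1 h2 h3 h4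
  rw [Real.dist_eq] at *
  set A := (k n) ^ γ * ∫ x, x ^ (k n) * f x ∂μ
  set B := (k n) ^ γ * ∫ x, x ^ (k n) ∂μ
  set S := (M+1) * ((k n) ^ γ * (1-δ) ^ (k n))
  have hBL : |B - L| < min (ε'/4) 1 := h2
  have hBle : B ≤ L + 1 := by
    have := abs_lt.mp (lt_of_lt_of_le hBL (min_le_right _ _))
    linarith [this.2]
  have hSle : |S - 0| < ε'/4 := h3
  have hS : S < ε'/4 := by
    rw [sub_zero] at hSle
    exact lt_of_le_of_lt (le_abs_self _) hSle
  have hεB : ε * B ≤ ε * (L + 1) := by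
    refine mul_le_mul_of_nonneg_left hBle hεpos.le
  have hεL : ε * (L + 1) < ε'/2 := by
    rw [hε]
    rw [div_mul_eq_mul_div, div_lt_div_iff₀ (by positivity) (by norm_num : (0:ℝ) < 2)]
    nlinarith
  have htri : |A - L| ≤ |A - B| + |B - L| := by
    calc |A - L| = |(A - B) + (B - L)| := by ring_nf
      _ ≤ |A - B| + |B - L| := abs_add_le _ _
  have hABq : |A - B| ≤ ε * B + S := h1
  have : |A - L| < ε'/2 + ε'/4 + ε'/4 := by
    have hBL4 : |B - L| < ε'/4 := lt_of_lt_of_le hBL (min_le_left _ _)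
    calc |A - L| ≤ |A - B| + |B - L| := htri
      _ ≤ (ε * B + S) + |B - L| := by linarith
      _ < ε'/2 + ε'/4 + ε'/4 := by linarith [hεB, hεL, hS, hBL4]
  linarith [this]


/-- **Lemma A.3(ii).**  Let `(X_i)` be i.i.d. with law `μ` on `[0,1]`, regularly varying
at `1` with index `γ`, let `Ψ : [0,1] → (0,∞)` be continuous with `Ψ(1) = 1`, and set
`U_k^{(n)} = (k^γ/n) ∑_{i<n} X_i^k/Ψ(X_i)`.  If `s_n → ∞` and `s_n ≪ n^{1/γ}`, then
`U_{s_n}^{(n)} → α₁ Γ(γ+1)` in `𝙿`-probability. -/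
theorem U_converges
    (γ α₁ : ℝ) (hγ : 0 < γ) (hα₁ : 0 < α₁)
    (μ : Measure ℝ) [IsProbabilityMeasure μ]
    (hμsupp : μ (Set.Icc (0:ℝ) 1)ᶜ = 0)
    (hμreg : Tendsto (fun x : ℝ => (μ (Set.Icc (1 - x) 1)).toReal / (α₁ * x ^ γ))
      (nhdsWithin 0 (Set.Ioi 0)) (nhds 1))
    (Ψ : ℝ → ℝ) (hΨcont : ContinuousOn Ψ (Set.Icc 0 1))
    (hΨpos : ∀ x ∈ Set.Icc (0:ℝ) 1, 0 < Ψ x) (hΨ1 : Ψ 1 = 1)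
    (Ω : Type*) [MeasurableSpace Ω] (Pr : Measure Ω) [IsProbabilityMeasure Pr]
    (X : ℕ → Ω → ℝ) (hXmeas : ∀ i, Measurable (X i))
    (hXlaw : ∀ i, Measure.map (X i) Pr = μ)
    (hXindep : iIndepFun X Pr)
    (U : ℕ → ℝ → Ω → ℝ)
    (hU : ∀ n s ω, U n s ω =
      s ^ γ / n * ∑ i ∈ Finset.range n, X i ω ^ s / Ψ (X i ω)) :
    ∀ s : ℕ → ℝ, (∀ n, 0 < s n) →
      Tendsto s atTop atTop →
      Tendsto (fun n : ℕ => s n / (n : ℝ) ^ (1/γ)) atTop (nhds 0) →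
      ∀ ε > (0:ℝ),
        Tendsto (fun n : ℕ => Pr {ω | ε < |U n (s n) ω - α₁ * Real.Gamma (γ + 1)|})
          atTop (nhds 0) := by
  intro s hs0 hs1 hs2 ε hε
  -- clipped Ψ and weights
  set clip : ℝ → ℝ := fun x => max 0 (min x 1) with hclip
  have hclipmem : ∀ x : ℝ, clip x ∈ Icc (0:ℝ) 1 :=
    fun x => ⟨le_max_left _ _, max_le (by norm_num) (min_le_right _ _)⟩
  have hclipcont : Continuous clip := continuous_const.max (continuous_id.min continuous_const)
  have hclipeq : ∀ x ∈ Icc (0:ℝ) 1, clip x = x := by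
    intro x hx
    rw [hclip]
    simp only
    rw [min_eq_left hx.2, max_eq_right hx.1]
  set Ψ' : ℝ → ℝ := fun x => Ψ (clip x) with hΨ'def
  have hΨ'cont : Continuous Ψ' := hΨcont.comp_continuous hclipcont hclipmem
  have hΨ'pos : ∀ x, 0 < Ψ' x := fun x => hΨpos _ (hclipmem x)
  have hΨ'eq : ∀ x ∈ Icc (0:ℝ) 1, Ψ' x = Ψ x := by
    intro x hx
    rw [hΨ'def]
    simp only
    rw [hclipeq x hx]
  have hΨ'1 : Ψ' 1 = 1 := by rw [hΨ'eq 1 (by norm_num), hΨ1]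
  set f : ℝ → ℝ := fun x => (Ψ' x)⁻¹ with hfdef
  have hfc : Continuous f := hΨ'cont.inv₀ (fun x => (hΨ'pos x).ne')
  have hf1 : f 1 = 1 := by rw [hfdef]; simp [hΨ'1]
  set f2 : ℝ → ℝ := fun x => ((Ψ' x) ^ 2)⁻¹ with hf2def
  have hf2c : Continuous f2 := (hΨ'cont.pow 2).inv₀ (fun x => (pow_pos (hΨ'pos x) 2).ne')
  have hf21 : f2 1 = 1 := by rw [hf2def]; simp [hΨ'1]
  set L := α₁ * Real.Gamma (γ + 1) with hLdef
  have hs2' : Tendsto (fun n => 2 * s n) atTop atTop := hs1.const_mul_atTop two_pos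
  have he1 : Tendsto (fun n => (s n) ^ γ * ∫ x, x ^ (s n) * f x ∂μ) atTop (𝓝 L) :=
    mlf γ α₁ hγ hα₁ μ hμsupp hμreg f hfc hf1 s hs1
  have he2 : Tendsto (fun n => (2 * s n) ^ γ * ∫ x, x ^ (2 * s n) * f2 x ∂μ) atTop (𝓝 L) :=
    mlf γ α₁ hγ hα₁ μ hμsupp hμreg f2 hf2c hf21 (fun n => 2 * s n) hs2'
  -- random variables
  set g : ℕ → ℝ → ℝ := fun n x => x ^ (s n) * f x with hgdef
  have hgmeas : ∀ n, Measurable (g n) :=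
    fun n => ((Real.continuous_rpow_const (hs0 n).le).mul hfc).measurable
  set Y : ℕ → ℕ → Ω → ℝ := fun n i ω => g n (X i ω) with hYdef
  set V : ℕ → Ω → ℝ := fun n ω => (s n) ^ γ / n * ∑ i ∈ Finset.range n, Y n i ω with hVdef
  obtain ⟨Mf, hMf⟩ := (isCompact_Icc : IsCompact (Icc (0:ℝ) 1)).exists_bound_of_continuousOn
    hfc.continuousOn
  have hMf0 : 0 ≤ Mf := le_trans (norm_nonneg _) (hMf 0 (by norm_num))
  have hgbdd : ∀ n, ∀ x ∈ Icc (0:ℝ) 1, ‖g n x‖ ≤ Mf := by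
    intro n x hx
    rw [hgdef]
    simp only
    rw [Real.norm_eq_abs, abs_mul, abs_of_nonneg (Real.rpow_nonneg hx.1 _)]
    calc x ^ (s n) * |f x| ≤ 1 * Mf := by
          refine mul_le_mul (Real.rpow_le_one hx.1 hx.2 (hs0 n).le) ?_ (abs_nonneg _) one_pos.le
          simpa [Real.norm_eq_abs] using hMf x hx
      _ = Mf := one_mul Mf
  have hall : ∀ᵐ ω ∂Pr, ∀ i, X i ω ∈ Icc (0:ℝ) 1 := by
    rw [ae_all_iff]
    intro i
    rw [ae_iff]
    have : Pr (X i ⁻¹' (Icc (0:ℝ) 1)ᶜ) = 0 := by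
      rw [← Measure.map_apply (hXmeas i) measurableSet_Icc.compl, hXlaw i]
      exact hμsupp
    convert this using 2
    rfl
  have hYmem : ∀ n i, MemLp (Y n i) 2 Pr := by
    intro n i
    refine MemLp.of_bound ((hgmeas n).comp (hXmeas i)).aestronglyMeasurable Mf ?_
    filter_upwards [hall] with ω hω
    exact hgbdd n (X i ω) (hω i)
  have hYint : ∀ n i, Integrable (Y n i) Pr := fun n i => (hYmem n i).integrable one_le_two
  have hYindep : ∀ n, iIndepFun (fun i => Y n i) Pr :=
    fun n => hXindep.comp (fun _ => g n) (fun _ => hgmeas n)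
  have hEY : ∀ n i, ∫ ω, Y n i ω ∂Pr = ∫ x, g n x ∂μ := by
    intro n i
    rw [← hXlaw i, integral_map (hXmeas i).aemeasurable (hgmeas n).aestronglyMeasurable]
  have hEY2 : ∀ n i, ∫ ω, (Y n i ω) ^ 2 ∂Pr = ∫ x, (g n x) ^ 2 ∂μ := by
    intro n i
    rw [← hXlaw i, integral_map (hXmeas i).aemeasurable
      ((hgmeas n).pow_const 2).aestronglyMeasurable]
  have hI2 : ∀ n, ∫ x, (g n x) ^ 2 ∂μ = ∫ x, x ^ (2 * s n) * f2 x ∂μ := by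
    intro n
    refine integral_congr_ae ?_
    filter_upwards [ae_mem_Icc μ hμsupp] with x hx
    rw [hgdef]
    simp only
    rw [mul_pow]
    congr 1
    · rw [sq, ← Real.rpow_add' hx.1 (ne_of_gt (by have := hs0 n; linarith)), two_mul]
    · rw [hfdef, hf2def]
      simp [inv_pow]
  -- expectation of V
  have hEV : ∀ n : ℕ, 1 ≤ n → Pr[V n] = (s n) ^ γ * ∫ x, g n x ∂μ := by
    intro n hn
    have hn0 : ((n:ℝ)) ≠ 0 := Nat.cast_ne_zero.mpr (by omega)
    calc Pr[V n] = ∫ ω, (s n) ^ γ / n * ∑ i ∈ Finset.range n, Y n i ω ∂Pr := rfl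
      _ = (s n) ^ γ / n * ∫ ω, ∑ i ∈ Finset.range n, Y n i ω ∂Pr := integral_const_mul _ _
      _ = (s n) ^ γ / n * ∑ i ∈ Finset.range n, ∫ ω, Y n i ω ∂Pr := by
          rw [integral_finset_sum _ (fun i _ => hYint n i)]
      _ = (s n) ^ γ / n * (n * ∫ x, g n x ∂μ) := by
          rw [Finset.sum_congr rfl (fun i _ => hEY n i), Finset.sum_const, Finset.card_range,
            nsmul_eq_mul]
      _ = (s n) ^ γ * ∫ x, g n x ∂μ := by
          field_simp
  -- MemLp of V
  have hVmem : ∀ n, MemLp (V n) 2 Pr := by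
    intro n
    refine MemLp.of_bound ?_ (|(s n) ^ γ / n| * (n * Mf)) ?_
    · exact (measurable_const.mul (Finset.measurable_sum _
        (fun i _ => (hgmeas n).comp (hXmeas i)))).aestronglyMeasurable
    · filter_upwards [hall] with ω hω
      rw [hVdef]
      simp only
      rw [Real.norm_eq_abs, abs_mul]
      refine mul_le_mul_of_nonneg_left ?_ (abs_nonneg _)
      calc |∑ i ∈ Finset.range n, Y n i ω| ≤ ∑ i ∈ Finset.range n, |Y n i ω| :=
            Finset.abs_sum_le_sum_abs _ _
        _ ≤ ∑ _i ∈ Finset.range n, Mf := by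
            refine Finset.sum_le_sum fun i _ => ?_
            have := hgbdd n (X i ω) (hω i)
            rwa [Real.norm_eq_abs] at this
        _ = n * Mf := by rw [Finset.sum_const, Finset.card_range, nsmul_eq_mul]
  -- variance bound
  have hVarV : ∀ n : ℕ, variance (V n) Pr
      ≤ ((s n) ^ γ / n) ^ 2 * (n * ∫ x, (g n x) ^ 2 ∂μ) := by
    intro n
    have hsum : variance (∑ i ∈ Finset.range n, Y n i) Pr
        = ∑ i ∈ Finset.range n, variance (Y n i) Pr := by
      refine IndepFun.variance_sum (fun i _ => hYmem n i) ?_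
      intro i _ j _ hij
      exact (hYindep n).indepFun hij
    have hVsmul : variance (V n) Pr
        = ((s n) ^ γ / n) ^ 2 * variance (∑ i ∈ Finset.range n, Y n i) Pr := by
      rw [← variance_smul]
      congr 1
      funext ω
      simp [hVdef, Finset.sum_apply, smul_eq_mul]
    rw [hVsmul, hsum]
    refine mul_le_mul_of_nonneg_left ?_ (sq_nonneg _)
    calc (∑ i ∈ Finset.range n, variance (Y n i) Pr)
        ≤ ∑ _i ∈ Finset.range n, ∫ x, (g n x) ^ 2 ∂μ := by
          refine Finset.sum_le_sum fun i _ => ?_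
          have h := variance_le_expectation_sq (μ := Pr) (X := Y n i)
            ((hgmeas n).comp (hXmeas i)).aestronglyMeasurable
          have : Pr[(Y n i) ^ 2] = ∫ x, (g n x) ^ 2 ∂μ := by
            rw [← hEY2 n i]
            rfl
          rwa [this] at h
      _ = n * ∫ x, (g n x) ^ 2 ∂μ := by
          rw [Finset.sum_const, Finset.card_range, nsmul_eq_mul]
  -- the quantitative variance bound
  have hVarV2 : ∀ n : ℕ, 1 ≤ n → variance (V n) Pr
      ≤ (2:ℝ) ^ (-γ) * ((s n) ^ γ / n) * ((2 * s n) ^ γ * ∫ x, x ^ (2 * s n) * f2 x ∂μ) := by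
    intro n hn
    have hn0 : ((n:ℝ)) ≠ 0 := Nat.cast_ne_zero.mpr (by omega)
    refine (hVarV n).trans ?_
    rw [hI2 n]
    set I := ∫ x, x ^ (2 * s n) * f2 x ∂μ with hIdef
    have h2s : ((2:ℝ) * s n) ^ γ = (2:ℝ) ^ γ * (s n) ^ γ :=
      Real.mul_rpow (by norm_num) (hs0 n).le
    rw [h2s, Real.rpow_neg (by norm_num : (0:ℝ) ≤ 2)]
    have h2γ0 : ((2:ℝ)) ^ γ ≠ 0 := (Real.rpow_pos_of_pos two_pos γ).ne'
    refine le_of_eq ?_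
    field_simp
  -- t n → 0
  have ht : Tendsto (fun n : ℕ => (s n) ^ γ / (n:ℝ)) atTop (𝓝 0) := by
    have hcont : ContinuousAt (fun x : ℝ => x ^ γ) 0 :=
      Real.continuousAt_rpow_const 0 γ (Or.inr hγ.le)
    have h0 := hcont.tendsto.comp hs2
    rw [Real.zero_rpow hγ.ne'] at h0
    refine Tendsto.congr' ?_ h0
    filter_upwards [eventually_ge_atTop 1] with n hn
    have hn0 : (0:ℝ) < (n:ℝ) := by
      have : (1:ℝ) ≤ (n:ℝ) := by exact_mod_cast hn
      linarith
    rw [Function.comp_apply, Real.div_rpow (hs0 n).le (Real.rpow_nonneg hn0.le _),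
      ← Real.rpow_mul (Nat.cast_nonneg n), one_div_mul_cancel hγ.ne', Real.rpow_one]
  -- bound sequence tends to zero
  have hW : Tendsto (fun n => (2:ℝ) ^ (-γ) * ((s n) ^ γ / (n:ℝ))
      * ((2 * s n) ^ γ * ∫ x, x ^ (2 * s n) * f2 x ∂μ)) atTop (𝓝 0) := by
    have h := (ht.const_mul ((2:ℝ) ^ (-γ))).mul he2
    simp only [mul_zero, zero_mul] at h
    exact h
  have hofReal : Tendsto (fun n => ENNReal.ofReal (((2:ℝ) ^ (-γ) * ((s n) ^ γ / (n:ℝ))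
      * ((2 * s n) ^ γ * ∫ x, x ^ (2 * s n) * f2 x ∂μ)) / (ε/2) ^ 2)) atTop (𝓝 0) := by
    have h0 := hW.div_const ((ε/2) ^ 2)
    rw [zero_div] at h0
    have h1 := ENNReal.tendsto_ofReal h0
    rw [ENNReal.ofReal_zero] at h1
    exact h1
  have hkey : ∀ᶠ n in atTop,
      Pr {ω | ε < |U n (s n) ω - L|} ≤ ENNReal.ofReal (((2:ℝ) ^ (-γ) * ((s n) ^ γ / (n:ℝ))
        * ((2 * s n) ^ γ * ∫ x, x ^ (2 * s n) * f2 x ∂μ)) / (ε/2) ^ 2) := by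
    have hdist := Metric.tendsto_nhds.mp he1 (ε/2) (by positivity)
    filter_upwards [hdist, eventually_ge_atTop 1] with n hd hn
    have hPrV : Pr[V n] = (s n) ^ γ * ∫ x, g n x ∂μ := hEV n hn
    have hclose : |(s n) ^ γ * (∫ x, x ^ (s n) * f x ∂μ) - L| < ε/2 := by
      rw [← Real.dist_eq]
      exact hd
    have hsub : {ω | ε < |U n (s n) ω - L|}
        ⊆ {ω | ε/2 ≤ |V n ω - Pr[V n]|} ∪ {ω | ¬ ∀ i, X i ω ∈ Icc (0:ℝ) 1} := by
      intro ω hω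
      by_cases hgood : ∀ i, X i ω ∈ Icc (0:ℝ) 1
      · left
        have hUV : U n (s n) ω = V n ω := by
          rw [hU]
          simp only [hVdef]
          congr 1
          refine Finset.sum_congr rfl fun i _ => ?_
          simp only [hYdef, hgdef, hfdef, hΨ'def]
          rw [hclipeq _ (hgood i), div_eq_mul_inv]
        simp only [mem_setOf_eq] at hω ⊢
        rw [hUV] at hω
        have htri : |V n ω - L| ≤ |V n ω - Pr[V n]| + |Pr[V n] - L| := abs_sub_le _ _ _
        have hPL : |Pr[V n] - L| < ε/2 := by
          rw [hPrV]
          exact hclose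
        linarith
      · right
        exact hgood
    have hnull : Pr {ω | ¬ ∀ i, X i ω ∈ Icc (0:ℝ) 1} = 0 := ae_iff.mp hall
    have hcheb := meas_ge_le_variance_div_sq (hVmem n) (show (0:ℝ) < ε/2 by positivity)
    calc Pr {ω | ε < |U n (s n) ω - L|}
        ≤ Pr ({ω | ε/2 ≤ |V n ω - Pr[V n]|} ∪ {ω | ¬ ∀ i, X i ω ∈ Icc (0:ℝ) 1}) :=
          measure_mono hsub
      _ ≤ Pr {ω | ε/2 ≤ |V n ω - Pr[V n]|} + Pr {ω | ¬ ∀ i, X i ω ∈ Icc (0:ℝ) 1} :=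
          measure_union_le _ _
      _ = Pr {ω | ε/2 ≤ |V n ω - Pr[V n]|} := by rw [hnull, add_zero]
      _ ≤ ENNReal.ofReal (variance (V n) Pr / (ε/2) ^ 2) := hcheb
      _ ≤ ENNReal.ofReal (((2:ℝ) ^ (-γ) * ((s n) ^ γ / (n:ℝ))
          * ((2 * s n) ^ γ * ∫ x, x ^ (2 * s n) * f2 x ∂μ)) / (ε/2) ^ 2) := by
          refine ENNReal.ofReal_le_ofReal ?_
          have hε2 : (0:ℝ) < (ε/2) ^ 2 := by positivity
          exact (div_le_div_iff_of_pos_right hε2).mpr (hVarV2 n hn)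
  exact tendsto_of_tendsto_of_tendsto_of_le_of_le' tendsto_const_nhds hofReal
    (Eventually.of_forall fun n => zero_le) hkey
end
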